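/- arXiv:math/0610368 — 6 statements merged into one kernel-verified Lean document; each statement's English description precedes it below -/
import Mathlib

section
/- Let K = ℂ(x) be the field of rational functions in one variable over ℂ. (a) If A, B ∈ GL(2,K) are matrices whose classes [A], [B] in PGL(2,K) both have order exactly 2, then [A] and [B] are conjugate in PGL(2,K) if and only if det(A)·det(B)⁻¹ is a square in Kˣ. (b) For every g ∈ Kˣ there exists A ∈ GL(2,K) with [A] of order exactly 2 and det(A) = g. Hence the determinant induces a bijection between the set of conjugacy classes of involutions of PGL(2,ℂ(x)) and the group Kˣ/(Kˣ)². -/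
set_option maxHeartbeats 1000000
set_option synthInstance.maxHeartbeats 400000

noncomputable section

/-- The field `ℂ(x)` of rational functions in one variable. -/
abbrev Kx := RatFunc ℂ

abbrev GL2K := GL (Fin 2) Kx

/-- The projective general linear group `PGL(2,ℂ(x))`: the quotient of `GL(2,ℂ(x))` by
its center (the subgroup of invertible scalar matrices). -/
abbrev PGL2K := GL2K ⧸ Subgroup.center GL2K

open Matrix

instance : CharZero Kx :=
  charZero_of_injective_algebraMap (algebraMap ℂ Kx).injective

namespace Inv2Aux

lemma coe_mk (A : Matrix (Fin 2) (Fin 2) Kx) (h : A.det ≠ 0) :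
    ((Matrix.GeneralLinearGroup.mkOfDetNeZero A h : GL2K) : Matrix (Fin 2) (Fin 2) Kx) = A := rfl

lemma det_coe_ne_zero (A : GL2K) : (A : Matrix (Fin 2) (Fin 2) Kx).det ≠ 0 := by
  intro h
  have h1 : ((A : Matrix (Fin 2) (Fin 2) Kx) * ((A⁻¹ : GL2K) : Matrix (Fin 2) (Fin 2) Kx)).det
      = 1 := by
    rw [← Matrix.GeneralLinearGroup.coe_mul, mul_inv_cancel]
    simp
  rw [Matrix.det_mul, h, zero_mul] at h1
  exact zero_ne_one h1

lemma cayley (A : Matrix (Fin 2) (Fin 2) Kx) : A * A = A.trace • A - A.det • 1 := by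
  rw [Matrix.eta_fin_two A]
  ext i j
  fin_cases i <;> fin_cases j <;>
    simp [Matrix.mul_apply, Fin.sum_univ_two, Matrix.trace_fin_two, Matrix.det_fin_two] <;> ring

lemma mem_center_iff (A : GL2K) :
    A ∈ Subgroup.center GL2K ↔ ∃ c : Kx, (A : Matrix (Fin 2) (Fin 2) Kx) = c • 1 := by
  constructor
  · intro hA
    have h : Pairwise fun i j : Fin 2 =>
        Commute (single i j (1:Kx)) (A : Matrix (Fin 2) (Fin 2) Kx) := by
      intro i j hij
      have hdet : (Matrix.transvection i j (1:Kx)).det ≠ 0 := by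
        rw [Matrix.det_transvection_of_ne i j hij]; exact one_ne_zero
      have hc := Subgroup.mem_center_iff.mp hA
        (Matrix.GeneralLinearGroup.mkOfDetNeZero _ hdet)
      have h2 : Matrix.transvection i j (1:Kx) * (A : Matrix (Fin 2) (Fin 2) Kx)
          = (A : Matrix (Fin 2) (Fin 2) Kx) * Matrix.transvection i j (1:Kx) := by
        have := congrArg (Units.val) hc
        simpa [Matrix.GeneralLinearGroup.coe_mul, coe_mk] using this
      rw [Matrix.transvection, add_mul, one_mul, mul_add, mul_one] at h2
      exact add_left_cancel h2
    obtain ⟨c, hc⟩ := mem_range_scalar_of_commute_single h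
    exact ⟨c, by rw [← hc, Matrix.scalar_apply, Matrix.smul_one_eq_diagonal]⟩
  · rintro ⟨c, hc⟩
    refine Subgroup.mem_center_iff.mpr fun B => ?_
    apply Units.ext
    show (B : Matrix (Fin 2) (Fin 2) Kx) * A = (A : Matrix (Fin 2) (Fin 2) Kx) * B
    rw [hc, smul_mul_assoc, one_mul, mul_smul_comm, mul_one]

lemma center_scalar_ne_zero {A : GL2K} {c : Kx}
    (hc : (A : Matrix (Fin 2) (Fin 2) Kx) = c • 1) : c ≠ 0 := by
  intro h0
  apply det_coe_ne_zero A
  rw [hc, h0, zero_smul, Matrix.det_zero]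

lemma mk_eq_one_iff (A : GL2K) :
    (QuotientGroup.mk A : PGL2K) = 1 ↔ ∃ c : Kx, (A : Matrix (Fin 2) (Fin 2) Kx) = c • 1 := by
  rw [← mem_center_iff]
  exact QuotientGroup.eq_one_iff A

/-- An element of `GL₂` maps to an involution in `PGL₂` iff its trace is zero. -/
lemma orderOf_mk_eq_two_iff (A : GL2K) :
    orderOf (QuotientGroup.mk A : PGL2K) = 2 ↔ (A : Matrix (Fin 2) (Fin 2) Kx).trace = 0 := by
  constructor
  · intro h
    have hsq : (QuotientGroup.mk A : PGL2K) ^ 2 = 1 := by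
      have := pow_orderOf_eq_one (QuotientGroup.mk A : PGL2K)
      rwa [h] at this
    have hA2 : A ^ 2 ∈ Subgroup.center GL2K := by
      rw [← QuotientGroup.eq_one_iff, QuotientGroup.mk_pow]
      exact hsq
    obtain ⟨c, hc⟩ := (mem_center_iff _).mp hA2
    have hc' : (A : Matrix (Fin 2) (Fin 2) Kx) * A = c • 1 := by
      have h2 : ((A ^ 2 : GL2K) : Matrix (Fin 2) (Fin 2) Kx)
          = (A : Matrix (Fin 2) (Fin 2) Kx) * A := by
        rw [pow_two]; rfl
      rw [← h2, hc]
    by_contra htr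
    have hcay := cayley (A : Matrix (Fin 2) (Fin 2) Kx)
    rw [hc'] at hcay
    have hsc : (A : Matrix (Fin 2) (Fin 2) Kx).trace • (A : Matrix (Fin 2) (Fin 2) Kx)
        = (c + (A : Matrix (Fin 2) (Fin 2) Kx).det) • 1 := by
      rw [add_smul]
      rw [eq_sub_iff_add_eq] at hcay
      exact hcay.symm
    have h2 := congrArg (fun M => ((A : Matrix (Fin 2) (Fin 2) Kx).trace)⁻¹ • M) hsc
    simp only [smul_smul, inv_mul_cancel₀ htr, one_smul] at h2
    have hone : (QuotientGroup.mk A : PGL2K) = 1 := (mk_eq_one_iff A).mpr ⟨_, h2⟩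
    rw [hone, orderOf_one] at h
    norm_num at h
  · intro htr
    have hc' : (A : Matrix (Fin 2) (Fin 2) Kx) * A
        = (-(A : Matrix (Fin 2) (Fin 2) Kx).det) • 1 := by
      rw [cayley, htr, zero_smul, zero_sub, neg_smul]
    have hsq : (QuotientGroup.mk A : PGL2K) ^ 2 = 1 := by
      rw [← QuotientGroup.mk_pow, QuotientGroup.eq_one_iff, mem_center_iff]
      refine ⟨-(A : Matrix (Fin 2) (Fin 2) Kx).det, ?_⟩
      show ((A ^ 2 : GL2K) : Matrix (Fin 2) (Fin 2) Kx) = _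
      rw [pow_two, Matrix.GeneralLinearGroup.coe_mul]
      exact hc'
    have hne : (QuotientGroup.mk A : PGL2K) ≠ 1 := by
      intro h1
      obtain ⟨c, hc⟩ := (mk_eq_one_iff A).mp h1
      have hc0 : c ≠ 0 := center_scalar_ne_zero hc
      apply hc0
      have h2 : (0 : Kx) = c * 2 := by
        rw [← htr, hc, Matrix.trace_smul, Matrix.trace_one]
        norm_num
      rcases mul_eq_zero.mp h2.symm with h | h
      · exact h
      · exact absurd h two_ne_zero
    haveI : Fact (Nat.Prime 2) := ⟨Nat.prime_two⟩
    exact orderOf_eq_prime hsq hne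

/-- The canonical trace-zero matrix with determinant `d`. -/
def canonM (d : Kx) : Matrix (Fin 2) (Fin 2) Kx := !![0, 1; -d, 0]

lemma canonM_det (d : Kx) : (canonM d).det = d := by
  simp [canonM, Matrix.det_fin_two_of]

lemma canonM_trace (d : Kx) : (canonM d).trace = 0 := by
  simp [canonM, Matrix.trace_fin_two]

def canon (d : Kx) (hd : d ≠ 0) : GL2K :=
  Matrix.GeneralLinearGroup.mkOfDetNeZero (canonM d) (by rw [canonM_det]; exact hd)

/-- Every trace-zero element of `GL₂` is conjugate to the canonical one with the
same determinant. -/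
lemma isConj_canon (A : GL2K) (htr : (A : Matrix (Fin 2) (Fin 2) Kx).trace = 0) :
    IsConj A (canon ((A : Matrix (Fin 2) (Fin 2) Kx).det) (det_coe_ne_zero A)) := by
  have h11 : (A : Matrix (Fin 2) (Fin 2) Kx) 1 1 = -((A : Matrix (Fin 2) (Fin 2) Kx) 0 0) := by
    rw [Matrix.trace_fin_two] at htr
    linear_combination htr
  set a := (A : Matrix (Fin 2) (Fin 2) Kx) 0 0 with ha
  set b := (A : Matrix (Fin 2) (Fin 2) Kx) 0 1 with hb
  set c := (A : Matrix (Fin 2) (Fin 2) Kx) 1 0 with hc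
  have hA : (A : Matrix (Fin 2) (Fin 2) Kx) = !![a, b; c, -a] := by
    ext i j
    fin_cases i <;> fin_cases j <;> simp [h11, ha, hb, hc]
  have hdet : (A : Matrix (Fin 2) (Fin 2) Kx).det = -(a * a) - b * c := by
    rw [hA, Matrix.det_fin_two_of]; ring
  -- find P with P * A = canonM d * P and det P ≠ 0
  have key : ∃ P : Matrix (Fin 2) (Fin 2) Kx, P.det ≠ 0 ∧
      P * (A : Matrix (Fin 2) (Fin 2) Kx)
        = canonM ((A : Matrix (Fin 2) (Fin 2) Kx).det) * P := by
    by_cases hb0 : b ≠ 0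
    · refine ⟨!![1, 0; a, b], ?_, ?_⟩
      · rw [Matrix.det_fin_two_of]; simpa using hb0
      · rw [hdet, hA, canonM]
        ext i j
        fin_cases i <;> fin_cases j <;>
          simp [Matrix.mul_apply, Fin.sum_univ_two] <;> ring
    · by_cases hc0 : c ≠ 0
      · refine ⟨!![0, 1; c, -a], ?_, ?_⟩
        · rw [Matrix.det_fin_two_of]; simpa using hc0
        · rw [hdet, hA, canonM]
          ext i j
          fin_cases i <;> fin_cases j <;>
            simp [Matrix.mul_apply, Fin.sum_univ_two] <;> ring
      · push_neg at hb0 hc0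
        have ha0 : a ≠ 0 := by
          intro h0
          apply det_coe_ne_zero A
          rw [hdet, h0, hb0]; ring
        refine ⟨!![1, 1; a, -a], ?_, ?_⟩
        · rw [Matrix.det_fin_two_of]
          intro h0
          have : a * 2 = 0 := by linear_combination -h0
          rcases mul_eq_zero.mp this with h | h
          · exact ha0 h
          · exact two_ne_zero h
        · rw [hdet, hA, canonM, hb0, hc0]
          ext i j
          fin_cases i <;> fin_cases j <;>
            simp [Matrix.mul_apply, Fin.sum_univ_two] <;> ring
  obtain ⟨P, hPdet, hP⟩ := key
  refine isConj_iff.mpr ⟨Matrix.GeneralLinearGroup.mkOfDetNeZero P hPdet, ?_⟩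
  rw [mul_inv_eq_iff_eq_mul]
  apply Units.ext
  show P * (A : Matrix (Fin 2) (Fin 2) Kx)
      = (canon ((A : Matrix (Fin 2) (Fin 2) Kx).det) (det_coe_ne_zero A)
          : Matrix (Fin 2) (Fin 2) Kx) * P
  exact hP

/-- Two trace-zero elements of `GL₂` with equal determinants are conjugate. -/
lemma isConj_of_det_eq (A B : GL2K)
    (htrA : (A : Matrix (Fin 2) (Fin 2) Kx).trace = 0)
    (htrB : (B : Matrix (Fin 2) (Fin 2) Kx).trace = 0)
    (hdet : (A : Matrix (Fin 2) (Fin 2) Kx).det = (B : Matrix (Fin 2) (Fin 2) Kx).det) :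
    IsConj A B := by
  have h1 := isConj_canon A htrA
  have h2 := isConj_canon B htrB
  refine h1.trans ?_
  have : canon ((A : Matrix (Fin 2) (Fin 2) Kx).det) (det_coe_ne_zero A)
      = canon ((B : Matrix (Fin 2) (Fin 2) Kx).det) (det_coe_ne_zero B) := by
    apply Units.ext
    show canonM _ = canonM _
    rw [hdet]
  rw [this]
  exact h2.symm

end Inv2Aux

open Inv2Aux

/-- **Classification of involutions in `PGL(2,ℂ(x))`.** (a) Two involutions are conjugate
iff the quotient of their determinants is a square in `ℂ(x)ˣ`; (b) every element of
`ℂ(x)ˣ` is the determinant of an involution. Hence the determinant induces a bijection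
between conjugacy classes of involutions of `PGL(2,ℂ(x))` and `ℂ(x)ˣ/(ℂ(x)ˣ)²`. -/
theorem involutions_PGL2_ratfunc_classified_by_determinant :
    (∀ A B : GL2K,
      orderOf (QuotientGroup.mk A : PGL2K) = 2 →
      orderOf (QuotientGroup.mk B : PGL2K) = 2 →
      (IsConj (QuotientGroup.mk A : PGL2K) (QuotientGroup.mk B : PGL2K) ↔
        ∃ f : Kx, f ≠ 0 ∧
          (↑A : Matrix (Fin 2) (Fin 2) Kx).det *
            ((↑B : Matrix (Fin 2) (Fin 2) Kx).det)⁻¹ = f ^ 2)) ∧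
    (∀ g : Kxˣ, ∃ A : GL2K,
      orderOf (QuotientGroup.mk A : PGL2K) = 2 ∧
      (↑A : Matrix (Fin 2) (Fin 2) Kx).det = (g : Kx)) := by
  constructor
  · intro A B hA hB
    have htrA := (orderOf_mk_eq_two_iff A).mp hA
    have htrB := (orderOf_mk_eq_two_iff B).mp hB
    constructor
    · intro hconj
      obtain ⟨q, hq⟩ := isConj_iff.mp hconj
      obtain ⟨g, rfl⟩ := QuotientGroup.mk_surjective q
      have hmk : (QuotientGroup.mk (g * A * g⁻¹) : PGL2K) = QuotientGroup.mk B := by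
        simpa using hq
      have hmem : (g * A * g⁻¹)⁻¹ * B ∈ Subgroup.center GL2K :=
        QuotientGroup.eq.mp hmk
      obtain ⟨c, hcm⟩ := (mem_center_iff _).mp hmem
      have hc0 : c ≠ 0 := center_scalar_ne_zero hcm
      have hBval : (B : Matrix (Fin 2) (Fin 2) Kx)
          = c • ((g * A * g⁻¹ : GL2K) : Matrix (Fin 2) (Fin 2) Kx) := by
        have : ((g * A * g⁻¹ : GL2K) * ((g * A * g⁻¹)⁻¹ * B) : GL2K) = B := by group
        calc (B : Matrix (Fin 2) (Fin 2) Kx)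
            = (((g * A * g⁻¹ : GL2K) * ((g * A * g⁻¹)⁻¹ * B) : GL2K)
              : Matrix (Fin 2) (Fin 2) Kx) := by rw [this]
          _ = ((g * A * g⁻¹ : GL2K) : Matrix (Fin 2) (Fin 2) Kx)
              * (((g * A * g⁻¹)⁻¹ * B : GL2K) : Matrix (Fin 2) (Fin 2) Kx) := by
              rw [Matrix.GeneralLinearGroup.coe_mul]
          _ = ((g * A * g⁻¹ : GL2K) : Matrix (Fin 2) (Fin 2) Kx) * (c • 1) := by rw [hcm]
          _ = c • ((g * A * g⁻¹ : GL2K) : Matrix (Fin 2) (Fin 2) Kx) := by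
              rw [mul_smul_comm, mul_one]
      have hdconj : ((g * A * g⁻¹ : GL2K) : Matrix (Fin 2) (Fin 2) Kx).det
          = (A : Matrix (Fin 2) (Fin 2) Kx).det := by
        rw [Matrix.GeneralLinearGroup.coe_mul, Matrix.GeneralLinearGroup.coe_mul,
          Matrix.det_mul, Matrix.det_mul]
        have : ((g : Matrix (Fin 2) (Fin 2) Kx) * ((g⁻¹ : GL2K) : Matrix (Fin 2) (Fin 2) Kx)).det
            = 1 := by
          rw [← Matrix.GeneralLinearGroup.coe_mul, mul_inv_cancel]; simp
        rw [Matrix.det_mul] at this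
        linear_combination (A : Matrix (Fin 2) (Fin 2) Kx).det * this
      have hdB : (B : Matrix (Fin 2) (Fin 2) Kx).det
          = c ^ 2 * (A : Matrix (Fin 2) (Fin 2) Kx).det := by
        rw [hBval, Matrix.det_smul, hdconj]
        norm_num
      refine ⟨c⁻¹, inv_ne_zero hc0, ?_⟩
      have hdA := det_coe_ne_zero A
      rw [hdB]
      field_simp
    · rintro ⟨f, hf0, hf⟩
      have hdB := det_coe_ne_zero B
      have hdAB : (A : Matrix (Fin 2) (Fin 2) Kx).det
          = f ^ 2 * (B : Matrix (Fin 2) (Fin 2) Kx).det := by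
        field_simp at hf
        linear_combination hf
      have hsdet : (f • (1 : Matrix (Fin 2) (Fin 2) Kx)).det ≠ 0 := by
        rw [Matrix.det_smul, Matrix.det_one]
        simpa using pow_ne_zero 2 hf0
      set s : GL2K := Matrix.GeneralLinearGroup.mkOfDetNeZero _ hsdet with hs
      have hscoe : (s : Matrix (Fin 2) (Fin 2) Kx) = f • 1 := rfl
      have hsc : s ∈ Subgroup.center GL2K := (mem_center_iff s).mpr ⟨f, hscoe⟩
      have hmkB : (QuotientGroup.mk (s * B) : PGL2K) = QuotientGroup.mk B := by
        rw [QuotientGroup.mk_mul, (QuotientGroup.eq_one_iff s).mpr hsc, one_mul]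
      have htr' : ((s * B : GL2K) : Matrix (Fin 2) (Fin 2) Kx).trace = 0 := by
        rw [Matrix.GeneralLinearGroup.coe_mul, hscoe, smul_mul_assoc, one_mul,
          Matrix.trace_smul, htrB, smul_zero]
      have hdet' : (A : Matrix (Fin 2) (Fin 2) Kx).det
          = ((s * B : GL2K) : Matrix (Fin 2) (Fin 2) Kx).det := by
        rw [Matrix.GeneralLinearGroup.coe_mul, hscoe, Matrix.det_mul, Matrix.det_smul,
          Matrix.det_one, hdAB]
        norm_num
      have hconj : IsConj A (s * B) := isConj_of_det_eq A (s * B) htrA htr' hdet'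
      obtain ⟨u, hu⟩ := isConj_iff.mp hconj
      refine isConj_iff.mpr ⟨QuotientGroup.mk u, ?_⟩
      have h3 : (QuotientGroup.mk (u * A * u⁻¹) : PGL2K) = QuotientGroup.mk (s * B) :=
        congrArg _ hu
      rw [QuotientGroup.mk_mul, QuotientGroup.mk_mul, QuotientGroup.mk_inv, hmkB] at h3
      exact h3
  · intro g
    refine ⟨canon (g : Kx) g.ne_zero, ?_, ?_⟩
    · rw [orderOf_mk_eq_two_iff]
      exact canonM_trace _
    · exact canonM_det _
end
end

section
/- Let K = ℂ(x) and let A ∈ GL(2,K) be a matrix whose class [A] in PGL(2,K) has order exactly 2 and whose determinant det(A) is not a square in K. Then the involution [A] has no non-trivial roots in PGL(2,ℂ(x)): for every g ∈ PGL(2,K) and every integer n ≥ 1, if gⁿ = [A] then g = [A]. -/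
set_option synthInstance.maxHeartbeats 1000000
set_option maxHeartbeats 4000000
set_option maxRecDepth 8000

noncomputable section

open Matrix Polynomial

lemma GL2K.center_spec {M : GL2K} (h : M ∈ Subgroup.center GL2K) :
    ∃ r : Kx, r ≠ 0 ∧ (M : Matrix (Fin 2) (Fin 2) Kx) = r • (1 : Matrix (Fin 2) (Fin 2) Kx) := by
  have hc : ∀ t : TransvectionStruct (Fin 2) Kx,
      Commute t.toMatrix (M : Matrix (Fin 2) (Fin 2) Kx) := by
    intro t
    have h1 := Subgroup.mem_center_iff.mp h ⟨t.toMatrix, t.inv.toMatrix, t.mul_inv, t.inv_mul⟩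
    exact congrArg Units.val h1
  obtain ⟨r, hr⟩ := Matrix.mem_range_scalar_of_commute_transvectionStruct hc
  refine ⟨r, ?_, ?_⟩
  · rintro rfl
    have h0 : (M : Matrix (Fin 2) (Fin 2) Kx) = 0 := by
      rw [← hr]; simp
    exact M.isUnit.ne_zero h0
  · rw [← hr, Matrix.smul_one_eq_diagonal]
    rfl

lemma GL2K.mem_center_of_scalar {M : GL2K} {r : Kx}
    (h : (M : Matrix (Fin 2) (Fin 2) Kx) = r • (1 : Matrix (Fin 2) (Fin 2) Kx)) :
    M ∈ Subgroup.center GL2K := by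
  refine Subgroup.mem_center_iff.mpr fun g => ?_
  refine Units.ext ?_
  rw [Units.val_mul, Units.val_mul, h, Matrix.mul_smul, Matrix.smul_mul, mul_one, one_mul]

lemma roots_of_unity_in_ext {L : Type} [Field L] (f : ℂ →+* L) {t : L} {n : ℕ}
    (hn : n ≠ 0) (ht : t ^ n = 1) : ∃ z : ℂ, z ^ n = 1 ∧ t = f z := by
  have hp : (X ^ n - 1 : ℂ[X]) ≠ 0 := by
    simpa using X_pow_sub_C_ne_zero (Nat.pos_of_ne_zero hn) (1 : ℂ)
  have hsp : (X ^ n - 1 : ℂ[X]).Splits := IsAlgClosed.splits _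
  have hmem : t ∈ ((X ^ n - 1 : ℂ[X]).map f).roots := by
    rw [mem_roots']
    constructor
    · exact (Polynomial.map_ne_zero_iff f.injective).mpr hp
    · simp [IsRoot, Polynomial.map_sub, Polynomial.map_pow, ht]
  rw [hsp.roots_map f, Multiset.mem_map] at hmem
  obtain ⟨z, hz, rfl⟩ := hmem
  have hz2 := (mem_roots'.mp hz).2
  refine ⟨z, ?_, rfl⟩
  simpa [IsRoot, sub_eq_zero] using hz2

lemma key_aux {L : Type} [Field L] (ofK : Kx →+* L) (rt : L)
    (σ : L →+* L) (hσof : ∀ x : Kx, σ (ofK x) = ofK x) (hσrt : σ rt = -rt)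
    (N : Matrix (Fin 2) (Fin 2) Kx) (d u v μ : Kx)
    (hd : ∀ s : Kx, s ^ 2 ≠ d) (hN : N * N = d • 1) (hμ0 : μ ≠ 0)
    {n : ℕ} (hodd : Odd n) (hroot2 : rt * rt = ofK d)
    (hpow : (u • (1 : Matrix (Fin 2) (Fin 2) Kx) + v • N) ^ n = μ • 1) : v = 0 := by
  have hn0 : n ≠ 0 := by rintro rfl; simp [Nat.odd_iff] at hodd
  have hofinj : Function.Injective ofK := ofK.injective
  have expand : ∀ j : ℕ, ∃ P Q : Kx,
      (ofK u + ofK v * rt) ^ j = ofK P + ofK Q * rt ∧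
      (u • (1 : Matrix (Fin 2) (Fin 2) Kx) + v • N) ^ j = P • 1 + Q • N := by
    intro j
    induction j with
    | zero => exact ⟨1, 0, by simp, by simp⟩
    | succ j ih =>
      obtain ⟨P, Q, h1, h2⟩ := ih
      refine ⟨P * u + Q * v * d, P * v + Q * u, ?_, ?_⟩
      · rw [pow_succ, h1]
        simp only [_root_.map_add, _root_.map_mul]
        linear_combination (ofK Q * ofK v) * hroot2
      · rw [pow_succ, h2]
        simp only [Matrix.add_mul, Matrix.mul_add, Matrix.smul_mul, Matrix.mul_smul,
          smul_smul, one_mul, mul_one, hN]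
        ext i j
        fin_cases i <;> fin_cases j <;>
          simp [Matrix.add_apply, Matrix.smul_apply, Matrix.one_apply] <;> ring
  obtain ⟨P, Q, hw, hM⟩ := expand n
  rw [hpow] at hM
  have hQ : Q = 0 := by
    by_contra hQ
    apply hd ((μ - P) / Q)
    have hQN : Q • N = (μ - P) • (1 : Matrix (Fin 2) (Fin 2) Kx) := by
      rw [sub_smul, hM]; abel
    have hNs : N = ((μ - P) / Q) • (1 : Matrix (Fin 2) (Fin 2) Kx) := by
      calc N = Q⁻¹ • (Q • N) := by rw [smul_smul, inv_mul_cancel₀ hQ, one_smul]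
        _ = Q⁻¹ • ((μ - P) • (1 : Matrix (Fin 2) (Fin 2) Kx)) := by rw [hQN]
        _ = ((μ - P) / Q) • (1 : Matrix (Fin 2) (Fin 2) Kx) := by
            rw [smul_smul]; congr 1; field_simp
    have hNN := hN
    rw [hNs, Matrix.smul_mul, Matrix.mul_smul, one_mul, smul_smul] at hNN
    have := Matrix.ext_iff.mpr hNN 0 0
    simpa [pow_two, Matrix.one_apply] using this
  have hP : P = μ := by
    rw [hQ, zero_smul, add_zero] at hM
    have := Matrix.ext_iff.mpr hM 0 0
    simpa [Matrix.one_apply] using this.symm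
  rw [hQ, hP, map_zero, zero_mul, add_zero] at hw
  have hσw : (ofK u - ofK v * rt) ^ n = ofK μ := by
    have h3 := congrArg σ hw
    rw [map_pow, _root_.map_add, _root_.map_mul, hσof, hσof, hσof, hσrt, mul_neg,
      ← sub_eq_add_neg] at h3
    exact h3
  have hμL : ofK μ ≠ 0 := fun h => hμ0 (hofinj (by rw [h, map_zero]))
  have hw2ne : ofK u - ofK v * rt ≠ 0 := by
    intro h0
    rw [h0, zero_pow hn0] at hσw
    exact hμL hσw.symm
  have ht : ((ofK u + ofK v * rt) * (ofK u - ofK v * rt)⁻¹) ^ n = 1 := by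
    rw [mul_pow, hw, inv_pow, hσw, mul_inv_cancel₀ hμL]
  obtain ⟨z, hz, htz⟩ := roots_of_unity_in_ext (ofK.comp RatFunc.C) hn0 ht
  rw [RingHom.comp_apply] at htz
  have hw1w2 : ofK u + ofK v * rt = ofK (RatFunc.C z) * (ofK u - ofK v * rt) := by
    rw [← htz, mul_assoc, inv_mul_cancel₀ hw2ne, mul_one]
  by_contra hv
  have hz1 : (1 : Kx) + RatFunc.C z ≠ 0 := by
    intro h
    have hzm : z = -1 := by
      have hcz : RatFunc.C z = RatFunc.C (-1) := by
        rw [map_neg, _root_.map_one]; linear_combination h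
      exact (RatFunc.C : ℂ →+* Kx).injective hcz
    rw [hzm, Odd.neg_one_pow hodd] at hz
    norm_num at hz
  have hden : v * (1 + RatFunc.C z) ≠ 0 := mul_ne_zero hv hz1
  have hdenL : ofK (v * (1 + RatFunc.C z)) ≠ 0 := fun h => hden (hofinj (by rw [h, map_zero]))
  have lin : ofK (v * (1 + RatFunc.C z)) * rt = ofK (u * (RatFunc.C z - 1)) := by
    simp only [_root_.map_mul, _root_.map_add, _root_.map_sub, _root_.map_one]
    linear_combination hw1w2
  have key2 : rt = ofK (u * (RatFunc.C z - 1) / (v * (1 + RatFunc.C z))) := by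
    rw [map_div₀, eq_div_iff hdenL, mul_comm]
    exact lin
  apply hd (u * (RatFunc.C z - 1) / (v * (1 + RatFunc.C z)))
  apply hofinj
  rw [map_pow, ← key2, pow_two, hroot2]

lemma key_no_scalar_part (N : Matrix (Fin 2) (Fin 2) Kx) (d u v μ : Kx)
    (hd : ∀ s : Kx, s ^ 2 ≠ d) (hN : N * N = d • 1) (hμ0 : μ ≠ 0)
    {n : ℕ} (hodd : Odd n)
    (hpow : (u • (1 : Matrix (Fin 2) (Fin 2) Kx) + v • N) ^ n = μ • 1) : v = 0 := by
  have hirr : Irreducible (X ^ 2 - Polynomial.C d : Polynomial Kx) :=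
    X_pow_sub_C_irreducible_of_prime Nat.prime_two hd
  haveI : Fact (Irreducible (X ^ 2 - Polynomial.C d : Polynomial Kx)) := ⟨hirr⟩
  have hroot2sq : (AdjoinRoot.root (X ^ 2 - Polynomial.C d : Polynomial Kx)) ^ 2
      = AdjoinRoot.of _ d := by
    have h2 := AdjoinRoot.eval₂_root (X ^ 2 - Polynomial.C d : Polynomial Kx)
    simp only [eval₂_sub, eval₂_pow, eval₂_X, eval₂_C, sub_eq_zero] at h2
    exact h2
  have hroot2 : (AdjoinRoot.root (X ^ 2 - Polynomial.C d : Polynomial Kx)) *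
      AdjoinRoot.root (X ^ 2 - Polynomial.C d : Polynomial Kx) = AdjoinRoot.of _ d := by
    rw [← pow_two]; exact hroot2sq
  have hσeval : Polynomial.eval₂ (AdjoinRoot.of (X ^ 2 - Polynomial.C d : Polynomial Kx))
      (-(AdjoinRoot.root (X ^ 2 - Polynomial.C d : Polynomial Kx)))
      (X ^ 2 - Polynomial.C d : Polynomial Kx) = 0 := by
    rw [eval₂_sub, eval₂_pow, eval₂_C, eval₂_X]
    have hneg : (-(AdjoinRoot.root (X ^ 2 - Polynomial.C d : Polynomial Kx))) ^ 2
        = (AdjoinRoot.root (X ^ 2 - Polynomial.C d : Polynomial Kx)) ^ 2 := by ring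
    rw [hneg, hroot2sq, sub_self]
  exact key_aux (AdjoinRoot.of _) (AdjoinRoot.root _)
    (AdjoinRoot.lift (AdjoinRoot.of _) (-(AdjoinRoot.root _)) hσeval)
    (fun x => AdjoinRoot.lift_of hσeval) (AdjoinRoot.lift_root hσeval)
    N d u v μ hd hN hμ0 hodd hroot2 hpow

lemma CIsq : (RatFunc.C Complex.I) ^ 2 = (-1 : Kx) := by
  rw [← map_pow, Complex.I_sq, map_neg, _root_.map_one]

lemma sq_comm {R : Type} [Ring R] {M N : R} (h : M * N = -(N * M)) :
    (M * M) * N = N * (M * M) := by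
  calc (M * M) * N = M * (M * N) := by rw [mul_assoc]
    _ = M * (-(N * M)) := by rw [h]
    _ = -((M * N) * M) := by rw [mul_neg, ← mul_assoc]
    _ = (N * M) * M := by rw [h, neg_mul, neg_neg]
    _ = N * (M * M) := by rw [mul_assoc]

lemma odd_anticomm {R : Type} [Ring R] {M N : R} (h : M * N = -(N * M)) :
    ∀ k : ℕ, M ^ (2 * k + 1) * N = -(N * M ^ (2 * k + 1))
  | 0 => by simpa using h
  | (k + 1) => by
    have ih := odd_anticomm h k
    have h2 := sq_comm h
    have hp : M ^ (2 * (k + 1) + 1) = M ^ (2 * k + 1) * (M * M) := by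
      rw [show 2 * (k + 1) + 1 = (2 * k + 1) + 2 by ring, pow_add, pow_two]
    rw [hp, mul_assoc, h2, ← mul_assoc, ih, neg_mul, mul_assoc]

lemma traceless (Am : Matrix (Fin 2) (Fin 2) Kx) (lam : Kx) (hAm : Am * Am = lam • 1)
    (hdet : ¬ ∃ f : Kx, Am.det = f ^ 2) :
    Am 1 1 = -Am 0 0 ∧ (Am 0 1 ≠ 0 ∨ Am 1 0 ≠ 0) ∧ Am.det = -lam := by
  have h00 := Matrix.ext_iff.mpr hAm 0 0
  have h01 := Matrix.ext_iff.mpr hAm 0 1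
  have h10 := Matrix.ext_iff.mpr hAm 1 0
  have h11 := Matrix.ext_iff.mpr hAm 1 1
  simp [Matrix.mul_apply, Fin.sum_univ_two, Matrix.one_apply] at h00 h01 h10 h11
  have hdf : Am.det = Am 0 0 * Am 1 1 - Am 0 1 * Am 1 0 := Matrix.det_fin_two _
  have hbc : Am 0 1 ≠ 0 ∨ Am 1 0 ≠ 0 := by
    by_contra hcon
    push_neg at hcon
    obtain ⟨hb, hc⟩ := hcon
    have hfac : (Am 0 0 - Am 1 1) * (Am 0 0 + Am 1 1) = 0 := by
      linear_combination h00 - h11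
    rcases mul_eq_zero.mp hfac with h | h
    · exact hdet ⟨Am 0 0, by rw [hdf]; linear_combination (-(Am 0 0)) * h - (Am 1 0) * hb⟩
    · exact hdet ⟨RatFunc.C Complex.I * Am 0 0, by
        rw [hdf, mul_pow, CIsq]
        linear_combination (Am 0 0) * h - (Am 1 0) * hb⟩
  have htr : Am 1 1 = -Am 0 0 := by
    rcases hbc with hb | hc
    · have : Am 0 1 * (Am 0 0 + Am 1 1) = 0 := by linear_combination h01
      rcases mul_eq_zero.mp this with h | h
      · exact absurd h hb
      · exact eq_neg_of_add_eq_zero_right h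
    · have : Am 1 0 * (Am 0 0 + Am 1 1) = 0 := by linear_combination h10
      rcases mul_eq_zero.mp this with h | h
      · exact absurd h hc
      · exact eq_neg_of_add_eq_zero_right h
  refine ⟨htr, hbc, ?_⟩
  rw [hdf, htr]
  linear_combination -h00

lemma exists_uv (Am Cm : Matrix (Fin 2) (Fin 2) Kx)
    (hbc : Am 0 1 ≠ 0 ∨ Am 1 0 ≠ 0) (htr : Am 1 1 = -Am 0 0)
    (hcomm : Cm * Am = Am * Cm) :
    ∃ u v : Kx, Cm = u • (1 : Matrix (Fin 2) (Fin 2) Kx) + v • Am := by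
  have e00 := Matrix.ext_iff.mpr hcomm 0 0
  have e01 := Matrix.ext_iff.mpr hcomm 0 1
  have e10 := Matrix.ext_iff.mpr hcomm 1 0
  simp only [Matrix.mul_apply, Fin.sum_univ_two] at e00 e01 e10
  rcases hbc with hb | hc
  · refine ⟨Cm 0 0 - Am 0 0 * (Cm 0 1 / Am 0 1), Cm 0 1 / Am 0 1, ?_⟩
    rw [← Matrix.ext_iff]
    simp only [Fin.forall_fin_two, Matrix.add_apply, Matrix.smul_apply, Matrix.one_apply,
      smul_eq_mul]
    norm_num
    refine ⟨⟨?_, ?_⟩, ?_, ?_⟩ <;> field_simp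
    · ring
    · linear_combination -e00
    · linear_combination -e01
  · refine ⟨Cm 0 0 - Am 0 0 * (Cm 1 0 / Am 1 0), Cm 1 0 / Am 1 0, ?_⟩
    rw [← Matrix.ext_iff]
    simp only [Fin.forall_fin_two, Matrix.add_apply, Matrix.smul_apply, Matrix.one_apply,
      smul_eq_mul]
    norm_num
    refine ⟨⟨?_, ?_⟩, ?_, ?_⟩ <;> field_simp
    · ring
    · linear_combination e00
    · linear_combination e10

/-- An involution of `PGL(2,ℂ(x))` whose determinant is not a square in `ℂ(x)` has no
non-trivial roots. -/

theorem nonsquare_determinant_involution_has_no_roots (A : GL2K)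
    (hA : orderOf (QuotientGroup.mk A : PGL2K) = 2)
    (hdet : ¬ ∃ f : Kx, (↑A : Matrix (Fin 2) (Fin 2) Kx).det = f ^ 2) :
    ∀ g : PGL2K, ∀ n : ℕ, 1 ≤ n → g ^ n = (QuotientGroup.mk A : PGL2K) →
      g = (QuotientGroup.mk A : PGL2K) := by
  intro g n _hn hgn
  haveI : CharZero Kx := (RingHom.charZero_iff (RatFunc.C : ℂ →+* Kx).injective).mp inferInstance
  have ha2 : (QuotientGroup.mk A : PGL2K) ^ 2 = 1 := by
    have h := pow_orderOf_eq_one (QuotientGroup.mk A : PGL2K)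
    rwa [hA] at h
  obtain ⟨B, hB⟩ := QuotientGroup.mk_surjective g
  have hdetA : (↑A : Matrix (Fin 2) (Fin 2) Kx).det ≠ 0 :=
    ((Matrix.isUnit_iff_isUnit_det _).mp A.isUnit).ne_zero
  have hdetB : (↑B : Matrix (Fin 2) (Fin 2) Kx).det ≠ 0 :=
    ((Matrix.isUnit_iff_isUnit_det _).mp B.isUnit).ne_zero
  -- Step 1 : n is odd
  have hodd : Odd n := by
    by_contra hev
    rw [Nat.not_odd_iff_even] at hev
    obtain ⟨m, hm⟩ := hev
    have h1 : A⁻¹ * B ^ n ∈ Subgroup.center GL2K := by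
      rw [← QuotientGroup.eq, QuotientGroup.mk_pow, hB, hgn]
    obtain ⟨r, hr0, hr⟩ := GL2K.center_spec h1
    have h2 : ((B : Matrix (Fin 2) (Fin 2) Kx)) ^ n
        = r • (↑A : Matrix (Fin 2) (Fin 2) Kx) := by
      have e : (B ^ n : GL2K) = A * (A⁻¹ * B ^ n) := (mul_inv_cancel_left A (B ^ n)).symm
      have e2 := congrArg Units.val e
      rw [Units.val_pow_eq_pow_val, Units.val_mul, hr, mul_smul_comm, mul_one] at e2
      exact e2
    have h3 := congrArg Matrix.det h2
    rw [Matrix.det_pow, Matrix.det_smul, Fintype.card_fin] at h3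
    apply hdet
    refine ⟨(↑B : Matrix (Fin 2) (Fin 2) Kx).det ^ m * r⁻¹, ?_⟩
    rw [hm, show m + m = m * 2 by ring] at h3
    field_simp
    first
      | linear_combination h3
      | linear_combination 2 * h3
      | linear_combination -h3
      | linear_combination (-2 : Kx) * h3
  -- Step 2 : structure of A
  have hA2c : A ^ 2 ∈ Subgroup.center GL2K := (QuotientGroup.eq_one_iff _).mp
    (by rw [QuotientGroup.mk_pow]; exact ha2)
  obtain ⟨lam, hlam0, hlam⟩ := GL2K.center_spec hA2c
  rw [Units.val_pow_eq_pow_val, pow_two] at hlam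
  obtain ⟨htr, hbc, hdetlam⟩ := traceless _ lam hlam hdet
  have hnsq : ∀ s : Kx, s ^ 2 ≠ lam := fun s hs => hdet
    ⟨RatFunc.C Complex.I * s, by
      rw [hdetlam, mul_pow, CIsq]
      first
        | linear_combination hs
        | linear_combination -hs⟩
  -- Step 3 : the square of g
  have hmkBB : (QuotientGroup.mk (B * B) : PGL2K) = g * g := by
    rw [QuotientGroup.mk_mul, hB]
  have hcn : (QuotientGroup.mk (B * B) : PGL2K) ^ n = 1 := by
    rw [hmkBB, ← pow_two, ← pow_mul, mul_comm, pow_mul, hgn]; exact ha2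
  have hCcen : (B * B) ^ n ∈ Subgroup.center GL2K := (QuotientGroup.eq_one_iff _).mp
    (by rw [QuotientGroup.mk_pow]; exact hcn)
  obtain ⟨μ, hμ0, hμ⟩ := GL2K.center_spec hCcen
  rw [Units.val_pow_eq_pow_val] at hμ
  -- Step 4 : commutation up to scalar
  have hcommPGL : (QuotientGroup.mk (A * (B * B)) : PGL2K)
      = QuotientGroup.mk ((B * B) * A) := by
    have hh1 : (QuotientGroup.mk (A * (B * B)) : PGL2K)
        = QuotientGroup.mk A * QuotientGroup.mk (B * B) := rfl
    have hh2 : (QuotientGroup.mk ((B * B) * A) : PGL2K)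
        = QuotientGroup.mk (B * B) * QuotientGroup.mk A := rfl
    rw [hh1, hh2, hmkBB, ← hgn, ← pow_two, ← pow_add, ← pow_add, add_comm]
  have h4 : (A * (B * B))⁻¹ * ((B * B) * A) ∈ Subgroup.center GL2K := by
    rw [← QuotientGroup.eq]; exact hcommPGL
  set Z : GL2K := (A * (B * B))⁻¹ * ((B * B) * A) with hZ
  obtain ⟨ρ, hρ0, hρ⟩ := GL2K.center_spec h4
  have h5 : ((B * B : GL2K) : Matrix (Fin 2) (Fin 2) Kx) * ((A : GL2K) : Matrix (Fin 2) (Fin 2) Kx)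
      = ρ • (((A : GL2K) : Matrix (Fin 2) (Fin 2) Kx) * ((B * B : GL2K) : Matrix (Fin 2) (Fin 2) Kx)) := by
    have e : ((B * B) * A : GL2K) = (A * (B * B)) * Z := (mul_inv_cancel_left _ _).symm
    calc ((B * B : GL2K) : Matrix (Fin 2) (Fin 2) Kx) * ((A : GL2K) : Matrix (Fin 2) (Fin 2) Kx)
        = ((((B * B) * A : GL2K)) : Matrix (Fin 2) (Fin 2) Kx) := (Units.val_mul _ _).symm
      _ = (((A * (B * B)) * Z : GL2K) : Matrix (Fin 2) (Fin 2) Kx) := congrArg Units.val e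
      _ = (((A * (B * B) : GL2K)) : Matrix (Fin 2) (Fin 2) Kx)
            * ((Z : GL2K) : Matrix (Fin 2) (Fin 2) Kx) := Units.val_mul _ _
      _ = (((A : GL2K) : Matrix (Fin 2) (Fin 2) Kx)
            * ((B * B : GL2K) : Matrix (Fin 2) (Fin 2) Kx)) * (ρ • 1) := by
          rw [Units.val_mul, hρ]
      _ = ρ • (((A : GL2K) : Matrix (Fin 2) (Fin 2) Kx)
            * ((B * B : GL2K) : Matrix (Fin 2) (Fin 2) Kx)) := by
          rw [mul_smul_comm, mul_one]
  have hdetC : ((B * B : GL2K) : Matrix (Fin 2) (Fin 2) Kx).det ≠ 0 :=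
    ((Matrix.isUnit_iff_isUnit_det _).mp (B * B).isUnit).ne_zero
  have h6 := congrArg Matrix.det h5
  rw [Matrix.det_mul, Matrix.det_smul, Matrix.det_mul, Fintype.card_fin] at h6
  have hρ2 : (ρ - 1) * (ρ + 1) = 0 := by
    have h7 : (ρ ^ 2 - 1) * ((↑A : Matrix (Fin 2) (Fin 2) Kx).det
        * ((B * B : GL2K) : Matrix (Fin 2) (Fin 2) Kx).det) = 0 := by
      linear_combination -h6
    rcases mul_eq_zero.mp h7 with h8 | h8
    · linear_combination h8
    · exact absurd h8 (mul_ne_zero hdetA hdetC)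
  rcases mul_eq_zero.mp hρ2 with hρ1 | hρm1
  · -- commuting case
    have hρe : ρ = 1 := by linear_combination hρ1
    rw [hρe, one_smul] at h5
    obtain ⟨u, v, huv⟩ := exists_uv (↑A) (↑(B * B)) hbc htr h5
    have hv : v = 0 := key_no_scalar_part (↑A) lam u v μ hnsq hlam hμ0 hodd
      (by rw [← huv]; exact hμ)
    rw [hv, zero_smul, add_zero] at huv
    have hBBc : (B * B) ∈ Subgroup.center GL2K := GL2K.mem_center_of_scalar huv
    have hg2 : g * g = 1 := by rw [← hmkBB]; exact (QuotientGroup.eq_one_iff _).mpr hBBc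
    obtain ⟨m', hm'⟩ := hodd
    calc g = (g * g) ^ m' * g := by rw [hg2, one_pow, one_mul]
      _ = g ^ n := by rw [← pow_two, ← pow_mul, ← pow_succ, hm']
      _ = QuotientGroup.mk A := hgn
  · -- anticommuting case : impossible
    exfalso
    have hρe : ρ = -1 := by linear_combination hρm1
    rw [hρe, neg_smul, one_smul] at h5
    obtain ⟨m', hm'⟩ := hodd
    have h9 := odd_anticomm h5 m'
    rw [← hm', hμ] at h9
    rw [Matrix.smul_mul, one_mul, mul_smul_comm, mul_one] at h9
    have h10 : μ • (↑A : Matrix (Fin 2) (Fin 2) Kx)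
        + μ • (↑A : Matrix (Fin 2) (Fin 2) Kx) = 0 := by
      nth_rewrite 1 [h9]; exact neg_add_cancel _
    have h11 : (μ + μ) • (↑A : Matrix (Fin 2) (Fin 2) Kx) = 0 := by
      rw [add_smul]; exact h10
    have hA0 : (↑A : Matrix (Fin 2) (Fin 2) Kx) = 0 := by
      rcases smul_eq_zero.mp h11 with h12 | h12
      · exact absurd h12 (fun hc => hμ0 (add_self_eq_zero.mp hc))
      · exact h12
    have hone := A.mul_inv
    rw [hA0, zero_mul] at hone
    exact one_ne_zero hone.symm
end
end

section
/- Let m, s₁, s₂, s₃, s₄ be integers with m ≥ 1 and sᵢ ≥ 0 for all i. If s₁² + s₂² + s₃² + s₄² = m² − 1, s₁ + s₂ + s₃ + s₄ = 2(m − 1), and sᵢ + sⱼ ≤ m for all i ≠ j, then m = 1 and s₁ = s₂ = s₃ = s₄ = 0. -/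
/-!
Splitting the four numbers into two pairs in each of the three ways, the constraints
`sᵢ + sⱼ ≤ m` give `(m - sᵢ - sⱼ)(m - sₖ - sₗ) ≥ 0`; the sum of these three products is a
symmetric function of the `sᵢ`, and with the two given power sums it forces `m ≤ 2`.
Since `x² ≡ x (mod 2)`, the two power sums also make `(m - 1)²` even, so `m` is odd, hence `m = 1`,
and then the `sᵢ` are nonnegative with sum `0`.
-/

open Finset

theorem even_sum_sq_sub_sum {ι : Type*} (t : Finset ι) (f : ι → ℤ) :
    Even (∑ i ∈ t, f i ^ 2 - ∑ i ∈ t, f i) := by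
  rw [← sum_sub_distrib]
  refine even_sum _ fun i _ => ?_
  simpa [sq, mul_sub] using Int.even_mul_pred_self (f i)

theorem sum_sq_le_of_forall_add_le {R : Type*} [CommRing R] [LinearOrder R] [IsStrictOrderedRing R]
    (m : R) (s : Fin 4 → R) (hpair : ∀ i j, i ≠ j → s i + s j ≤ m) :
    ∑ i, s i ^ 2 ≤ 3 * m ^ 2 - 3 * m * ∑ i, s i + (∑ i, s i) ^ 2 := by
  have key (i j k l : Fin 4) (hij : i ≠ j) (hkl : k ≠ l) :
      0 ≤ (m - s i - s j) * (m - s k - s l) :=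
    mul_nonneg (by linarith [hpair i j hij]) (by linarith [hpair k l hkl])
  have h₁ := key 0 1 2 3 (by decide) (by decide)
  have h₂ := key 0 2 1 3 (by decide) (by decide)
  have h₃ := key 0 3 1 2 (by decide) (by decide)
  simp only [Fin.sum_univ_four]
  linarith

/-- An arithmetic lemma: if `m ≥ 1`, `sᵢ ≥ 0`, `∑ sᵢ² = m² − 1`, `∑ sᵢ = 2(m − 1)` and
`sᵢ + sⱼ ≤ m` for all `i ≠ j`, then `m = 1` and all `sᵢ = 0`. -/
theorem arithmetic_condition_on_sums (m : ℤ) (s : Fin 4 → ℤ)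
    (hm : 1 ≤ m) (hs : ∀ i, 0 ≤ s i)
    (hsq : ∑ i, (s i) ^ 2 = m ^ 2 - 1)
    (hsum : ∑ i, s i = 2 * (m - 1))
    (hpair : ∀ i j, i ≠ j → s i + s j ≤ m) :
    m = 1 ∧ ∀ i, s i = 0 := by
  have hm2 : m ≤ 2 := by
    have := sum_sq_le_of_forall_add_le m s hpair
    rw [hsq, hsum] at this
    linarith
  have hodd : Even (m - 1) := by
    have := even_sum_sq_sub_sum univ s
    rw [hsq, hsum, show m ^ 2 - 1 - 2 * (m - 1) = (m - 1) ^ 2 by ring] at this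
    exact (Int.even_pow.mp this).1
  have hm1 : m = 1 := by
    obtain ⟨k, hk⟩ := hodd
    omega
  subst hm1
  refine ⟨rfl, fun i => ?_⟩
  rw [sub_self, mul_zero, sum_eq_zero_iff_of_nonneg fun i _ => hs i] at hsum
  exact hsum i (mem_univ i)
end

section
/- There exist ℂ-automorphisms α₁, β₁, α₂, β₂ of ℂ(X,Y) determined by α₁(X) = −X, α₁(Y) = iY; β₁(X) = X⁻¹, β₁(Y) = Y; α₂(X) = −Y, α₂(Y) = X; β₂(X) = X⁻¹, β₂(Y) = Y⁻¹. For any such automorphisms, the subgroups G₁ = ⟨α₁, β₁⟩ and G₂ = ⟨α₂, β₂⟩ of Cr are both isomorphic to ℤ/4 × ℤ/2, but they are not conjugate in the Cremona group: there is no ψ ∈ Cr with ψG₁ψ⁻¹ = G₂. -/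
noncomputable section

/-- The field `ℂ(X,Y)` of rational functions in two variables over `ℂ`. -/
abbrev K2 : Type := FractionRing (MvPolynomial (Fin 2) ℂ)

/-- The plane Cremona group `Cr = Aut_ℂ(ℂ(X,Y))`. -/
abbrev Cr : Type := K2 ≃ₐ[ℂ] K2

/-- The rational function `X`. -/
def XX : K2 := algebraMap (MvPolynomial (Fin 2) ℂ) K2 (MvPolynomial.X 0)

/-- The rational function `Y`. -/
def YY : K2 := algebraMap (MvPolynomial (Fin 2) ℂ) K2 (MvPolynomial.X 1)

/-- The constant rational function associated to a complex number. -/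
def cc (a : ℂ) : K2 := algebraMap ℂ K2 a

set_option synthInstance.maxHeartbeats 1000000
set_option maxHeartbeats 1600000

namespace Z4Z2aux
open MvPolynomial

abbrev R2 : Type := MvPolynomial (Fin 2) ℂ
abbrev am : R2 →+* K2 := algebraMap R2 K2

lemma amap_inj : Function.Injective (algebraMap R2 K2) := IsFractionRing.injective R2 K2

lemma cc_eq (a : ℂ) : cc a = algebraMap R2 K2 (C a) := by
  rw [cc, ← MvPolynomial.algebraMap_eq, ← IsScalarTower.algebraMap_apply]

/-- automorphisms of `K2` are determined by their values on `XX` and `YY`. -/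
lemma Cr_ext {f g : Cr} (hx : f XX = g XX) (hy : f YY = g YY) : f = g := by
  have hAB : (f.toAlgHom.comp (IsScalarTower.toAlgHom ℂ R2 K2)) =
      (g.toAlgHom.comp (IsScalarTower.toAlgHom ℂ R2 K2)) := by
    apply MvPolynomial.algHom_ext
    intro i
    fin_cases i
    · simpa [XX] using hx
    · simpa [YY] using hy
  have h2 : (f.toAlgHom : K2 →+* K2).comp (algebraMap R2 K2) =
      (g.toAlgHom : K2 →+* K2).comp (algebraMap R2 K2) := by
    exact RingHom.ext fun r => by simpa using AlgHom.congr_fun hAB r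
  have h3 := IsLocalization.ringHom_ext (nonZeroDivisors R2) h2
  exact AlgEquiv.ext fun x => by
    have := RingHom.congr_fun h3 x
    simpa using this

lemma contraP {p q : R2} (a b : ℂ) (h : aeval ![a, b] p ≠ aeval ![a,b] q) :
    algebraMap R2 K2 p ≠ algebraMap R2 K2 q := fun he => h (by rw [amap_inj he])

lemma XX_ne_zero : XX ≠ 0 := by
  rw [XX, ← (algebraMap R2 K2).map_zero]
  exact contraP 1 0 (by simp)

lemma YY_ne_zero : YY ≠ 0 := by
  rw [YY, ← (algebraMap R2 K2).map_zero]
  exact contraP 0 1 (by simp)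

lemma XXYY_ne_one : XX * YY ≠ 1 := by
  rw [XX, YY, ← map_mul, ← (algebraMap R2 K2).map_one]
  exact contraP 0 0 (by simp)

lemma XXYY_ne_negone : XX * YY ≠ -1 := by
  rw [XX, YY, ← map_mul, show (-1 : K2) = algebraMap R2 K2 (-1) by simp]
  exact contraP 0 0 (by simp)

lemma XXsq_ne_one : XX * XX ≠ 1 := by
  rw [XX, ← map_mul, ← (algebraMap R2 K2).map_one]
  exact contraP 0 0 (by simp)

lemma XXsq_ne_negone : XX * XX ≠ -1 := by
  rw [XX, ← map_mul, show (-1 : K2) = algebraMap R2 K2 (-1) by simp]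
  exact contraP 0 0 (by simp)

lemma XX_ne_YY : XX ≠ YY := by
  rw [XX, YY]; exact contraP 1 0 (by simp)

lemma XX_ne_negYY : XX ≠ -YY := by
  rw [XX, YY, ← map_neg]; exact contraP 1 0 (by simp)

lemma YY_ne_negYY : YY ≠ -YY := by
  rw [YY, ← map_neg]; exact contraP 0 1 (by norm_num)

lemma XX_ne_negXX : XX ≠ -XX := by
  rw [XX, ← map_neg]; exact contraP 1 0 (by norm_num)

lemma cc_inj : Function.Injective cc := fun a b h => by
  have : (algebraMap ℂ K2) a = algebraMap ℂ K2 b := h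
  exact (algebraMap ℂ K2).injective this

lemma fs2 (d : Fin 2 →₀ ℕ) : Finsupp.single 0 (d 0) + Finsupp.single 1 (d 1) = d := by
  ext i
  fin_cases i <;> simp [Finsupp.single_apply]

lemma mono_eq (e : Fin 2 →₀ ℕ) (c : ℂ) :
    algebraMap R2 K2 (monomial e c) = cc c * (XX ^ (e 0) * YY ^ (e 1)) := by
  rw [MvPolynomial.monomial_eq, map_mul, ← cc_eq]
  congr 1
  rw [Finsupp.prod_fintype _ _ (fun i => pow_zero _), Fin.prod_univ_two, map_mul, map_pow, map_pow]
  rfl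

lemma d0_le_totalDegree (p : R2) (d : Fin 2 →₀ ℕ) (hd : d ∈ p.support) : d 0 ≤ p.totalDegree := by
  refine le_trans ?_ (MvPolynomial.le_totalDegree hd)
  rw [Finsupp.sum_fintype _ _ (fun i => rfl), Fin.sum_univ_two]
  exact Nat.le_add_right _ _

lemma d1_le_totalDegree (p : R2) (d : Fin 2 →₀ ℕ) (hd : d ∈ p.support) : d 1 ≤ p.totalDegree := by
  refine le_trans ?_ (MvPolynomial.le_totalDegree hd)
  rw [Finsupp.sum_fintype _ _ (fun i => rfl), Fin.sum_univ_two]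
  exact Nat.le_add_left _ _

def flip1 (N : ℕ) (d : Fin 2 →₀ ℕ) : Fin 2 →₀ ℕ :=
  Finsupp.single 0 (N - d 0) + Finsupp.single 1 (d 1)

lemma flip1_0 (N : ℕ) (d : Fin 2 →₀ ℕ) : flip1 N d 0 = N - d 0 := by
  simp [flip1, Finsupp.single_apply]

lemma flip1_1 (N : ℕ) (d : Fin 2 →₀ ℕ) : flip1 N d 1 = d 1 := by
  simp [flip1, Finsupp.single_apply]

def rev1 (N : ℕ) : R2 →ₗ[ℂ] R2 :=
  (Finsupp.lsum ℂ fun d => (monomial (flip1 N d) : ℂ →ₗ[ℂ] R2)) ∘ₗ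
    (AddMonoidAlgebra.coeffLinearEquiv ℂ).toLinearMap

lemma rev1_monomial (N : ℕ) (d : Fin 2 →₀ ℕ) (c : ℂ) :
    rev1 N (monomial d c) = monomial (flip1 N d) c := by
  rw [← MvPolynomial.single_eq_monomial, rev1]
  exact Finsupp.sum_single_index (by simp)

lemma aeval_mono2 (u v : K2) (d : Fin 2 →₀ ℕ) (c : ℂ) :
    aeval ![u, v] (monomial d c) = cc c * (u ^ (d 0) * v ^ (d 1)) := by
  rw [aeval_monomial, Finsupp.prod_fintype _ _ (fun i => pow_zero _), Fin.prod_univ_two]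
  rfl

lemma rev1_eq (N : ℕ) (p : R2) (hN : ∀ d ∈ p.support, d 0 ≤ N) :
    (aeval ![XX⁻¹, YY] p) * XX ^ N = algebraMap R2 K2 (rev1 N p) := by
  conv_lhs => rw [← MvPolynomial.support_sum_monomial_coeff p]
  conv_rhs => rw [← MvPolynomial.support_sum_monomial_coeff p]
  rw [map_sum, map_sum, map_sum, Finset.sum_mul]
  refine Finset.sum_congr rfl fun d hd => ?_
  rw [rev1_monomial, mono_eq, aeval_mono2, flip1_0, flip1_1]
  have hpow : XX ^ N = XX ^ (N - d 0) * XX ^ (d 0) := by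
    rw [← pow_add, Nat.sub_add_cancel (hN d hd)]
  rw [hpow, inv_pow]
  have hne : XX ^ (d 0) ≠ 0 := pow_ne_zero _ XX_ne_zero
  field_simp

lemma rev1_rev1 (N : ℕ) (p : R2) (hN : ∀ d ∈ p.support, d 0 ≤ N) :
    rev1 N (rev1 N p) = p := by
  conv_rhs => rw [← MvPolynomial.support_sum_monomial_coeff p]
  conv_lhs => rw [← MvPolynomial.support_sum_monomial_coeff p, map_sum, map_sum]
  refine Finset.sum_congr rfl fun d hd => ?_
  rw [rev1_monomial, rev1_monomial]
  congr 1
  rw [flip1, flip1_0, flip1_1, Nat.sub_sub_self (hN d hd), fs2]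

lemma inj1 : Function.Injective (aeval ![XX⁻¹, YY] : R2 →ₐ[ℂ] K2) := by
  refine (injective_iff_map_eq_zero _).mpr fun p hp => ?_
  have h1 := rev1_eq p.totalDegree p (fun d hd => d0_le_totalDegree p d hd)
  rw [hp, zero_mul] at h1
  have h2 : rev1 p.totalDegree p = 0 := amap_inj (by rw [← h1, map_zero])
  have h3 := rev1_rev1 p.totalDegree p (fun d hd => d0_le_totalDegree p d hd)
  rw [h2, map_zero] at h3
  exact h3.symm

def flip2 (N : ℕ) (d : Fin 2 →₀ ℕ) : Fin 2 →₀ ℕ :=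
  Finsupp.single 0 (N - d 0) + Finsupp.single 1 (N - d 1)

lemma flip2_0 (N : ℕ) (d : Fin 2 →₀ ℕ) : flip2 N d 0 = N - d 0 := by
  simp [flip2, Finsupp.single_apply]

lemma flip2_1 (N : ℕ) (d : Fin 2 →₀ ℕ) : flip2 N d 1 = N - d 1 := by
  simp [flip2, Finsupp.single_apply]

def rev2 (N : ℕ) : R2 →ₗ[ℂ] R2 :=
  (Finsupp.lsum ℂ fun d => (monomial (flip2 N d) : ℂ →ₗ[ℂ] R2)) ∘ₗ
    (AddMonoidAlgebra.coeffLinearEquiv ℂ).toLinearMap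

lemma rev2_monomial (N : ℕ) (d : Fin 2 →₀ ℕ) (c : ℂ) :
    rev2 N (monomial d c) = monomial (flip2 N d) c := by
  rw [← MvPolynomial.single_eq_monomial, rev2]
  exact Finsupp.sum_single_index (by simp)

lemma rev2_eq (N : ℕ) (p : R2) (hN : ∀ d ∈ p.support, d 0 ≤ N ∧ d 1 ≤ N) :
    (aeval ![XX⁻¹, YY⁻¹] p) * (XX ^ N * YY ^ N) = algebraMap R2 K2 (rev2 N p) := by
  conv_lhs => rw [← MvPolynomial.support_sum_monomial_coeff p]
  conv_rhs => rw [← MvPolynomial.support_sum_monomial_coeff p]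
  rw [map_sum, map_sum, map_sum, Finset.sum_mul]
  refine Finset.sum_congr rfl fun d hd => ?_
  rw [rev2_monomial, mono_eq, aeval_mono2, flip2_0, flip2_1]
  have hpow : XX ^ N = XX ^ (N - d 0) * XX ^ (d 0) := by
    rw [← pow_add, Nat.sub_add_cancel (hN d hd).1]
  have hpow' : YY ^ N = YY ^ (N - d 1) * YY ^ (d 1) := by
    rw [← pow_add, Nat.sub_add_cancel (hN d hd).2]
  rw [hpow, hpow', inv_pow, inv_pow]
  have hne : XX ^ (d 0) ≠ 0 := pow_ne_zero _ XX_ne_zero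
  have hne' : YY ^ (d 1) ≠ 0 := pow_ne_zero _ YY_ne_zero
  field_simp

lemma rev2_rev2 (N : ℕ) (p : R2) (hN : ∀ d ∈ p.support, d 0 ≤ N ∧ d 1 ≤ N) :
    rev2 N (rev2 N p) = p := by
  conv_rhs => rw [← MvPolynomial.support_sum_monomial_coeff p]
  conv_lhs => rw [← MvPolynomial.support_sum_monomial_coeff p, map_sum, map_sum]
  refine Finset.sum_congr rfl fun d hd => ?_
  rw [rev2_monomial, rev2_monomial]
  congr 1
  rw [flip2, flip2_0, flip2_1, Nat.sub_sub_self (hN d hd).1, Nat.sub_sub_self (hN d hd).2, fs2]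

lemma inj2 : Function.Injective (aeval ![XX⁻¹, YY⁻¹] : R2 →ₐ[ℂ] K2) := by
  refine (injective_iff_map_eq_zero _).mpr fun p hp => ?_
  have hb : ∀ d ∈ p.support, d 0 ≤ p.totalDegree ∧ d 1 ≤ p.totalDegree :=
    fun d hd => ⟨d0_le_totalDegree p d hd, d1_le_totalDegree p d hd⟩
  have h1 := rev2_eq p.totalDegree p hb
  rw [hp, zero_mul] at h1
  have h2 : rev2 p.totalDegree p = 0 := amap_inj (by rw [← h1, map_zero])
  have h3 := rev2_rev2 p.totalDegree p hb
  rw [h2, map_zero] at h3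
  exact h3.symm

-- chunk 3 (to be appended inside namespace)
/-- lift an injective algebra hom `R2 → K2` to `K2 → K2`. -/
def liftHom (G : R2 →ₐ[ℂ] K2) (hG : Function.Injective ⇑G) : K2 →ₐ[ℂ] K2 where
  toRingHom := IsFractionRing.lift (g := (G : R2 →+* K2)) hG
  commutes' := fun c => by
    have h1 : (algebraMap ℂ K2) c = algebraMap R2 K2 (C c) := by
      rw [← MvPolynomial.algebraMap_eq, ← IsScalarTower.algebraMap_apply]
    show IsFractionRing.lift (g := (G : R2 →+* K2)) hG ((algebraMap ℂ K2) c) = (algebraMap ℂ K2) c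
    rw [h1]
    refine (IsFractionRing.lift_algebraMap (g := (G : R2 →+* K2)) hG (C c)).trans ?_
    show G (C c) = _
    rw [← MvPolynomial.algebraMap_eq]
    exact G.commutes c

lemma liftHom_am (G : R2 →ₐ[ℂ] K2) (hG : Function.Injective ⇑G) (p : R2) :
    liftHom G hG (algebraMap R2 K2 p) = G p :=
  IsFractionRing.lift_algebraMap hG p

lemma liftHom_XX (G : R2 →ₐ[ℂ] K2) (hG : Function.Injective ⇑G) :
    liftHom G hG XX = G (X 0) := liftHom_am G hG _

lemma liftHom_YY (G : R2 →ₐ[ℂ] K2) (hG : Function.Injective ⇑G) :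
    liftHom G hG YY = G (X 1) := liftHom_am G hG _

lemma algHomK2_ext {f g : K2 →ₐ[ℂ] K2} (hx : f XX = g XX) (hy : f YY = g YY) : f = g := by
  have hAB : (f.comp (IsScalarTower.toAlgHom ℂ R2 K2)) =
      (g.comp (IsScalarTower.toAlgHom ℂ R2 K2)) := by
    apply MvPolynomial.algHom_ext
    intro i
    fin_cases i
    · simpa [XX] using hx
    · simpa [YY] using hy
  have h2 : (f : K2 →+* K2).comp (algebraMap R2 K2) =
      (g : K2 →+* K2).comp (algebraMap R2 K2) := by
    exact RingHom.ext fun r => by simpa using AlgHom.congr_fun hAB r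
  have h3 := IsLocalization.ringHom_ext (nonZeroDivisors R2) h2
  exact AlgHom.ext fun x => by
    have := RingHom.congr_fun h3 x
    simpa using this

section Constructions
open Complex

-- polynomial-level automorphisms used as injectivity certificates
private lemma polyInj (P P' : R2 →ₐ[ℂ] R2) (h : P'.comp P = AlgHom.id ℂ R2) :
    Function.Injective ⇑P :=
  Function.LeftInverse.injective (g := ⇑P') fun p => AlgHom.congr_fun h p

private lemma factorInj (G : R2 →ₐ[ℂ] K2) (P : R2 →ₐ[ℂ] R2)
    (h : G = (IsScalarTower.toAlgHom ℂ R2 K2).comp P) (hP : Function.Injective ⇑P) :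
    Function.Injective ⇑G := by
  rw [h]
  intro a b hab
  simp only [AlgHom.coe_comp, Function.comp_apply, IsScalarTower.coe_toAlgHom'] at hab
  exact hP (amap_inj hab)

lemma cc_mul (a b : ℂ) : cc a * cc b = cc (a*b) := (map_mul _ _ _).symm
lemma cc_one : cc 1 = 1 := map_one _
lemma cc_neg (a : ℂ) : cc (-a) = -cc a := map_neg _ _
lemma cc_negone : cc (-1) = -1 := by rw [cc_neg, cc_one]

lemma liftHom_cc (G : R2 →ₐ[ℂ] K2) (hG : Function.Injective ⇑G) (c : ℂ) :
    liftHom G hG (cc c) = cc c := (liftHom G hG).commutes c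

def A1f : R2 →ₐ[ℂ] K2 := aeval ![-XX, cc Complex.I * YY]
def A1b : R2 →ₐ[ℂ] K2 := aeval ![-XX, cc (-Complex.I) * YY]
lemma A1f_X0 : A1f (X 0) = -XX := by simp [A1f]
lemma A1f_X1 : A1f (X 1) = cc Complex.I * YY := by simp [A1f]
lemma A1b_X0 : A1b (X 0) = -XX := by simp [A1b]
lemma A1b_X1 : A1b (X 1) = cc (-Complex.I) * YY := by simp [A1b]

lemma injA1f : Function.Injective ⇑A1f := by
  refine factorInj _ (aeval ![-(X 0), C Complex.I * X 1]) ?_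
    (polyInj _ (aeval ![-(X 0), C (-Complex.I) * X 1]) ?_)
  · apply MvPolynomial.algHom_ext
    intro i
    fin_cases i <;>
      simp [A1f, XX, YY, cc_eq, MvPolynomial.algebraMap_eq] <;> ring
  · apply MvPolynomial.algHom_ext
    intro i
    fin_cases i
    · simp
    · simp [← mul_assoc, ← C_mul, Complex.I_mul_I]

lemma injA1b : Function.Injective ⇑A1b := by
  refine factorInj _ (aeval ![-(X 0), C (-Complex.I) * X 1]) ?_
    (polyInj _ (aeval ![-(X 0), C Complex.I * X 1]) ?_)
  · apply MvPolynomial.algHom_ext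
    intro i
    fin_cases i <;>
      simp [A1b, XX, YY, cc_eq, MvPolynomial.algebraMap_eq] <;> ring
  · apply MvPolynomial.algHom_ext
    intro i
    fin_cases i
    · simp
    · simp [← mul_assoc, ← C_mul, Complex.I_mul_I]

lemma ccIneg : cc (-Complex.I) * (cc Complex.I * YY) = YY := by
  rw [← mul_assoc, cc_mul]
  norm_num [cc_one]

lemma ccInegI : cc Complex.I * (cc (-Complex.I) * YY) = YY := by
  rw [← mul_assoc, cc_mul]
  norm_num [cc_one]

def crα₁ : Cr := AlgEquiv.ofAlgHom (liftHom A1f injA1f) (liftHom A1b injA1b)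
  (by
    apply algHomK2_ext
    · rw [AlgHom.comp_apply, liftHom_XX, A1b_X0, map_neg, liftHom_XX, A1f_X0, neg_neg,
        AlgHom.id_apply]
    · rw [AlgHom.comp_apply, liftHom_YY, A1b_X1, map_mul, liftHom_cc, liftHom_YY, A1f_X1,
        AlgHom.id_apply, ccIneg])
  (by
    apply algHomK2_ext
    · rw [AlgHom.comp_apply, liftHom_XX, A1f_X0, map_neg, liftHom_XX, A1b_X0, neg_neg,
        AlgHom.id_apply]
    · rw [AlgHom.comp_apply, liftHom_YY, A1f_X1, map_mul, liftHom_cc, liftHom_YY, A1b_X1,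
        AlgHom.id_apply, ccInegI])

lemma crα₁_XX : crα₁ XX = -XX := by
  show liftHom A1f injA1f XX = -XX
  rw [liftHom_XX, A1f_X0]

lemma crα₁_YY : crα₁ YY = cc Complex.I * YY := by
  show liftHom A1f injA1f YY = _
  rw [liftHom_YY, A1f_X1]

def A2f : R2 →ₐ[ℂ] K2 := aeval ![-YY, XX]
def A2b : R2 →ₐ[ℂ] K2 := aeval ![YY, -XX]
lemma A2f_X0 : A2f (X 0) = -YY := by simp [A2f]
lemma A2f_X1 : A2f (X 1) = XX := by simp [A2f]
lemma A2b_X0 : A2b (X 0) = YY := by simp [A2b]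
lemma A2b_X1 : A2b (X 1) = -XX := by simp [A2b]

lemma injA2f : Function.Injective ⇑A2f := by
  refine factorInj _ (aeval ![-(X 1), X 0]) ?_
    (polyInj _ (aeval ![X 1, -(X 0)]) ?_)
  · apply MvPolynomial.algHom_ext
    intro i
    fin_cases i <;> simp [A2f, XX, YY]
  · apply MvPolynomial.algHom_ext
    intro i
    fin_cases i <;> simp

lemma injA2b : Function.Injective ⇑A2b := by
  refine factorInj _ (aeval ![X 1, -(X 0)]) ?_
    (polyInj _ (aeval ![-(X 1), X 0]) ?_)
  · apply MvPolynomial.algHom_ext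
    intro i
    fin_cases i <;> simp [A2b, XX, YY]
  · apply MvPolynomial.algHom_ext
    intro i
    fin_cases i <;> simp

def crα₂ : Cr := AlgEquiv.ofAlgHom (liftHom A2f injA2f) (liftHom A2b injA2b)
  (by
    apply algHomK2_ext
    · rw [AlgHom.comp_apply, liftHom_XX, A2b_X0, liftHom_YY, A2f_X1, AlgHom.id_apply]
    · rw [AlgHom.comp_apply, liftHom_YY, A2b_X1, map_neg, liftHom_XX, A2f_X0, neg_neg,
        AlgHom.id_apply])
  (by
    apply algHomK2_ext
    · rw [AlgHom.comp_apply, liftHom_XX, A2f_X0, map_neg, liftHom_YY, A2b_X1, neg_neg,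
        AlgHom.id_apply]
    · rw [AlgHom.comp_apply, liftHom_YY, A2f_X1, liftHom_XX, A2b_X0, AlgHom.id_apply])

lemma crα₂_XX : crα₂ XX = -YY := by
  show liftHom A2f injA2f XX = -YY
  rw [liftHom_XX, A2f_X0]

lemma crα₂_YY : crα₂ YY = XX := by
  show liftHom A2f injA2f YY = XX
  rw [liftHom_YY, A2f_X1]

def B1f : R2 →ₐ[ℂ] K2 := aeval ![XX⁻¹, YY]
lemma B1f_X0 : B1f (X 0) = XX⁻¹ := by simp [B1f]
lemma B1f_X1 : B1f (X 1) = YY := by simp [B1f]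
lemma injB1f : Function.Injective ⇑B1f := inj1

def crβ₁ : Cr := AlgEquiv.ofAlgHom (liftHom B1f injB1f) (liftHom B1f injB1f)
  (by
    apply algHomK2_ext
    · rw [AlgHom.comp_apply, liftHom_XX, B1f_X0, map_inv₀, liftHom_XX, B1f_X0, inv_inv,
        AlgHom.id_apply]
    · rw [AlgHom.comp_apply, liftHom_YY, B1f_X1, liftHom_YY, B1f_X1, AlgHom.id_apply])
  (by
    apply algHomK2_ext
    · rw [AlgHom.comp_apply, liftHom_XX, B1f_X0, map_inv₀, liftHom_XX, B1f_X0, inv_inv,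
        AlgHom.id_apply]
    · rw [AlgHom.comp_apply, liftHom_YY, B1f_X1, liftHom_YY, B1f_X1, AlgHom.id_apply])

lemma crβ₁_XX : crβ₁ XX = XX⁻¹ := by
  show liftHom B1f injB1f XX = XX⁻¹
  rw [liftHom_XX, B1f_X0]

lemma crβ₁_YY : crβ₁ YY = YY := by
  show liftHom B1f injB1f YY = YY
  rw [liftHom_YY, B1f_X1]

def B2f : R2 →ₐ[ℂ] K2 := aeval ![XX⁻¹, YY⁻¹]
lemma B2f_X0 : B2f (X 0) = XX⁻¹ := by simp [B2f]
lemma B2f_X1 : B2f (X 1) = YY⁻¹ := by simp [B2f]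
lemma injB2f : Function.Injective ⇑B2f := inj2

def crβ₂ : Cr := AlgEquiv.ofAlgHom (liftHom B2f injB2f) (liftHom B2f injB2f)
  (by
    apply algHomK2_ext
    · rw [AlgHom.comp_apply, liftHom_XX, B2f_X0, map_inv₀, liftHom_XX, B2f_X0, inv_inv,
        AlgHom.id_apply]
    · rw [AlgHom.comp_apply, liftHom_YY, B2f_X1, map_inv₀, liftHom_YY, B2f_X1, inv_inv,
        AlgHom.id_apply])
  (by
    apply algHomK2_ext
    · rw [AlgHom.comp_apply, liftHom_XX, B2f_X0, map_inv₀, liftHom_XX, B2f_X0, inv_inv,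
        AlgHom.id_apply]
    · rw [AlgHom.comp_apply, liftHom_YY, B2f_X1, map_inv₀, liftHom_YY, B2f_X1, inv_inv,
        AlgHom.id_apply])

lemma crβ₂_XX : crβ₂ XX = XX⁻¹ := by
  show liftHom B2f injB2f XX = XX⁻¹
  rw [liftHom_XX, B2f_X0]

lemma crβ₂_YY : crβ₂ YY = YY⁻¹ := by
  show liftHom B2f injB2f YY = YY⁻¹
  rw [liftHom_YY, B2f_X1]

end Constructions

section Pkg

lemma ccYY {c : ℂ} (h : cc c * YY = YY) : c = 1 := by
  have h0 : (cc c - 1) * YY = 0 := by rw [sub_mul, h, one_mul, sub_self]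
  rcases mul_eq_zero.mp h0 with h1 | h1
  · have : cc c = cc 1 := by rw [sub_eq_zero] at h1; simpa [cc_one] using h1
    exact cc_inj this
  · exact absurd h1 YY_ne_zero

lemma inv_negK (x : K2) : (-x)⁻¹ = -x⁻¹ := inv_neg (a := x)

lemma XXinv_ne : XX⁻¹ ≠ XX := fun h => XXsq_ne_one (by
  nth_rewrite 1 [← h]
  exact inv_mul_cancel₀ XX_ne_zero)

lemma negXXinv_ne : -XX⁻¹ ≠ XX := fun h => XXsq_ne_negone
  (calc XX * XX = -XX⁻¹ * XX := by rw [h]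
    _ = -(XX⁻¹ * XX) := neg_mul XX⁻¹ XX
    _ = -1 := by rw [inv_mul_cancel₀ XX_ne_zero])

lemma negYYinv_ne : -YY⁻¹ ≠ XX := fun h => XXYY_ne_negone
  (calc XX * YY = -YY⁻¹ * YY := by rw [h]
    _ = -(YY⁻¹ * YY) := neg_mul YY⁻¹ YY
    _ = -1 := by rw [inv_mul_cancel₀ YY_ne_zero])

lemma YYinv_ne : YY⁻¹ ≠ XX := fun h => XXYY_ne_one
  (calc XX * YY = YY⁻¹ * YY := by rw [h]
    _ = 1 := inv_mul_cancel₀ YY_ne_zero)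

lemma pow_mod4 (a : Cr) (h4 : a^4 = 1) (k : ℕ) : a ^ k = a ^ (k % 4) := by
  conv_lhs => rw [← Nat.div_add_mod k 4, pow_add, pow_mul, h4, one_pow, one_mul]

lemma pow_mod2 (b : Cr) (h2 : b^2 = 1) (k : ℕ) : b ^ k = b ^ (k % 2) := by
  conv_lhs => rw [← Nat.div_add_mod k 2, pow_add, pow_mul, h2, one_pow, one_mul]

def phiAB (a b : Cr) (h4 : a^4 = 1) (h2 : b^2 = 1) (hc : a*b = b*a) :
    Multiplicative (ZMod 4 × ZMod 2) →* Cr where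
  toFun := fun p => a ^ (p.toAdd.1.val) * b ^ (p.toAdd.2.val)
  map_one' := by simp
  map_mul' := fun p q => by
    have hcom : Commute a b := hc
    show a ^ ((p.toAdd.1 + q.toAdd.1).val) * b ^ ((p.toAdd.2 + q.toAdd.2).val) = _
    rw [ZMod.val_add, ZMod.val_add, ← pow_mod4 a h4, ← pow_mod2 b h2, pow_add, pow_add,
      (hcom.pow_pow _ _).symm.mul_mul_mul_comm]

lemma phiAB_apply (a b : Cr) (h4 : a^4 = 1) (h2 : b^2 = 1) (hc : a*b = b*a)
    (m : ZMod 4) (n : ZMod 2) :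
    phiAB a b h4 h2 hc (Multiplicative.ofAdd (m, n)) = a ^ m.val * b ^ n.val := rfl

lemma pkg (a b : Cr) (h4 : a^4 = 1) (h2 : b^2 = 1) (hc : a*b = b*a)
    (hker : ∀ m n : ℕ, m < 4 → n < 2 → a^m * b^n = 1 → m = 0 ∧ n = 0) :
    Nonempty (↥(Subgroup.closure {a, b}) ≃* Multiplicative (ZMod 4 × ZMod 2)) := by
  haveI : Fact (1 < 4) := ⟨by norm_num⟩
  haveI : Fact (1 < 2) := ⟨by norm_num⟩
  set φ := phiAB a b h4 h2 hc with hφ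
  have hga : φ (Multiplicative.ofAdd (1, 0)) = a := by
    rw [hφ, phiAB_apply, ZMod.val_one, ZMod.val_zero, pow_one, pow_zero, mul_one]
  have hgb : φ (Multiplicative.ofAdd (0, 1)) = b := by
    rw [hφ, phiAB_apply, ZMod.val_one, ZMod.val_zero, pow_one, pow_zero, one_mul]
  have hinj : Function.Injective ⇑φ := by
    rw [injective_iff_map_eq_one]
    intro p hp
    have hv := hker p.toAdd.1.val p.toAdd.2.val (ZMod.val_lt _) (ZMod.val_lt _) hp
    have h1 : p.toAdd.1 = 0 := (ZMod.val_eq_zero _).mp hv.1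
    have h2' : p.toAdd.2 = 0 := (ZMod.val_eq_zero _).mp hv.2
    have : p.toAdd = (0 : ZMod 4 × ZMod 2) := Prod.ext h1 h2'
    simpa using congrArg Multiplicative.ofAdd this
  have hrange : φ.range = Subgroup.closure {a, b} := by
    apply le_antisymm
    · rintro x ⟨p, rfl⟩
      have ha : a ∈ Subgroup.closure ({a, b} : Set Cr) :=
        Subgroup.subset_closure (Set.mem_insert _ _)
      have hb : b ∈ Subgroup.closure ({a, b} : Set Cr) :=
        Subgroup.subset_closure (Set.mem_insert_of_mem _ rfl)
      exact mul_mem (pow_mem ha _) (pow_mem hb _)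
    · rw [Subgroup.closure_le]
      rintro x (rfl | rfl)
      · exact ⟨_, hga⟩
      · exact ⟨_, hgb⟩
  exact ⟨((MonoidHom.ofInjective hinj).trans (MulEquiv.subgroupCongr hrange)).symm⟩

end Pkg

section GroupFacts
open Complex
variable {a1 b1 a2 b2 : Cr}

lemma ccYY_ne {z : ℂ} (hz : z ≠ 1) (h : cc z * YY = YY) : False := hz (ccYY h)

lemma ccYY_ne' {z : ℂ} (hz : z ≠ 1) (h : algebraMap ℂ K2 z * YY = YY) : False :=
  ccYY_ne hz h

lemma collapse2 (a b : ℂ) (t : K2) :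
    algebraMap ℂ K2 a * (algebraMap ℂ K2 b * t) = algebraMap ℂ K2 (a*b) * t := by
  rw [← mul_assoc, ← map_mul]

lemma amc_one : algebraMap ℂ K2 (1:ℂ) = 1 := map_one _

section G1
variable (h1x : a1 XX = -XX) (h1y : a1 YY = cc Complex.I * YY)
variable (h2x : b1 XX = XX⁻¹) (h2y : b1 YY = YY)

include h1x h1y in
lemma a1_pow4 : a1^4 = 1 := by
  apply Cr_ext
  · show (a1^4) XX = (1 : Cr) XX
    simp only [pow_succ, pow_zero, one_mul, AlgEquiv.mul_apply, AlgEquiv.one_apply,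
      h1x, map_neg, neg_neg]
  · show (a1^4) YY = (1 : Cr) YY
    simp only [pow_succ, pow_zero, one_mul, AlgEquiv.mul_apply, AlgEquiv.one_apply,
      h1y, map_mul, cc, AlgEquiv.commutes]
    try simp only [mul_assoc]
    try simp only [collapse2]
    rw [show Complex.I * (Complex.I * (Complex.I * Complex.I)) = 1 by
      simp [Complex.I_mul_I], amc_one, one_mul]

include h2x h2y in
lemma b1_sq : b1^2 = 1 := by
  apply Cr_ext
  · show (b1^2) XX = (1 : Cr) XX
    simp only [pow_succ, pow_zero, one_mul, AlgEquiv.mul_apply, AlgEquiv.one_apply,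
      h2x, map_inv₀, inv_inv]
  · show (b1^2) YY = (1 : Cr) YY
    simp only [pow_succ, pow_zero, one_mul, AlgEquiv.mul_apply, AlgEquiv.one_apply, h2y]

include h1x h1y h2x h2y in
lemma comm1 : a1*b1 = b1*a1 := by
  apply Cr_ext
  · rw [AlgEquiv.mul_apply, AlgEquiv.mul_apply, h2x, h1x, map_inv₀, h1x, map_neg, h2x,
      inv_negK]
  · simp only [AlgEquiv.mul_apply, h2y, h1y, cc, map_mul, AlgEquiv.commutes]

include h1x h1y h2x h2y in
lemma hker1 : ∀ m n : ℕ, m < 4 → n < 2 → a1^m * b1^n = 1 → m = 0 ∧ n = 0 := by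
  intro m n hm hn h
  have hXe : (a1^m * b1^n) XX = XX := by rw [h]; exact AlgEquiv.one_apply _
  have hYe : (a1^m * b1^n) YY = YY := by rw [h]; exact AlgEquiv.one_apply _
  interval_cases m <;> interval_cases n
  · exact ⟨rfl, rfl⟩
  · -- m=0 n=1
    exfalso
    simp only [pow_succ, pow_zero, one_mul, AlgEquiv.mul_apply, AlgEquiv.one_apply,
      h2x] at hXe
    exact XXinv_ne hXe
  · -- m=1 n=0
    exfalso
    simp only [pow_succ, pow_zero, one_mul, mul_one, AlgEquiv.mul_apply,
      AlgEquiv.one_apply, h2y, h1y] at hYe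
    exact ccYY_ne (by norm_num [Complex.ext_iff]) hYe
  · exfalso
    simp only [pow_succ, pow_zero, one_mul, mul_one, AlgEquiv.mul_apply,
      AlgEquiv.one_apply, h2y, h1y] at hYe
    exact ccYY_ne (by norm_num [Complex.ext_iff]) hYe
  · -- m=2 n=0
    exfalso
    simp only [pow_succ, pow_zero, one_mul, mul_one, AlgEquiv.mul_apply,
      AlgEquiv.one_apply, h2y, h1y, map_mul, cc, AlgEquiv.commutes] at hYe
    try simp only [mul_assoc] at hYe
    try simp only [collapse2] at hYe
    refine ccYY_ne' ?_ hYe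
    norm_num [Complex.I_mul_I, Complex.ext_iff]
  · exfalso
    simp only [pow_succ, pow_zero, one_mul, mul_one, AlgEquiv.mul_apply,
      AlgEquiv.one_apply, h2y, h1y, map_mul, cc, AlgEquiv.commutes] at hYe
    try simp only [mul_assoc] at hYe
    try simp only [collapse2] at hYe
    refine ccYY_ne' ?_ hYe
    norm_num [Complex.I_mul_I, Complex.ext_iff]
  · -- m=3 n=0
    exfalso
    simp only [pow_succ, pow_zero, one_mul, mul_one, AlgEquiv.mul_apply,
      AlgEquiv.one_apply, h2y, h1y, map_mul, cc, AlgEquiv.commutes] at hYe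
    try simp only [mul_assoc] at hYe
    try simp only [collapse2] at hYe
    refine ccYY_ne' ?_ hYe
    norm_num [Complex.I_mul_I, Complex.ext_iff]
  · exfalso
    simp only [pow_succ, pow_zero, one_mul, mul_one, AlgEquiv.mul_apply,
      AlgEquiv.one_apply, h2y, h1y, map_mul, cc, AlgEquiv.commutes] at hYe
    try simp only [mul_assoc] at hYe
    try simp only [collapse2] at hYe
    refine ccYY_ne' ?_ hYe
    norm_num [Complex.I_mul_I, Complex.ext_iff]

end G1

section G2
variable (h3x : a2 XX = -YY) (h3y : a2 YY = XX)
variable (h4x : b2 XX = XX⁻¹) (h4y : b2 YY = YY⁻¹)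

include h3x h3y in
lemma a2_pow4 : a2^4 = 1 := by
  apply Cr_ext
  · show (a2^4) XX = (1 : Cr) XX
    simp only [pow_succ, pow_zero, one_mul, AlgEquiv.mul_apply, AlgEquiv.one_apply,
      h3x, h3y, map_neg, neg_neg]
  · show (a2^4) YY = (1 : Cr) YY
    simp only [pow_succ, pow_zero, one_mul, AlgEquiv.mul_apply, AlgEquiv.one_apply,
      h3x, h3y, map_neg, neg_neg]

include h4x h4y in
lemma b2_sq : b2^2 = 1 := by
  apply Cr_ext
  · show (b2^2) XX = (1 : Cr) XX
    simp only [pow_succ, pow_zero, one_mul, AlgEquiv.mul_apply, AlgEquiv.one_apply,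
      h4x, map_inv₀, inv_inv]
  · show (b2^2) YY = (1 : Cr) YY
    simp only [pow_succ, pow_zero, one_mul, AlgEquiv.mul_apply, AlgEquiv.one_apply,
      h4y, map_inv₀, inv_inv]

include h3x h3y h4x h4y in
lemma comm2 : a2*b2 = b2*a2 := by
  apply Cr_ext
  · rw [AlgEquiv.mul_apply, AlgEquiv.mul_apply, h4x, h3x, map_inv₀, h3x, map_neg, h4y,
      inv_negK]
  · rw [AlgEquiv.mul_apply, AlgEquiv.mul_apply, h4y, h3y, map_inv₀, h3y, h4x]

include h3x h3y h4x h4y in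
lemma hker2 : ∀ m n : ℕ, m < 4 → n < 2 → a2^m * b2^n = 1 → m = 0 ∧ n = 0 := by
  intro m n hm hn h
  have hXe : (a2^m * b2^n) XX = XX := by rw [h]; exact AlgEquiv.one_apply _
  interval_cases m <;> interval_cases n
  · exact ⟨rfl, rfl⟩
  · exfalso
    simp only [pow_succ, pow_zero, one_mul, AlgEquiv.mul_apply, AlgEquiv.one_apply,
      h4x] at hXe
    exact XXinv_ne hXe
  · exfalso
    simp only [pow_succ, pow_zero, one_mul, mul_one, AlgEquiv.mul_apply,
      AlgEquiv.one_apply, h3x] at hXe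
    exact XX_ne_negYY hXe.symm
  · exfalso
    simp only [pow_succ, pow_zero, one_mul, mul_one, AlgEquiv.mul_apply,
      AlgEquiv.one_apply, h4x, map_inv₀, h3x, inv_negK] at hXe
    exact negYYinv_ne hXe
  · exfalso
    simp only [pow_succ, pow_zero, one_mul, mul_one, AlgEquiv.mul_apply,
      AlgEquiv.one_apply, h3x, map_neg, h3y] at hXe
    exact XX_ne_negXX hXe.symm
  · exfalso
    simp only [pow_succ, pow_zero, one_mul, mul_one, AlgEquiv.mul_apply,
      AlgEquiv.one_apply, h4x, map_inv₀, h3x, map_neg, h3y, inv_negK] at hXe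
    exact negXXinv_ne hXe
  · exfalso
    simp only [pow_succ, pow_zero, one_mul, mul_one, AlgEquiv.mul_apply,
      AlgEquiv.one_apply, h3x, map_neg, h3y, neg_neg] at hXe
    exact XX_ne_YY hXe.symm
  · exfalso
    simp only [pow_succ, pow_zero, one_mul, mul_one, AlgEquiv.mul_apply,
      AlgEquiv.one_apply, h4x, map_inv₀, h3x, map_neg, h3y, neg_neg, inv_negK] at hXe
    exact YYinv_ne hXe

end G2
end GroupFacts

section Place

def jmap : R2 →ₐ[ℂ] R2 := aeval ![1, X 1]

lemma jmap_X0 : jmap (X 0) = 1 := by simp [jmap]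
lemma jmap_X1 : jmap (X 1) = X 1 := by simp [jmap]

lemma dvd_sub_j (c : R2) : (X 0 - 1 : R2) ∣ (c - jmap c) := by
  induction c using MvPolynomial.induction_on with
  | C a =>
      have : jmap (C a) = C a := by simp [jmap, algHom_C]
      rw [this, sub_self]
      exact dvd_zero _
  | add p q hp hq =>
      have : p + q - jmap (p + q) = (p - jmap p) + (q - jmap q) := by
        rw [map_add]; ring
      rw [this]; exact dvd_add hp hq
  | mul_X p i hp =>
      fin_cases i
      · show (X 0 - 1 : R2) ∣ p * X 0 - jmap (p * X 0)
        have : p * X 0 - jmap (p * X 0) =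
            (p - jmap p) * X 0 + jmap p * (X 0 - 1) := by
          rw [map_mul, jmap_X0]; ring
        rw [this]
        exact dvd_add (hp.mul_right _) (dvd_mul_left _ _)
      · show (X 0 - 1 : R2) ∣ p * X 1 - jmap (p * X 1)
        have : p * X 1 - jmap (p * X 1) = (p - jmap p) * X 1 := by
          rw [map_mul, jmap_X1]; ring
        rw [this]
        exact hp.mul_right _

lemma ker_j {c : R2} (hc : jmap c = 0) : (X 0 - 1 : R2) ∣ c := by
  have := dvd_sub_j c
  rwa [hc, sub_zero] at this

lemma jmap_ne_of_not_dvd {c : R2} (h : ¬ (X 0 - 1 : R2) ∣ c) : jmap c ≠ 0 :=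
  fun hc => h (ker_j hc)

lemma jmap_X0sub1 : jmap (X 0 - 1 : R2) = 0 := by
  rw [map_sub, jmap_X0, map_one, sub_self]

lemma X0sub1_ne : (X 0 - 1 : R2) ≠ 0 := fun h => by
  have h2 : jmap (X 0 - 1 : R2) = 0 := by rw [h, map_zero]
  have h3 : (X 0 : R2) = 1 := by
    have := sub_eq_zero.mp h
    exact this
  have h4 : aeval (R := ℂ) (S₁ := ℂ) ![0, 0] (X 0 : R2) = aeval ![0, 0] (1 : R2) := by rw [h3]
  simp at h4

lemma X0sub1_prime : Prime (X 0 - 1 : R2) := by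
  rw [← Ideal.span_singleton_prime X0sub1_ne]
  have hspan : Ideal.span {(X 0 - 1 : R2)} = RingHom.ker (jmap : R2 →+* R2) := by
    ext c
    rw [Ideal.mem_span_singleton, RingHom.mem_ker]
    constructor
    · rintro ⟨t, rfl⟩
      show jmap _ = 0
      rw [map_mul, jmap_X0sub1, zero_mul]
    · intro hc
      exact ker_j hc
  rw [hspan]
  exact RingHom.ker_isPrime _

lemma X0sub1_irred : Irreducible (X 0 - 1 : R2) := X0sub1_prime.irreducible

lemma amne {t : R2} (ht : t ≠ 0) : algebraMap R2 K2 t ≠ 0 := fun h =>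
  ht (amap_inj (by rw [h, map_zero]))

/-- `Rel f r` : the rational function `f` is defined at the generic point of the
curve `X = 1` with value `r` (living inside `K2` via `Y ↦ Y`). -/
def Rel (f r : K2) : Prop :=
  ∃ p q : R2, jmap q ≠ 0 ∧ f * algebraMap R2 K2 q = algebraMap R2 K2 p ∧
    r = algebraMap R2 K2 (jmap p) / algebraMap R2 K2 (jmap q)

lemma Rel_one : Rel 1 1 :=
  ⟨1, 1, by simp, by simp, by simp⟩

lemma Rel_XX : Rel XX 1 :=
  ⟨X 0, 1, by simp, by simp [XX], by simp [jmap_X0]⟩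

lemma Rel_func {f r r' : K2} (h : Rel f r) (h' : Rel f r') : r = r' := by
  obtain ⟨p, q, hq, he, hr⟩ := h
  obtain ⟨p', q', hq', he', hr'⟩ := h'
  have h1 : algebraMap R2 K2 (p * q') = algebraMap R2 K2 (p' * q) := by
    rw [map_mul, map_mul, ← he, ← he']
    ring
  have h2 : p * q' = p' * q := amap_inj h1
  have h3 : jmap p * jmap q' = jmap p' * jmap q := by
    rw [← map_mul, ← map_mul, h2]
  rw [hr, hr', div_eq_div_iff (amne hq) (amne hq')]
  rw [← map_mul (algebraMap R2 K2) (jmap p) (jmap q'),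
    ← map_mul (algebraMap R2 K2) (jmap p') (jmap q), h3]

lemma Rel_mul {f g r s : K2} (hf : Rel f r) (hg : Rel g s) : Rel (f*g) (r*s) := by
  obtain ⟨p, q, hq, he, hr⟩ := hf
  obtain ⟨p', q', hq', he', hr'⟩ := hg
  refine ⟨p * p', q * q', by rw [map_mul]; exact mul_ne_zero hq hq', ?_, ?_⟩
  · rw [map_mul, map_mul, ← he, ← he']
    ring
  · rw [map_mul, map_mul, map_mul, map_mul, hr, hr']
    rw [div_mul_div_comm]

lemma Rel_neg {f r : K2} (hf : Rel f r) : Rel (-f) (-r) := by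
  obtain ⟨p, q, hq, he, hr⟩ := hf
  refine ⟨-p, q, hq, ?_, ?_⟩
  · rw [map_neg, ← he]
    ring
  · rw [map_neg, map_neg, hr]
    ring

lemma Rel_zero_of_f_eq_zero {f r : K2} (hf : Rel f r) (h0 : f = 0) : r = 0 := by
  obtain ⟨p, q, hq, he, hr⟩ := hf
  rw [h0, zero_mul] at he
  have hp : p = 0 := amap_inj (by rw [← he, map_zero])
  rw [hr, hp, map_zero, map_zero, zero_div]

lemma Rel_inv {f r : K2} (hf : Rel f r) (hr : r ≠ 0) : Rel f⁻¹ r⁻¹ := by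
  obtain ⟨p, q, hq, he, hrv⟩ := hf
  have hjp : jmap p ≠ 0 := by
    intro h
    rw [hrv, h, map_zero, zero_div] at hr
    exact hr rfl
  have hf0 : f ≠ 0 := by
    intro h
    exact hr (Rel_zero_of_f_eq_zero ⟨p, q, hq, he, hrv⟩ h)
  refine ⟨q, p, hjp, ?_, ?_⟩
  · have hq0 : q ≠ 0 := fun h => hq (by rw [h, map_zero])
    rw [← he]
    field_simp
  · rw [hrv, inv_div]

lemma Rel_ccmul (c : ℂ) {f r : K2} (hf : Rel f r) : Rel (cc c * f) (cc c * r) := by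
  obtain ⟨p, q, hq, he, hr⟩ := hf
  refine ⟨C c * p, q, hq, ?_, ?_⟩
  · rw [map_mul, ← he, ← cc_eq]
    ring
  · rw [map_mul, hr]
    have hjc : jmap (C c) = C c := by simp [jmap, algHom_C]
    rw [hjc, map_mul, ← cc_eq, mul_div_assoc]

lemma Rel_tri (f : K2) (hf : f ≠ 0) :
    (∃ r, r ≠ 0 ∧ Rel f r) ∨ Rel f 0 ∨ Rel f⁻¹ 0 := by
  obtain ⟨a, b, hbmem, hfab⟩ := IsFractionRing.div_surjective (A := R2) f
  have hb : b ≠ 0 := nonZeroDivisors.ne_zero hbmem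
  have ha : a ≠ 0 := by
    intro h
    rw [h, map_zero, zero_div] at hfab
    exact hf hfab.symm
  obtain ⟨k, a0, ha0, haeq⟩ := WfDvdMonoid.max_power_factor ha X0sub1_irred
  obtain ⟨l, b0, hb0, hbeq⟩ := WfDvdMonoid.max_power_factor hb X0sub1_irred
  have hja0 : jmap a0 ≠ 0 := jmap_ne_of_not_dvd ha0
  have hjb0 : jmap b0 ≠ 0 := jmap_ne_of_not_dvd hb0
  have hw0 : algebraMap R2 K2 (X 0 - 1 : R2) ≠ 0 := amne X0sub1_ne
  have ha0K : algebraMap R2 K2 a0 ≠ 0 := amne (fun h => ha0 (by rw [h]; exact dvd_zero _))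
  have hb0K : algebraMap R2 K2 b0 ≠ 0 := amne (fun h => hb0 (by rw [h]; exact dvd_zero _))
  have hfe : f * algebraMap R2 K2 b = algebraMap R2 K2 a := by
    rw [← hfab, div_mul_cancel₀ _ (amne hb)]
  rcases lt_trichotomy k l with hkl | hkl | hkl
  · right; right
    obtain ⟨m, hm, hm0⟩ : ∃ m, l = m + k ∧ m ≠ 0 := ⟨l - k, by omega, by omega⟩
    refine ⟨(X 0 - 1 : R2)^m * b0, a0, hja0, ?_, ?_⟩
    · have hinv : f⁻¹ = algebraMap R2 K2 b / algebraMap R2 K2 a := by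
        rw [← hfab, inv_div]
      rw [hinv, haeq, hbeq, hm, map_mul, map_mul, map_mul, map_pow, map_pow, map_pow,
        pow_add]
      have hwk : (algebraMap R2 K2 (X 0 - 1 : R2))^k ≠ 0 := pow_ne_zero _ hw0
      rw [div_mul_eq_mul_div, div_eq_iff (mul_ne_zero hwk ha0K)]
      ring
    · rw [map_mul, map_pow, jmap_X0sub1, zero_pow hm0, zero_mul, map_zero, zero_div]
  · left
    refine ⟨algebraMap R2 K2 (jmap a0) / algebraMap R2 K2 (jmap b0),
      div_ne_zero (amne hja0) (amne hjb0), a0, b0, hjb0, ?_, rfl⟩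
    rw [haeq, hbeq, hkl] at hfe
    rw [map_mul, map_mul] at hfe
    have hwp : algebraMap R2 K2 ((X 0 - 1 : R2)^l) ≠ 0 := by
      rw [map_pow]; exact pow_ne_zero _ hw0
    exact mul_left_cancel₀ hwp (by rw [← hfe]; ring)
  · right; left
    obtain ⟨m, hm, hm0⟩ : ∃ m, k = m + l ∧ m ≠ 0 := ⟨k - l, by omega, by omega⟩
    refine ⟨(X 0 - 1 : R2)^m * a0, b0, hjb0, ?_, ?_⟩
    · rw [haeq, hbeq, hm] at hfe
      rw [map_mul, map_mul, map_pow, map_pow, pow_add] at hfe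
      rw [map_mul, map_pow]
      apply mul_right_cancel₀ (pow_ne_zero l hw0)
      calc f * algebraMap R2 K2 b0 * (algebraMap R2 K2 (X 0 - 1 : R2))^l
          = f * ((algebraMap R2 K2 (X 0 - 1 : R2))^l * algebraMap R2 K2 b0) := by ring
        _ = (algebraMap R2 K2 (X 0 - 1 : R2))^m * (algebraMap R2 K2 (X 0 - 1 : R2))^l *
            algebraMap R2 K2 a0 := hfe
        _ = (algebraMap R2 K2 (X 0 - 1 : R2))^m * algebraMap R2 K2 a0 *
            (algebraMap R2 K2 (X 0 - 1 : R2))^l := by ring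
    · rw [map_mul, map_pow, jmap_X0sub1, zero_pow hm0, zero_mul, map_zero, zero_div]

end Place

section Stab
open Complex

def Smap : R2 →ₐ[ℂ] R2 := aeval ![X 0, -(X 1)]

lemma Smap_X0 : Smap (X 0) = X 0 := by simp [Smap]
lemma Smap_X1 : Smap (X 1) = -(X 1) := by simp [Smap]

lemma jmap_monomial (e : Fin 2 →₀ ℕ) (c : ℂ) :
    jmap (monomial e c) = C c * (X 1)^(e 1) := by
  rw [jmap, aeval_monomial, Finsupp.prod_fintype _ _ (fun i => pow_zero _),
    Fin.prod_univ_two]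
  simp [MvPolynomial.algebraMap_eq]

lemma jmap_rev1 (N : ℕ) (p : R2) : jmap (rev1 N p) = jmap p := by
  conv_rhs => rw [← MvPolynomial.support_sum_monomial_coeff p]
  conv_lhs => rw [← MvPolynomial.support_sum_monomial_coeff p, map_sum, map_sum]
  rw [map_sum]
  refine Finset.sum_congr rfl fun d _ => ?_
  rw [rev1_monomial, jmap_monomial, jmap_monomial, flip1_1]

lemma jS (p : R2) : jmap (Smap p) = Smap (jmap p) := by
  have h : jmap.comp Smap = Smap.comp jmap := by
    apply MvPolynomial.algHom_ext
    intro i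
    fin_cases i
    · show jmap (Smap (X 0)) = Smap (jmap (X 0))
      rw [Smap_X0, jmap_X0, map_one]
    · show jmap (Smap (X 1)) = Smap (jmap (X 1))
      rw [Smap_X1, jmap_X1, map_neg, jmap_X1, Smap_X1]
  exact AlgHom.congr_fun h p

lemma Smap_Smap (p : R2) : Smap (Smap p) = p := by
  have h : Smap.comp Smap = AlgHom.id ℂ R2 := by
    apply MvPolynomial.algHom_ext
    intro i
    fin_cases i
    · show Smap (Smap (X 0)) = X 0
      rw [Smap_X0, Smap_X0]
    · show Smap (Smap (X 1)) = X 1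
      rw [Smap_X1, map_neg, Smap_X1, neg_neg]
  exact AlgHom.congr_fun h p

lemma jSne {q : R2} (hq : jmap q ≠ 0) : jmap (Smap q) ≠ 0 := by
  rw [jS]
  intro h
  have h2 := Smap_Smap (jmap q)
  rw [h, map_zero] at h2
  exact hq h2.symm

variable {a1 b1 : Cr}
variable (h1x : a1 XX = -XX) (h1y : a1 YY = cc Complex.I * YY)
variable (h2x : b1 XX = XX⁻¹) (h2y : b1 YY = YY)

include h2x h2y in
lemma b1_am (p : R2) : b1 (algebraMap R2 K2 p) = aeval ![XX⁻¹, YY] p := by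
  have h : (b1.toAlgHom.comp (IsScalarTower.toAlgHom ℂ R2 K2)) = aeval ![XX⁻¹, YY] := by
    apply MvPolynomial.algHom_ext
    intro i
    fin_cases i
    · simpa [XX] using h2x
    · simpa [YY] using h2y
  simpa using AlgHom.congr_fun h p

include h1x h1y in
lemma Sig_am (p : R2) : (a1*a1) (algebraMap R2 K2 p) = algebraMap R2 K2 (Smap p) := by
  have h : ((a1*a1).toAlgHom.comp (IsScalarTower.toAlgHom ℂ R2 K2)) =
      (IsScalarTower.toAlgHom ℂ R2 K2).comp Smap := by
    apply MvPolynomial.algHom_ext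
    intro i
    fin_cases i
    · show (a1*a1) XX = algebraMap R2 K2 (Smap (X 0))
      rw [Smap_X0, AlgEquiv.mul_apply, h1x, map_neg, h1x, neg_neg]
      rfl
    · show (a1*a1) YY = algebraMap R2 K2 (Smap (X 1))
      rw [Smap_X1, AlgEquiv.mul_apply, h1y, map_mul, h1y]
      rw [show a1 (cc Complex.I) = cc Complex.I from a1.commutes Complex.I]
      rw [map_neg, ← mul_assoc, cc_mul, Complex.I_mul_I, cc_negone]
      show -1 * YY = -(algebraMap R2 K2 (X 1))
      show -1 * YY = -YY
      ring
  simpa using AlgHom.congr_fun h p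

include h1x h1y in
lemma Rel_Sigma {f r : K2} (h : Rel f r) : Rel ((a1*a1) f) ((a1*a1) r) := by
  obtain ⟨p, q, hq, he, hr⟩ := h
  refine ⟨Smap p, Smap q, jSne hq, ?_, ?_⟩
  · have h2 := congrArg (a1*a1) he
    rw [map_mul, Sig_am h1x h1y, Sig_am h1x h1y] at h2
    exact h2
  · rw [hr, map_div₀, Sig_am h1x h1y, Sig_am h1x h1y, jS, jS]

include h2x h2y in
lemma Rel_B {f r : K2} (h : Rel f r) : Rel (b1 f) r := by
  obtain ⟨p, q, hq, he, hr⟩ := h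
  set N := max p.totalDegree q.totalDegree with hN
  have hbp : ∀ d ∈ p.support, d 0 ≤ N :=
    fun d hd => le_trans (d0_le_totalDegree p d hd) (le_max_left _ _)
  have hbq : ∀ d ∈ q.support, d 0 ≤ N :=
    fun d hd => le_trans (d0_le_totalDegree q d hd) (le_max_right _ _)
  refine ⟨rev1 N p, rev1 N q, by rw [jmap_rev1]; exact hq, ?_, ?_⟩
  · have h2 := congrArg b1 he
    rw [map_mul] at h2
    have h3 : b1 f * (b1 (algebraMap R2 K2 q) * XX ^ N) =
        b1 (algebraMap R2 K2 p) * XX ^ N := by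
      rw [← mul_assoc, h2]
    rw [b1_am h2x h2y, b1_am h2x h2y, rev1_eq N q hbq, rev1_eq N p hbp] at h3
    exact h3
  · rw [jmap_rev1, jmap_rev1]
    exact hr

lemma two_ne_K2 : (2 : K2) ≠ 0 := by
  intro h
  have h2 : algebraMap ℂ K2 2 = algebraMap ℂ K2 0 := by
    rw [map_ofNat, map_zero, h]
  have := (algebraMap ℂ K2).injective h2
  norm_num at this

lemma eq_neg_self_K2 {r : K2} (h : r = -r) : r = 0 := by
  have h2 : (2 : K2) * r = 0 := by linear_combination h
  rcases mul_eq_zero.mp h2 with h3 | h3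
  · exact absurd h3 two_ne_K2
  · exact h3

lemma one_ne_negone_K2 : (1 : K2) ≠ -1 := by
  intro h
  have := eq_neg_self_K2 h
  exact one_ne_zero this

lemma ccI_sq : cc Complex.I * cc Complex.I = -1 := by
  rw [cc_mul, Complex.I_mul_I, cc_negone]

lemma sq_one_cases {r : K2} (h : r * r = 1) : r = 1 ∨ r = -1 := by
  have h2 : (r - 1) * (r + 1) = 0 := by linear_combination h
  rcases mul_eq_zero.mp h2 with h3 | h3
  · exact Or.inl (sub_eq_zero.mp h3)
  · exact Or.inr (eq_neg_of_add_eq_zero_left h3)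

lemma sq_negone_cases {r : K2} (h : r * r = -1) :
    r = cc Complex.I ∨ r = -cc Complex.I := by
  have h2 : (r - cc Complex.I) * (r + cc Complex.I) = 0 := by
    linear_combination h - ccI_sq
  rcases mul_eq_zero.mp h2 with h3 | h3
  · exact Or.inl (sub_eq_zero.mp h3)
  · exact Or.inr (eq_neg_of_add_eq_zero_left h3)

include h1x h1y in
lemma Sig_fix {r : K2} (h : r = 1 ∨ r = -1 ∨ r = cc Complex.I ∨ r = -cc Complex.I) :
    (a1*a1) r = r := by
  rcases h with rfl | rfl | rfl | rfl
  · exact map_one _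
  · rw [map_neg, map_one]
  · exact (a1*a1).commutes Complex.I
  · rw [map_neg]
    rw [show (a1*a1) (cc Complex.I) = cc Complex.I from (a1*a1).commutes Complex.I]

lemma r_of_sq_pm {r : K2} (h : r * r = 1 ∨ r * r = -1) :
    r = 1 ∨ r = -1 ∨ r = cc Complex.I ∨ r = -cc Complex.I := by
  rcases h with h | h
  · rcases sq_one_cases h with h2 | h2
    · exact Or.inl h2
    · exact Or.inr (Or.inl h2)
  · rcases sq_negone_cases h with h2 | h2
    · exact Or.inr (Or.inr (Or.inl h2))
    · exact Or.inr (Or.inr (Or.inr h2))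

include h1x h1y h2x h2y in
lemma core (ξ : K2) (hξ : ξ ≠ 0)
    (hcase :
      (b1 ξ = -ξ ∧ (a1*a1) ξ = ξ⁻¹) ∨ (b1 ξ = -ξ ∧ (a1*a1) ξ = -ξ⁻¹) ∨
      (b1 ξ = ξ⁻¹ ∧ (a1*a1) ξ = -ξ) ∨ (b1 ξ = ξ⁻¹ ∧ (a1*a1) ξ = -ξ⁻¹) ∨
      (b1 ξ = -ξ⁻¹ ∧ (a1*a1) ξ = -ξ) ∨ (b1 ξ = -ξ⁻¹ ∧ (a1*a1) ξ = ξ⁻¹)) : False := by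
  -- Step 1 : ξ has a nonzero value along X = 1
  have step1 : ∃ r, r ≠ 0 ∧ Rel ξ r := by
    rcases Rel_tri ξ hξ with h | h0 | h0
    · exact h
    · -- Rel ξ 0 : impossible
      exfalso
      have hinv0 : Rel ξ⁻¹ 0 := by
        rcases hcase with ⟨hb, hs⟩ | ⟨hb, hs⟩ | ⟨hb, hs⟩ | ⟨hb, hs⟩ | ⟨hb, hs⟩ | ⟨hb, hs⟩
        · have h2 := Rel_Sigma h1x h1y h0
          rw [map_zero, hs] at h2
          exact h2
        · have h2 := Rel_Sigma h1x h1y h0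
          rw [map_zero, hs] at h2
          simpa using Rel_neg h2
        · have h2 := Rel_B h2x h2y h0
          rw [hb] at h2
          exact h2
        · have h2 := Rel_B h2x h2y h0
          rw [hb] at h2
          exact h2
        · have h2 := Rel_B h2x h2y h0
          rw [hb] at h2
          simpa using Rel_neg h2
        · have h2 := Rel_B h2x h2y h0
          rw [hb] at h2
          simpa using Rel_neg h2
      have h1 : Rel (ξ * ξ⁻¹) 0 := by simpa using Rel_mul h0 hinv0
      rw [mul_inv_cancel₀ hξ] at h1
      exact zero_ne_one (Rel_func h1 Rel_one)
    · -- Rel ξ⁻¹ 0 : impossible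
      exfalso
      have hx0 : Rel ξ 0 := by
        rcases hcase with ⟨hb, hs⟩ | ⟨hb, hs⟩ | ⟨hb, hs⟩ | ⟨hb, hs⟩ | ⟨hb, hs⟩ | ⟨hb, hs⟩
        · have h2 := Rel_Sigma h1x h1y h0
          rw [map_zero, map_inv₀, hs, inv_inv] at h2
          exact h2
        · have h2 := Rel_Sigma h1x h1y h0
          rw [map_zero, map_inv₀, hs, inv_negK, inv_inv] at h2
          simpa using Rel_neg h2
        · have h2 := Rel_B h2x h2y h0
          rw [map_inv₀, hb, inv_inv] at h2
          exact h2
        · have h2 := Rel_B h2x h2y h0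
          rw [map_inv₀, hb, inv_inv] at h2
          exact h2
        · have h2 := Rel_B h2x h2y h0
          rw [map_inv₀, hb, inv_negK, inv_inv] at h2
          simpa using Rel_neg h2
        · have h2 := Rel_B h2x h2y h0
          rw [map_inv₀, hb, inv_negK, inv_inv] at h2
          simpa using Rel_neg h2
      have h1 : Rel (ξ * ξ⁻¹) 0 := by simpa using Rel_mul hx0 h0
      rw [mul_inv_cancel₀ hξ] at h1
      exact zero_ne_one (Rel_func h1 Rel_one)
  obtain ⟨r, hr0, hr⟩ := step1
  have hBr := Rel_B h2x h2y hr      -- Rel (b1 ξ) r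
  have hSr := Rel_Sigma h1x h1y hr  -- Rel ((a1*a1) ξ) ((a1*a1) r)
  have hnegr := Rel_neg hr          -- Rel (-ξ) (-r)
  have hinvr := Rel_inv hr hr0      -- Rel ξ⁻¹ r⁻¹
  have hneginvr := Rel_neg hinvr    -- Rel (-ξ⁻¹) (-r⁻¹)
  rcases hcase with ⟨hb, hs⟩ | ⟨hb, hs⟩ | ⟨hb, hs⟩ | ⟨hb, hs⟩ | ⟨hb, hs⟩ | ⟨hb, hs⟩
  · -- b1 ξ = -ξ : r = -r
    rw [hb] at hBr
    exact hr0 (eq_neg_self_K2 (Rel_func hBr hnegr))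
  · rw [hb] at hBr
    exact hr0 (eq_neg_self_K2 (Rel_func hBr hnegr))
  · -- b1 ξ = ξ⁻¹, Σ ξ = -ξ
    rw [hb] at hBr
    have hsq : r * r = 1 := by
      have h2 : r = r⁻¹ := Rel_func hBr hinvr
      calc r * r = r⁻¹ * r := by rw [← h2]
        _ = 1 := inv_mul_cancel₀ hr0
    have hfix : (a1*a1) r = r := Sig_fix h1x h1y (r_of_sq_pm (Or.inl hsq))
    rw [hs, hfix] at hSr
    exact hr0 (eq_neg_self_K2 (Rel_func hSr hnegr))
  · -- b1 ξ = ξ⁻¹, Σ ξ = -ξ⁻¹ : r² = 1 and r² = -1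
    rw [hb] at hBr
    have hsq : r * r = 1 := by
      have h2 : r = r⁻¹ := Rel_func hBr hinvr
      calc r * r = r⁻¹ * r := by rw [← h2]
        _ = 1 := inv_mul_cancel₀ hr0
    have hfix : (a1*a1) r = r := Sig_fix h1x h1y (r_of_sq_pm (Or.inl hsq))
    rw [hs, hfix] at hSr
    have h2 : r = -r⁻¹ := Rel_func hSr hneginvr
    have hsq2 : r * r = -1 := by
      calc r * r = -r⁻¹ * r := by rw [← h2]
        _ = -(r⁻¹ * r) := neg_mul r⁻¹ r
        _ = -1 := by rw [inv_mul_cancel₀ hr0]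
    rw [hsq] at hsq2
    exact one_ne_negone_K2 hsq2
  · -- b1 ξ = -ξ⁻¹, Σ ξ = -ξ
    rw [hb] at hBr
    have h2 : r = -r⁻¹ := Rel_func hBr hneginvr
    have hsq : r * r = -1 := by
      calc r * r = -r⁻¹ * r := by rw [← h2]
        _ = -(r⁻¹ * r) := neg_mul r⁻¹ r
        _ = -1 := by rw [inv_mul_cancel₀ hr0]
    have hfix : (a1*a1) r = r := Sig_fix h1x h1y (r_of_sq_pm (Or.inr hsq))
    rw [hs, hfix] at hSr
    exact hr0 (eq_neg_self_K2 (Rel_func hSr hnegr))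
  · -- b1 ξ = -ξ⁻¹, Σ ξ = ξ⁻¹ : r² = -1 and r² = 1
    rw [hb] at hBr
    have h2 : r = -r⁻¹ := Rel_func hBr hneginvr
    have hsq : r * r = -1 := by
      calc r * r = -r⁻¹ * r := by rw [← h2]
        _ = -(r⁻¹ * r) := neg_mul r⁻¹ r
        _ = -1 := by rw [inv_mul_cancel₀ hr0]
    have hfix : (a1*a1) r = r := Sig_fix h1x h1y (r_of_sq_pm (Or.inr hsq))
    rw [hs, hfix] at hSr
    have h3 : r = r⁻¹ := Rel_func hSr hinvr
    have hsq2 : r * r = 1 := by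
      calc r * r = r⁻¹ * r := by rw [← h3]
        _ = 1 := inv_mul_cancel₀ hr0
    rw [hsq2] at hsq
    exact one_ne_negone_K2 hsq

end Stab

section Assemble
open Complex

lemma mem_closure_pair (a b : Cr) (h4 : a^4 = 1) (h2 : b^2 = 1) (hc : a*b = b*a)
    {g : Cr} (hg : g ∈ Subgroup.closure {a, b}) :
    ∃ m n : ℕ, m < 4 ∧ n < 2 ∧ g = a^m * b^n := by
  haveI : Fact (1 < 4) := ⟨by norm_num⟩
  haveI : Fact (1 < 2) := ⟨by norm_num⟩
  have hrange : Subgroup.closure {a, b} ≤ (phiAB a b h4 h2 hc).range := by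
    rw [Subgroup.closure_le]
    rintro x (rfl | rfl)
    · exact ⟨Multiplicative.ofAdd (1, 0), by
        rw [phiAB_apply, ZMod.val_one, ZMod.val_zero, pow_one, pow_zero, mul_one]⟩
    · exact ⟨Multiplicative.ofAdd (0, 1), by
        rw [phiAB_apply, ZMod.val_one, ZMod.val_zero, pow_one, pow_zero, one_mul]⟩
  obtain ⟨p, hp⟩ := hrange hg
  exact ⟨p.toAdd.1.val, p.toAdd.2.val, ZMod.val_lt _, ZMod.val_lt _, hp.symm⟩

variable {α₂ β₂ : Cr}
variable (h3x : α₂ XX = -YY) (h3y : α₂ YY = XX)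
variable (h4x : β₂ XX = XX⁻¹) (h4y : β₂ YY = YY⁻¹)

include h3x h3y h4x h4y in
/-- classification of the involutions in `G₂`. -/
lemma inv_class {g : Cr} (hmem : g ∈ Subgroup.closure {α₂, β₂})
    (hgg : g * g = 1) (hgne : g ≠ 1) :
    (g XX = -XX ∧ g YY = -YY) ∨ (g XX = XX⁻¹ ∧ g YY = YY⁻¹) ∨
      (g XX = -XX⁻¹ ∧ g YY = -YY⁻¹) := by
  obtain ⟨m, n, hm, hn, hgeq⟩ := mem_closure_pair α₂ β₂ (a2_pow4 h3x h3y)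
    (b2_sq h4x h4y) (comm2 h3x h3y h4x h4y) hmem
  interval_cases m <;> interval_cases n
  · -- (0,0) : g = 1
    exfalso
    apply hgne
    simpa using hgeq
  · -- (0,1) : g = β₂
    right; left
    constructor
    · rw [hgeq]
      simp only [pow_succ, pow_zero, one_mul, AlgEquiv.mul_apply, AlgEquiv.one_apply, h4x]
    · rw [hgeq]
      simp only [pow_succ, pow_zero, one_mul, AlgEquiv.mul_apply, AlgEquiv.one_apply, h4y]
  · -- (1,0) : order 4, impossible
    exfalso
    rw [hgeq] at hgg
    have hXe : ((α₂^1 * β₂^0) * (α₂^1 * β₂^0)) XX = XX := by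
      rw [hgg]; exact AlgEquiv.one_apply _
    simp only [pow_succ, pow_zero, one_mul, mul_one, AlgEquiv.mul_apply,
      AlgEquiv.one_apply, h3x, h3y, map_neg] at hXe
    exact XX_ne_negXX hXe.symm
  · exfalso
    rw [hgeq] at hgg
    have hXe : ((α₂^1 * β₂^1) * (α₂^1 * β₂^1)) XX = XX := by
      rw [hgg]; exact AlgEquiv.one_apply _
    simp only [pow_succ, pow_zero, one_mul, mul_one, AlgEquiv.mul_apply,
      AlgEquiv.one_apply, h3x, h3y, h4x, h4y, map_neg, map_inv₀, inv_negK, neg_neg,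
      inv_inv] at hXe
    exact XX_ne_negXX hXe.symm
  · -- (2,0)
    left
    constructor
    · rw [hgeq]
      simp only [pow_succ, pow_zero, one_mul, mul_one, AlgEquiv.mul_apply,
        AlgEquiv.one_apply, h3x, h3y, map_neg]
    · rw [hgeq]
      simp only [pow_succ, pow_zero, one_mul, mul_one, AlgEquiv.mul_apply,
        AlgEquiv.one_apply, h3x, h3y, map_neg]
  · -- (2,1)
    right; right
    constructor
    · rw [hgeq]
      simp only [pow_succ, pow_zero, one_mul, mul_one, AlgEquiv.mul_apply,
        AlgEquiv.one_apply, h3x, h3y, h4x, h4y, map_neg, map_inv₀, inv_negK, neg_neg,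
        inv_inv]
    · rw [hgeq]
      simp only [pow_succ, pow_zero, one_mul, mul_one, AlgEquiv.mul_apply,
        AlgEquiv.one_apply, h3x, h3y, h4x, h4y, map_neg, map_inv₀, inv_negK, neg_neg,
        inv_inv]
  · -- (3,0)
    exfalso
    rw [hgeq] at hgg
    have hXe : ((α₂^3 * β₂^0) * (α₂^3 * β₂^0)) XX = XX := by
      rw [hgg]; exact AlgEquiv.one_apply _
    simp only [pow_succ, pow_zero, one_mul, mul_one, AlgEquiv.mul_apply,
      AlgEquiv.one_apply, h3x, h3y, map_neg, neg_neg] at hXe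
    exact XX_ne_negXX hXe.symm
  · -- (3,1)
    exfalso
    rw [hgeq] at hgg
    have hXe : ((α₂^3 * β₂^1) * (α₂^3 * β₂^1)) XX = XX := by
      rw [hgg]; exact AlgEquiv.one_apply _
    simp only [pow_succ, pow_zero, one_mul, mul_one, AlgEquiv.mul_apply,
      AlgEquiv.one_apply, h3x, h3y, h4x, h4y, map_neg, map_inv₀, inv_negK, neg_neg,
      inv_inv] at hXe
    exact XX_ne_negXX hXe.symm

end Assemble

lemma aut_inv_apply (ψ : Cr) (x : K2) : (ψ⁻¹ : Cr) x = ψ.symm x := rfl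


end Z4Z2aux

open Z4Z2aux Complex

/-- The groups `G₁ = ⟨(x,y) ↦ (−x, iy), (x,y) ↦ (x⁻¹, y)⟩` and
`G₂ = ⟨(x,y) ↦ (−y, x), (x,y) ↦ (x⁻¹, y⁻¹)⟩` are both isomorphic to `ℤ/4 × ℤ/2` but
are not conjugate in the Cremona group. -/
theorem Z4xZ2_groups_not_conjugate :
    (∃ α₁ β₁ α₂ β₂ : Cr,
      α₁ XX = -XX ∧ α₁ YY = cc Complex.I * YY ∧
      β₁ XX = XX⁻¹ ∧ β₁ YY = YY ∧
      α₂ XX = -YY ∧ α₂ YY = XX ∧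
      β₂ XX = XX⁻¹ ∧ β₂ YY = YY⁻¹) ∧
    ∀ α₁ β₁ α₂ β₂ : Cr,
      α₁ XX = -XX → α₁ YY = cc Complex.I * YY →
      β₁ XX = XX⁻¹ → β₁ YY = YY →
      α₂ XX = -YY → α₂ YY = XX →
      β₂ XX = XX⁻¹ → β₂ YY = YY⁻¹ →
      Nonempty (↥(Subgroup.closure {α₁, β₁}) ≃* Multiplicative (ZMod 4 × ZMod 2)) ∧
      Nonempty (↥(Subgroup.closure {α₂, β₂}) ≃* Multiplicative (ZMod 4 × ZMod 2)) ∧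
      ¬ ∃ ψ : Cr, Subgroup.map (MulAut.conj ψ).toMonoidHom
          (Subgroup.closure {α₁, β₁}) = Subgroup.closure {α₂, β₂} := by
  constructor
  · exact ⟨crα₁, crβ₁, crα₂, crβ₂, crα₁_XX, crα₁_YY, crβ₁_XX, crβ₁_YY, crα₂_XX,
      crα₂_YY, crβ₂_XX, crβ₂_YY⟩
  · intro α₁ β₁ α₂ β₂ h1x h1y h2x h2y h3x h3y h4x h4y
    refine ⟨pkg α₁ β₁ (a1_pow4 h1x h1y) (b1_sq h2x h2y) (comm1 h1x h1y h2x h2y)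
        (hker1 h1x h1y h2x h2y),
      pkg α₂ β₂ (a2_pow4 h3x h3y) (b2_sq h4x h4y) (comm2 h3x h3y h4x h4y)
        (hker2 h3x h3y h4x h4y), ?_⟩
    rintro ⟨ψ, hψ⟩
    have hβsq : β₁ * β₁ = 1 := by
      have h := b1_sq h2x h2y
      rwa [pow_two] at h
    have hαfour : (α₁*α₁) * (α₁*α₁) = 1 := by
      have h := a1_pow4 h1x h1y
      calc (α₁*α₁)*(α₁*α₁) = α₁^4 := by
            rw [pow_succ, pow_succ, pow_succ, pow_one]
            exact (mul_assoc _ _ _).symm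
        _ = 1 := h
    have hAAYY : (α₁*α₁) YY = -YY := by
      have h := Sig_am h1x h1y (MvPolynomial.X 1)
      rw [Smap_X1, map_neg] at h
      exact h
    set b := ψ * β₁ * ψ⁻¹ with hbdef
    set s := ψ * (α₁ * α₁) * ψ⁻¹ with hsdef
    have hbmem : b ∈ Subgroup.closure {α₂, β₂} := by
      have h0 : (MulAut.conj ψ).toMonoidHom β₁ ∈
          Subgroup.map (MulAut.conj ψ).toMonoidHom (Subgroup.closure {α₁, β₁}) :=
        Subgroup.mem_map_of_mem _ (Subgroup.subset_closure (Set.mem_insert_of_mem _ rfl))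
      rw [hψ] at h0
      simpa [MulAut.conj_apply, hbdef] using h0
    have hsmem : s ∈ Subgroup.closure {α₂, β₂} := by
      have h0 : (MulAut.conj ψ).toMonoidHom (α₁ * α₁) ∈
          Subgroup.map (MulAut.conj ψ).toMonoidHom (Subgroup.closure {α₁, β₁}) :=
        Subgroup.mem_map_of_mem _ (mul_mem (Subgroup.subset_closure (Set.mem_insert _ _))
          (Subgroup.subset_closure (Set.mem_insert _ _)))
      rw [hψ] at h0
      simpa [MulAut.conj_apply, hsdef] using h0
    have hbb : b * b = 1 := by
      rw [hbdef]
      calc (ψ*β₁*ψ⁻¹)*(ψ*β₁*ψ⁻¹) = ψ*(β₁*β₁)*ψ⁻¹ := by group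
        _ = 1 := by rw [hβsq, mul_one, mul_inv_cancel]
    have hss : s * s = 1 := by
      rw [hsdef]
      calc (ψ*(α₁*α₁)*ψ⁻¹)*(ψ*(α₁*α₁)*ψ⁻¹) = ψ*((α₁*α₁)*(α₁*α₁))*ψ⁻¹ := by group
        _ = 1 := by rw [hαfour, mul_one, mul_inv_cancel]
    have hbne : b ≠ 1 := by
      intro h
      have h2 : ψ * β₁ * ψ⁻¹ = 1 := by rw [← hbdef]; exact h
      have h3 : β₁ = 1 := by
        have h4 := congrArg (fun g => ψ⁻¹ * g * ψ) h2
        simpa [mul_assoc] using h4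
      have h5 := h2x
      rw [h3, AlgEquiv.one_apply] at h5
      exact XXinv_ne h5.symm
    have hsne : s ≠ 1 := by
      intro h
      have h2 : ψ * (α₁*α₁) * ψ⁻¹ = 1 := by rw [← hsdef]; exact h
      have h3 : α₁*α₁ = 1 := by
        have h4 := congrArg (fun g => ψ⁻¹ * g * ψ) h2
        simpa [mul_assoc] using h4
      have h5 := hAAYY
      rw [h3, AlgEquiv.one_apply] at h5
      exact YY_ne_negYY h5
    set ξ := ψ.symm XX with hξdef
    have hξ0 : ξ ≠ 0 := fun h =>
      XX_ne_zero (by rw [← AlgEquiv.apply_symm_apply ψ XX, ← hξdef, h, map_zero])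
    have hβξ : β₁ ξ = ψ.symm (b XX) := by
      have h2 : b XX = ψ (β₁ ξ) := by
        rw [hbdef, AlgEquiv.mul_apply, AlgEquiv.mul_apply, aut_inv_apply]
      rw [h2, AlgEquiv.symm_apply_apply]
    have hSg : (α₁*α₁) ξ = ψ.symm (s XX) := by
      have h2 : s XX = ψ ((α₁*α₁) ξ) := by
        rw [hsdef, AlgEquiv.mul_apply, AlgEquiv.mul_apply, aut_inv_apply]
      rw [h2, AlgEquiv.symm_apply_apply]
    have hdiag : ∀ (hbs : b = s), False := by
      intro hbs
      have h2 : ψ * β₁ * ψ⁻¹ = ψ * (α₁*α₁) * ψ⁻¹ := by rw [← hbdef, ← hsdef, hbs]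
      have h3 : β₁ = α₁*α₁ := mul_left_cancel (mul_right_cancel h2)
      have h4 := congrArg (fun e : Cr => e YY) h3
      rw [h2y, hAAYY] at h4
      exact YY_ne_negYY h4
    rcases inv_class h3x h3y h4x h4y hbmem hbb hbne with hbI | hbI | hbI <;>
      rcases inv_class h3x h3y h4x h4y hsmem hss hsne with hsI | hsI | hsI
    · exact hdiag (Cr_ext (hbI.1.trans hsI.1.symm) (hbI.2.trans hsI.2.symm))
    · -- b : I₁ (-X), s : I₂ (inv)
      have e1 : β₁ ξ = -ξ := by rw [hβξ, hbI.1, map_neg]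
      have e2 : (α₁*α₁) ξ = ξ⁻¹ := by rw [hSg, hsI.1, map_inv₀]
      exact core h1x h1y h2x h2y ξ hξ0 (Or.inl ⟨e1, e2⟩)
    · -- b : I₁, s : I₃
      have e1 : β₁ ξ = -ξ := by rw [hβξ, hbI.1, map_neg]
      have e2 : (α₁*α₁) ξ = -ξ⁻¹ := by rw [hSg, hsI.1, map_neg, map_inv₀]
      exact core h1x h1y h2x h2y ξ hξ0 (Or.inr (Or.inl ⟨e1, e2⟩))
    · -- b : I₂, s : I₁
      have e1 : β₁ ξ = ξ⁻¹ := by rw [hβξ, hbI.1, map_inv₀]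
      have e2 : (α₁*α₁) ξ = -ξ := by rw [hSg, hsI.1, map_neg]
      exact core h1x h1y h2x h2y ξ hξ0 (Or.inr (Or.inr (Or.inl ⟨e1, e2⟩)))
    · exact hdiag (Cr_ext (hbI.1.trans hsI.1.symm) (hbI.2.trans hsI.2.symm))
    · -- b : I₂, s : I₃
      have e1 : β₁ ξ = ξ⁻¹ := by rw [hβξ, hbI.1, map_inv₀]
      have e2 : (α₁*α₁) ξ = -ξ⁻¹ := by rw [hSg, hsI.1, map_neg, map_inv₀]
      exact core h1x h1y h2x h2y ξ hξ0 (Or.inr (Or.inr (Or.inr (Or.inl ⟨e1, e2⟩))))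
    · -- b : I₃, s : I₁
      have e1 : β₁ ξ = -ξ⁻¹ := by rw [hβξ, hbI.1, map_neg, map_inv₀]
      have e2 : (α₁*α₁) ξ = -ξ := by rw [hSg, hsI.1, map_neg]
      exact core h1x h1y h2x h2y ξ hξ0
        (Or.inr (Or.inr (Or.inr (Or.inr (Or.inl ⟨e1, e2⟩)))))
    · -- b : I₃, s : I₂
      have e1 : β₁ ξ = -ξ⁻¹ := by rw [hβξ, hbI.1, map_neg, map_inv₀]
      have e2 : (α₁*α₁) ξ = ξ⁻¹ := by rw [hSg, hsI.1, map_inv₀]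
      exact core h1x h1y h2x h2y ξ hξ0
        (Or.inr (Or.inr (Or.inr (Or.inr (Or.inr ⟨e1, e2⟩)))))
    · exact hdiag (Cr_ext (hbI.1.trans hsI.1.symm) (hbI.2.trans hsI.2.symm))
end
end

section
/- There exist ℂ-automorphisms a, b, c of ℂ(X,Y) determined by a(X) = −X, a(Y) = Y; b(X) = X, b(Y) = −Y; c(X) = X⁻¹, c(Y) = Y. For any such automorphisms, the subgroups M₁ = ⟨a, c⟩ (the group (x,y) ↦ (±x^{±1}, y)) and M₂ = ⟨a, b⟩ (the group (x,y) ↦ (±x, ±y)) of Cr are both isomorphic to ℤ/2 × ℤ/2, but they are not conjugate in the Cremona group: there is no ψ ∈ Cr with ψM₁ψ⁻¹ = M₂. -/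
set_option maxHeartbeats 1000000
set_option synthInstance.maxHeartbeats 400000

noncomputable section

namespace CremonaAux

open MvPolynomial

abbrev A : Type := MvPolynomial (Fin 2) ℂ
abbrev alg : A →+* K2 := algebraMap A K2

lemma algInj : Function.Injective (alg) := IsFractionRing.injective A K2

lemma XX_ne : XX ≠ 0 := by
  simp [XX, map_eq_zero_iff _ algInj, X_ne_zero]

/-- expansion of `aeval` over `K2`. -/
lemma aeval_expand (u v : K2) (F : A) :
    MvPolynomial.aeval ![u, v] F =
      ∑ m ∈ F.support, cc (F.coeff m) * (u ^ m 0 * v ^ m 1) := by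
  rw [aeval_def, eval₂_eq']
  refine Finset.sum_congr rfl fun m _ => ?_
  rw [Fin.prod_univ_two]
  simp [cc]

lemma alg_eq_aeval (F : A) : alg F = MvPolynomial.aeval ![XX, YY] F := by
  have : (IsScalarTower.toAlgHom ℂ A K2) = MvPolynomial.aeval ![XX, YY] := by
    apply MvPolynomial.algHom_ext
    intro i
    fin_cases i <;> simp [XX, YY]
  exact DFunLike.congr_fun this F

/-- reversal in the first variable -/
def rev (n : ℕ) (F : A) : A :=
  F.support.sum fun m => monomial (Finsupp.update m 0 (n - m 0)) (F.coeff m)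

lemma alg_rev (n : ℕ) (F : A) (h : ∀ m ∈ F.support, m 0 ≤ n) :
    alg (rev n F) = XX ^ n * (MvPolynomial.aeval ![XX⁻¹, YY] F) := by
  rw [rev, map_sum, aeval_expand, Finset.mul_sum]
  refine Finset.sum_congr rfl fun m hm => ?_
  have halgmon : ∀ (e : Fin 2 →₀ ℕ) (c : ℂ),
      alg (monomial e c) = cc c * (XX ^ e 0 * YY ^ e 1) := by
    intro e c
    rw [alg_eq_aeval, aeval_monomial]
    rw [Finsupp.prod_fintype _ _ (fun i => pow_zero _), Fin.prod_univ_two]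
    simp [cc, Algebra.smul_def]
  rw [halgmon]
  have h0 : (Finsupp.update m 0 (n - m 0)) 0 = n - m 0 := by simp
  have h1 : (Finsupp.update m 0 (n - m 0)) 1 = m 1 := by
    rw [Finsupp.coe_update]; simp
  rw [h0, h1]
  have hle := h m hm
  have : XX ^ (n - m 0) = XX ^ n * (XX⁻¹) ^ m 0 := by
    rw [inv_pow, pow_sub₀ _ XX_ne hle]
  rw [this]; ring

lemma rev_eq_zero (n : ℕ) (F : A) (h : ∀ m ∈ F.support, m 0 ≤ n)
    (h0 : rev n F = 0) : F = 0 := by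
  by_contra hF
  obtain ⟨m, hm⟩ := (support_nonempty.mpr hF)
  have hinj : ∀ m' ∈ F.support, ∀ _ : m' ≠ m,
      Finsupp.update m' 0 (n - m' 0) ≠ Finsupp.update m 0 (n - m 0) := by
    intro m' hm' hne heq
    apply hne
    ext i
    by_cases hi : i = 0
    · subst hi
      have e0 : n - m' 0 = n - m 0 := by
        have := DFunLike.congr_fun heq 0
        simpa using this
      have := h m' hm'
      have := h m hm
      omega
    · have := DFunLike.congr_fun heq i
      rw [Finsupp.coe_update, Finsupp.coe_update] at this
      rwa [Function.update_of_ne hi, Function.update_of_ne hi] at this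
  have hcoeff : (rev n F).coeff (Finsupp.update m 0 (n - m 0)) = F.coeff m := by
    rw [rev, MvPolynomial.coeff_sum]
    rw [Finset.sum_eq_single m]
    · simp [coeff_monomial]
    · intro m' hm' hne
      rw [coeff_monomial, if_neg (hinj m' hm' hne)]
    · intro hmm; exact absurd hm hmm
  rw [h0, coeff_zero] at hcoeff
  exact (mem_support_iff.mp hm) hcoeff.symm

end CremonaAux

namespace CremonaAux
open MvPolynomial

lemma phic_inj : Function.Injective (MvPolynomial.aeval (R := ℂ) ![XX⁻¹, YY] : A →ₐ[ℂ] K2) := by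
  rw [injective_iff_map_eq_zero]
  intro F hF
  set n := F.support.sup (fun m => m 0) with hn
  have hb : ∀ m ∈ F.support, m 0 ≤ n := fun m hm => Finset.le_sup (f := fun m => m 0) hm
  have : alg (rev n F) = 0 := by rw [alg_rev n F hb, hF, mul_zero]
  exact rev_eq_zero n F hb (algInj (by simpa using this))

lemma gen_inj (u v : K2) (w : K2 →ₐ[ℂ] K2) (hu : w u = XX) (hv : w v = YY) :
    Function.Injective (MvPolynomial.aeval (R := ℂ) ![u, v] : A →ₐ[ℂ] K2) := by
  have hcomp : (w.comp (MvPolynomial.aeval (R := ℂ) ![u, v])) = IsScalarTower.toAlgHom ℂ A K2 := by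
    apply MvPolynomial.algHom_ext
    intro i
    fin_cases i <;> simp [hu, hv, XX, YY]
  intro p q hpq
  apply algInj
  have : w ((MvPolynomial.aeval (R := ℂ) ![u, v]) p) = w ((MvPolynomial.aeval (R := ℂ) ![u, v]) q) := by rw [hpq]
  rwa [← AlgHom.comp_apply, ← AlgHom.comp_apply, hcomp] at this

/-- build the lift `K2 →ₐ[ℂ] K2` sending `XX ↦ u`, `YY ↦ v`. -/
def liftC (u v : K2) (h : Function.Injective (MvPolynomial.aeval (R := ℂ) ![u, v] : A →ₐ[ℂ] K2)) :
    K2 →ₐ[ℂ] K2 :=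
  IsFractionRing.liftAlgHom (g := MvPolynomial.aeval (R := ℂ) ![u, v]) h

lemma liftC_alg (u v : K2) (h) (F : A) :
    liftC u v h (alg F) = MvPolynomial.aeval (R := ℂ) ![u, v] F := by
  simp only [liftC, IsFractionRing.liftAlgHom_apply]
  exact IsFractionRing.lift_algebraMap (g := (MvPolynomial.aeval (R := ℂ) ![u, v]).toRingHom) h F

lemma liftC_XX (u v : K2) (h) : liftC u v h XX = u := by
  rw [XX, liftC_alg]; simp

lemma liftC_YY (u v : K2) (h) : liftC u v h YY = v := by
  rw [YY, liftC_alg]; simp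

end CremonaAux

namespace CremonaAux
open MvPolynomial

def σa : A →ₐ[ℂ] A := MvPolynomial.aeval ![-(X 0), X 1]
def σb : A →ₐ[ℂ] A := MvPolynomial.aeval ![X 0, -(X 1)]

lemma σa_σa (F : A) : σa (σa F) = F := by
  have : σa.comp σa = AlgHom.id ℂ A := by
    apply MvPolynomial.algHom_ext; intro i; fin_cases i <;> simp [σa]
  calc σa (σa F) = (σa.comp σa) F := rfl
  _ = F := by rw [this]; rfl

lemma σb_σb (F : A) : σb (σb F) = F := by
  have : σb.comp σb = AlgHom.id ℂ A := by
    apply MvPolynomial.algHom_ext; intro i; fin_cases i <;> simp [σb]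
  calc σb (σb F) = (σb.comp σb) F := rfl
  _ = F := by rw [this]; rfl

lemma σa_inj : Function.Injective σa := Function.LeftInverse.injective σa_σa
lemma σb_inj : Function.Injective σb := Function.LeftInverse.injective σb_σb

lemma aInj : Function.Injective (MvPolynomial.aeval (R := ℂ) ![-XX, YY] : A →ₐ[ℂ] K2) := by
  have : (MvPolynomial.aeval (R := ℂ) ![-XX, YY] : A →ₐ[ℂ] K2)
      = (IsScalarTower.toAlgHom ℂ A K2).comp σa := by
    apply MvPolynomial.algHom_ext; intro i; fin_cases i <;> simp [σa, XX, YY]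
  rw [this]
  exact algInj.comp σa_inj

lemma bInj : Function.Injective (MvPolynomial.aeval (R := ℂ) ![XX, -YY] : A →ₐ[ℂ] K2) := by
  have : (MvPolynomial.aeval (R := ℂ) ![XX, -YY] : A →ₐ[ℂ] K2)
      = (IsScalarTower.toAlgHom ℂ A K2).comp σb := by
    apply MvPolynomial.algHom_ext; intro i; fin_cases i <;> simp [σb, XX, YY]
  rw [this]
  exact algInj.comp σb_inj

lemma algHom_ext2' {f g : K2 →ₐ[ℂ] K2} (h1 : f XX = g XX) (h2 : f YY = g YY) : f = g := by
  have key : f.comp (IsScalarTower.toAlgHom ℂ A K2) = g.comp (IsScalarTower.toAlgHom ℂ A K2) := by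
    apply MvPolynomial.algHom_ext
    intro i
    fin_cases i
    · simpa [XX] using h1
    · simpa [YY] using h2
  refine AlgHom.ext fun x => ?_
  obtain ⟨p, q, hq, rfl⟩ := IsFractionRing.div_surjective (A := A) x
  have hp := DFunLike.congr_fun key p
  have hq' := DFunLike.congr_fun key q
  simp only [AlgHom.comp_apply, IsScalarTower.toAlgHom_apply] at hp hq'
  rw [map_div₀, map_div₀, hp, hq']

def aCr : Cr := AlgEquiv.ofAlgHom (liftC (-XX) YY aInj) (liftC (-XX) YY aInj)
  (algHom_ext2' (by simp [liftC_XX]) (by simp [liftC_YY]))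
  (algHom_ext2' (by simp [liftC_XX]) (by simp [liftC_YY]))

def bCr : Cr := AlgEquiv.ofAlgHom (liftC XX (-YY) bInj) (liftC XX (-YY) bInj)
  (algHom_ext2' (by simp [liftC_XX, liftC_YY]) (by simp [liftC_XX, liftC_YY]))
  (algHom_ext2' (by simp [liftC_XX, liftC_YY]) (by simp [liftC_XX, liftC_YY]))

def cCr : Cr := AlgEquiv.ofAlgHom (liftC XX⁻¹ YY phic_inj) (liftC XX⁻¹ YY phic_inj)
  (algHom_ext2' (by simp [liftC_XX, liftC_YY, map_inv₀]) (by simp [liftC_XX, liftC_YY]))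
  (algHom_ext2' (by simp [liftC_XX, liftC_YY, map_inv₀]) (by simp [liftC_XX, liftC_YY]))

lemma exists_abc : ∃ a b c : Cr,
      a XX = -XX ∧ a YY = YY ∧
      b XX = XX ∧ b YY = -YY ∧
      c XX = XX⁻¹ ∧ c YY = YY := by
  refine ⟨aCr, bCr, cCr, ?_, ?_, ?_, ?_, ?_, ?_⟩ <;>
    simp [aCr, bCr, cCr, liftC_XX, liftC_YY]

end CremonaAux

namespace CremonaAux

section Klein
variable {G : Type*} [Group G] (x y : G)
variable (hx : x * x = 1) (hy : y * y = 1) (hxy : x * y = y * x)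

lemma pow_two_cycle (hx : x * x = 1) (n : ℕ) : x ^ n = x ^ (n % 2) := by
  conv_lhs => rw [← Nat.div_add_mod n 2]
  rw [pow_add, pow_mul, pow_two, hx, one_pow, one_mul]

include hx hy hxy in
lemma klein_hom_aux :
    ∃ φ : Multiplicative (ZMod 2 × ZMod 2) →* G,
      (∀ p : ZMod 2 × ZMod 2, φ (Multiplicative.ofAdd p) = x ^ p.1.val * y ^ p.2.val) := by
  have hcomm : Commute x y := hxy
  refine ⟨{ toFun := fun p => x ^ (Multiplicative.toAdd p).1.val * y ^ (Multiplicative.toAdd p).2.val,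
            map_one' := by simp
            map_mul' := ?_ }, fun p => rfl⟩
  intro p q
  have h1 : ∀ m n : ZMod 2, x ^ (m + n).val = x ^ m.val * x ^ n.val := by
    intro m n
    rw [ZMod.val_add, ← pow_add, ← pow_two_cycle x hx]
  have h2 : ∀ m n : ZMod 2, y ^ (m + n).val = y ^ m.val * y ^ n.val := by
    intro m n
    rw [ZMod.val_add, ← pow_add, ← pow_two_cycle y hy]
  have : (Multiplicative.toAdd (p * q)) = Multiplicative.toAdd p + Multiplicative.toAdd q := rfl
  rw [this, Prod.fst_add, Prod.snd_add, h1, h2]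
  have hc : Commute (y ^ (Multiplicative.toAdd p).2.val) (x ^ (Multiplicative.toAdd q).1.val) :=
    (hcomm.symm).pow_pow _ _
  rw [mul_assoc, mul_assoc, ← mul_assoc (y ^ _), hc.eq, mul_assoc]

lemma zmod2_cases : ∀ z : ZMod 2, z = 0 ∨ z = 1 := by decide
lemma zmod2_val0 : (0 : ZMod 2).val = 0 := rfl
lemma zmod2_val1 : (1 : ZMod 2).val = 1 := rfl

include hx hy hxy in
lemma klein_mem_cases {g : G} (hg : g ∈ Subgroup.closure {x, y}) :
    g = 1 ∨ g = x ∨ g = y ∨ g = x * y := by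
  obtain ⟨φ, hφ⟩ := klein_hom_aux x y hx hy hxy
  have hrange : Subgroup.closure {x, y} ≤ φ.range := by
    rw [Subgroup.closure_le]
    rintro z (rfl | rfl)
    · exact ⟨Multiplicative.ofAdd (1, 0), by rw [hφ]; simp [zmod2_val0, zmod2_val1]⟩
    · exact ⟨Multiplicative.ofAdd (0, 1), by rw [hφ]; simp [zmod2_val0, zmod2_val1]⟩
  obtain ⟨p, rfl⟩ := hrange hg
  have hrep : φ p = x ^ ((Multiplicative.toAdd p).1).val * y ^ ((Multiplicative.toAdd p).2).val :=
    hφ (Multiplicative.toAdd p)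
  rcases zmod2_cases (Multiplicative.toAdd p).1 with h1 | h1 <;>
    rcases zmod2_cases (Multiplicative.toAdd p).2 with h2 | h2 <;>
    rw [h1, h2] at hrep <;>
    simp only [zmod2_val0, zmod2_val1, pow_zero, pow_one, one_mul, mul_one] at hrep <;>
    tauto
end Klein

section Klein2
variable {G : Type*} [Group G] {x y : G}

lemma klein_iso (hx : x * x = 1) (hy : y * y = 1) (hxy : x * y = y * x)
    (hx1 : x ≠ 1) (hy1 : y ≠ 1) (hne : x ≠ y) :
    Nonempty (↥(Subgroup.closure {x, y}) ≃* Multiplicative (ZMod 2 × ZMod 2)) := by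
  obtain ⟨φ, hφ⟩ := klein_hom_aux x y hx hy hxy
  have hyinv : y⁻¹ = y := inv_eq_of_mul_eq_one_right hy
  have hinj : Function.Injective φ := by
    rw [injective_iff_map_eq_one]
    intro p hp
    have hrep : φ p = x ^ ((Multiplicative.toAdd p).1).val * y ^ ((Multiplicative.toAdd p).2).val :=
      hφ (Multiplicative.toAdd p)
    rw [hrep] at hp
    have hone : p = Multiplicative.ofAdd ((Multiplicative.toAdd p).1, (Multiplicative.toAdd p).2) := rfl
    rcases zmod2_cases (Multiplicative.toAdd p).1 with h1 | h1 <;>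
      rcases zmod2_cases (Multiplicative.toAdd p).2 with h2 | h2 <;>
      rw [h1, h2] at hp <;>
      simp only [zmod2_val0, zmod2_val1, pow_zero, pow_one, one_mul, mul_one] at hp
    · rw [hone, h1, h2]; rfl
    · exact absurd hp hy1
    · exact absurd hp hx1
    · exact absurd ((eq_inv_of_mul_eq_one_left hp).trans hyinv) hne
  have hrange : φ.range = Subgroup.closure {x, y} := by
    apply le_antisymm
    · rintro z ⟨p, rfl⟩
      have hrep : φ p = x ^ ((Multiplicative.toAdd p).1).val * y ^ ((Multiplicative.toAdd p).2).val :=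
        hφ (Multiplicative.toAdd p)
      rw [hrep]
      have hxm : x ∈ Subgroup.closure {x, y} := Subgroup.subset_closure (by simp)
      have hym : y ∈ Subgroup.closure {x, y} := Subgroup.subset_closure (by simp)
      exact mul_mem (pow_mem hxm _) (pow_mem hym _)
    · rw [Subgroup.closure_le]
      rintro z (rfl | rfl)
      · exact ⟨Multiplicative.ofAdd (1, 0), by rw [hφ]; simp [zmod2_val0, zmod2_val1]⟩
      · exact ⟨Multiplicative.ofAdd (0, 1), by rw [hφ]; simp [zmod2_val0, zmod2_val1]⟩
  refine ⟨((MulEquiv.subgroupCongr hrange.symm).trans ?_)⟩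
  exact (MulEquiv.ofBijective (φ.rangeRestrict)
    ⟨fun a b h => hinj (by simpa using congrArg Subtype.val h), φ.rangeRestrict_surjective⟩).symm

end Klein2
end CremonaAux

namespace CremonaAux
open MvPolynomial

lemma evC (h : A →ₐ[ℂ] A) (x : ℂ) : h (C x) = C x := by
  rw [← MvPolynomial.algebraMap_eq]; exact h.commutes x

lemma Xdvd_sub_ev (i : Fin 2) (ev : A →ₐ[ℂ] A) (hevX : ev (X i) = 0)
    (hevX' : ∀ j, j ≠ i → ev (X j) = X j) :
    ∀ F : A, ev F = 0 → X i ∣ F := by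
  have key : ∀ F : A, X i ∣ (F - ev F) := by
    intro F
    induction F using MvPolynomial.induction_on with
    | C c => simp [evC]
    | add p q hp hq =>
      have : p + q - ev (p + q) = (p - ev p) + (q - ev q) := by rw [map_add]; ring
      rw [this]; exact dvd_add hp hq
    | mul_X p k hp =>
      by_cases hk : k = i
      · subst hk
        have : p * X k - ev (p * X k) = p * X k := by rw [map_mul, hevX, mul_zero, sub_zero]
        rw [this]; exact Dvd.intro_left p rfl
      · have : p * X k - ev (p * X k) = (p - ev p) * X k := by
          rw [map_mul, hevX' k hk]; ring
        rw [this]; exact hp.mul_right _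
  intro F hF
  have := key F
  rwa [hF, sub_zero] at this

lemma polyA (τ ρ : A →ₐ[ℂ] A) (i : Fin 2)
    (hττ : ∀ F, τ (τ F) = F) (hρρ : ∀ F, ρ (ρ F) = F)
    (hτX : τ (X i) = X i) (hρX : ρ (X i) = -(X i))
    (ev : A →ₐ[ℂ] A)
    (hevτ : ∀ F, ev (τ F) = τ (ev F)) (hevρ : ∀ F, ev (ρ F) = ev F)
    (hdvd : ∀ F, ev F = 0 → X i ∣ F)
    (s : ℂ) (hs : s ≠ 0) :
    ∀ (n : ℕ) (F G : A), degreeOf i F ≤ n →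
      τ F * G = -(F * τ G) → F * ρ F = C (s ^ 2) * (G * ρ G) → G = 0 := by
  have hτinj : Function.Injective τ := Function.LeftInverse.injective hττ
  have hρz : ∀ F : A, ρ F = 0 → F = 0 := by
    intro F h
    have := congrArg ρ h
    rwa [hρρ, map_zero] at this
  have hCs : (C (s^2) : A) ≠ 0 := by
    rw [Ne, MvPolynomial.C_eq_zero]; exact pow_ne_zero 2 hs
  have hCs' : (C s : A) ≠ 0 := by rw [Ne, MvPolynomial.C_eq_zero]; exact hs
  have hCC : (C (s^2) : A) = C s * C s := by rw [pow_two, C_mul]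
  intro n
  induction n using Nat.strong_induction_on with
  | _ n IH =>
  intro F G hdeg h1 h2
  by_cases hF : F = 0
  · subst hF
    rw [zero_mul] at h2
    rcases mul_eq_zero.mp ((mul_eq_zero.mp h2.symm).resolve_left hCs) with h | h
    · exact h
    · exact hρz G h
  · by_cases hf : ev F = 0
    · -- strip a factor of X i
      obtain ⟨F₁, hF₁⟩ := hdvd F hf
      have hg : ev G = 0 := by
        have h := congrArg ev h2
        rw [map_mul, map_mul, map_mul, hevρ, hevρ, evC ev, hf, mul_zero] at h
        rcases mul_eq_zero.mp ((mul_eq_zero.mp h.symm).resolve_left hCs) with h' | h'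
        · exact h'
        · exact h'
      obtain ⟨G₁, hG₁⟩ := hdvd G hg
      have hXne : (X i : A) ≠ 0 := X_ne_zero i
      have hF₁ne : F₁ ≠ 0 := by rintro rfl; simp at hF₁; exact hF hF₁
      have h1' : τ F₁ * G₁ = -(F₁ * τ G₁) := by
        apply mul_left_cancel₀ (mul_ne_zero hXne hXne)
        rw [hF₁, hG₁, map_mul, hτX, map_mul, hτX] at h1
        linear_combination h1
      have h2' : F₁ * ρ F₁ = C (s ^ 2) * (G₁ * ρ G₁) := by
        apply mul_left_cancel₀ (neg_ne_zero.mpr (mul_ne_zero hXne hXne))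
        rw [hF₁, hG₁, map_mul, hρX, map_mul, hρX] at h2
        linear_combination h2
      have hdegF : degreeOf i F = degreeOf i F₁ + 1 := by
        rw [hF₁, mul_comm]
        exact (degreeOf_mul_X_eq_degreeOf_add_one_iff i F₁).mpr hF₁ne
      have hlt : degreeOf i F₁ < n := by omega
      have := IH (degreeOf i F₁) hlt F₁ G₁ le_rfl h1' h2'
      rw [hG₁, this, mul_zero]
    · -- final contradiction
      exfalso
      have e2 : ev F * ev F = C (s ^ 2) * (ev G * ev G) := by
        have h := congrArg ev h2
        rwa [map_mul, map_mul, map_mul, hevρ, hevρ, evC ev] at h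
      have e1 : τ (ev F) * ev G = -(ev F * τ (ev G)) := by
        have h := congrArg ev h1
        rwa [map_mul, map_neg, map_mul, hevτ, hevτ] at h
      set f := ev F with hfdef
      set g := ev G with hgdef
      have hfac : (f - C s * g) * (f + C s * g) = 0 := by
        linear_combination e2 + (g*g) * hCC
      have hgz : g * τ g = 0 := by
        rcases mul_eq_zero.mp hfac with h | h
        · have hfg : f = C s * g := by linear_combination h
          have hτf : τ f = C s * τ g := by rw [hfg, map_mul, evC τ]
          rw [hτf, hfg] at e1
          have h2c : (C s : A) * (τ g * g + g * τ g) = 0 := by linear_combination e1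
          rcases mul_eq_zero.mp h2c with h' | h'
          · exact absurd h' hCs'
          · have h2g : (2 : A) * (g * τ g) = 0 := by linear_combination h'
            rcases mul_eq_zero.mp h2g with h'' | h''
            · exact absurd h'' two_ne_zero
            · exact h''
        · have hfg : f = -(C s * g) := by linear_combination h
          have hτf : τ f = -(C s * τ g) := by rw [hfg, map_neg, map_mul, evC τ]
          rw [hτf, hfg] at e1
          have h2c : (C s : A) * (τ g * g + g * τ g) = 0 := by linear_combination -e1
          rcases mul_eq_zero.mp h2c with h' | h'
          · exact absurd h' hCs'
          · have h2g : (2 : A) * (g * τ g) = 0 := by linear_combination h'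
            rcases mul_eq_zero.mp h2g with h'' | h''
            · exact absurd h'' two_ne_zero
            · exact h''
      rcases mul_eq_zero.mp hgz with h | h
      · rw [h, mul_zero, mul_zero] at e2
        exact hf (mul_self_eq_zero.mp e2)
      · have hg0 : g = 0 := by
          have := congrArg τ h
          rwa [hττ, map_zero] at this
        rw [hg0, mul_zero, mul_zero] at e2
        exact hf (mul_self_eq_zero.mp e2)

end CremonaAux

namespace CremonaAux
open MvPolynomial

lemma polyB (τ ρ : A →ₐ[ℂ] A) (i : Fin 2)
    (hττ : ∀ F, τ (τ F) = F) (hρρ : ∀ F, ρ (ρ F) = F)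
    (hτX : τ (X i) = -(X i)) (hρX : ρ (X i) = X i)
    (ev : A →ₐ[ℂ] A)
    (hevτ : ∀ F, ev (τ F) = ev F) (hevρ : ∀ F, ev (ρ F) = ρ (ev F))
    (hdvd : ∀ F, ev F = 0 → X i ∣ F)
    (s₁ s₂ : ℂ) (hs1 : s₁ ≠ 0) (hne : s₁ ^ 2 ≠ s₂ ^ 2) :
    ∀ (n : ℕ) (F G : A), degreeOf i F ≤ n →
      F * τ F = C (s₁ ^ 2) * (G * τ G) → F * ρ F = C (s₂ ^ 2) * (G * ρ G) → G = 0 := by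
  have hτz : ∀ F : A, τ F = 0 → F = 0 := by
    intro F h; have := congrArg τ h; rwa [hττ, map_zero] at this
  have hρz : ∀ F : A, ρ F = 0 → F = 0 := by
    intro F h; have := congrArg ρ h; rwa [hρρ, map_zero] at this
  have hCs : (C (s₁^2) : A) ≠ 0 := by
    rw [Ne, MvPolynomial.C_eq_zero]; exact pow_ne_zero 2 hs1
  have hCs1 : (C s₁ : A) ≠ 0 := by rw [Ne, MvPolynomial.C_eq_zero]; exact hs1
  have hCC : (C (s₁^2) : A) = C s₁ * C s₁ := by rw [pow_two, C_mul]
  have hCdiff : (C (s₁^2) : A) - C (s₂^2) ≠ 0 := by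
    rw [← C_sub, Ne, MvPolynomial.C_eq_zero, sub_eq_zero]; exact hne
  intro n
  induction n using Nat.strong_induction_on with
  | _ n IH =>
  intro F G hdeg h1 h2
  by_cases hF : F = 0
  · subst hF
    rw [zero_mul] at h1
    rcases mul_eq_zero.mp ((mul_eq_zero.mp h1.symm).resolve_left hCs) with h | h
    · exact h
    · exact hτz G h
  · by_cases hf : ev F = 0
    · obtain ⟨F₁, hF₁⟩ := hdvd F hf
      have hg : ev G = 0 := by
        have h := congrArg ev h1
        rw [map_mul, map_mul, map_mul, hevτ, hevτ, evC ev, hf, mul_zero] at h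
        rcases mul_eq_zero.mp ((mul_eq_zero.mp h.symm).resolve_left hCs) with h' | h'
        · exact h'
        · exact h'
      obtain ⟨G₁, hG₁⟩ := hdvd G hg
      have hXne : (X i : A) ≠ 0 := X_ne_zero i
      have hF₁ne : F₁ ≠ 0 := by rintro rfl; simp at hF₁; exact hF hF₁
      have h1' : F₁ * τ F₁ = C (s₁ ^ 2) * (G₁ * τ G₁) := by
        apply mul_left_cancel₀ (neg_ne_zero.mpr (mul_ne_zero hXne hXne))
        rw [hF₁, hG₁, map_mul, hτX, map_mul, hτX] at h1
        linear_combination h1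
      have h2' : F₁ * ρ F₁ = C (s₂ ^ 2) * (G₁ * ρ G₁) := by
        apply mul_left_cancel₀ (mul_ne_zero hXne hXne)
        rw [hF₁, hG₁, map_mul, hρX, map_mul, hρX] at h2
        linear_combination h2
      have hdegF : degreeOf i F = degreeOf i F₁ + 1 := by
        rw [hF₁, mul_comm]
        exact (degreeOf_mul_X_eq_degreeOf_add_one_iff i F₁).mpr hF₁ne
      have hlt : degreeOf i F₁ < n := by omega
      have := IH (degreeOf i F₁) hlt F₁ G₁ le_rfl h1' h2'
      rw [hG₁, this, mul_zero]
    · exfalso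
      have e1 : ev F * ev F = C (s₁ ^ 2) * (ev G * ev G) := by
        have h := congrArg ev h1
        rwa [map_mul, map_mul, map_mul, hevτ, hevτ, evC ev] at h
      have e2 : ev F * ρ (ev F) = C (s₂ ^ 2) * (ev G * ρ (ev G)) := by
        have h := congrArg ev h2
        rwa [map_mul, map_mul, map_mul, hevρ, hevρ, evC ev] at h
      set f := ev F with hfdef
      set g := ev G with hgdef
      have hfac : (f - C s₁ * g) * (f + C s₁ * g) = 0 := by
        linear_combination e1 + (g*g) * hCC
      have hgz : g * ρ g = 0 := by
        rcases mul_eq_zero.mp hfac with h | h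
        · have hfg : f = C s₁ * g := by linear_combination h
          have hρf : ρ f = C s₁ * ρ g := by rw [hfg, map_mul, evC ρ]
          rw [hρf, hfg] at e2
          have hd : (C (s₁^2) - C (s₂^2) : A) * (g * ρ g) = 0 := by
            linear_combination e2 + (g * ρ g) * hCC
          exact (mul_eq_zero.mp hd).resolve_left hCdiff
        · have hfg : f = -(C s₁ * g) := by linear_combination h
          have hρf : ρ f = -(C s₁ * ρ g) := by rw [hfg, map_neg, map_mul, evC ρ]
          rw [hρf, hfg] at e2
          have hd : (C (s₁^2) - C (s₂^2) : A) * (g * ρ g) = 0 := by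
            linear_combination e2 + (g * ρ g) * hCC
          exact (mul_eq_zero.mp hd).resolve_left hCdiff
      rcases mul_eq_zero.mp hgz with h | h
      · rw [h, mul_zero, mul_zero] at e1
        exact hf (mul_self_eq_zero.mp e1)
      · have hg0 : g = 0 := hρz g h
        rw [hg0, mul_zero, mul_zero] at e1
        exact hf (mul_self_eq_zero.mp e1)

end CremonaAux

namespace CremonaAux
open MvPolynomial

def e0 : A →ₐ[ℂ] A := MvPolynomial.aeval ![0, X 1]
def f1 : A →ₐ[ℂ] A := MvPolynomial.aeval ![X 0, 0]

lemma hom_eq (u v : A →ₐ[ℂ] A) (h0 : u (X 0) = v (X 0)) (h1 : u (X 1) = v (X 1)) :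
    ∀ F, u F = v F := by
  have : u = v := by
    apply MvPolynomial.algHom_ext; intro i; fin_cases i
    · exact h0
    · exact h1
  exact fun F => congrFun (congrArg _ this) F

lemma f1_σa : ∀ F, f1 (σa F) = σa (f1 F) :=
  hom_eq (f1.comp σa) (σa.comp f1) (by simp [f1, σa]) (by simp [f1, σa])
lemma f1_σb : ∀ F, f1 (σb F) = f1 F :=
  hom_eq (f1.comp σb) f1 (by simp [f1, σb]) (by simp [f1, σb])
lemma e0_σb : ∀ F, e0 (σb F) = σb (e0 F) :=
  hom_eq (e0.comp σb) (σb.comp e0) (by simp [e0, σb]) (by simp [e0, σb])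
lemma e0_σa : ∀ F, e0 (σa F) = e0 F :=
  hom_eq (e0.comp σa) e0 (by simp [e0, σa]) (by simp [e0, σa])

lemma f1_dvd : ∀ F : A, f1 F = 0 → X 1 ∣ F := by
  apply Xdvd_sub_ev
  · simp [f1]
  · intro j hj
    fin_cases j
    · simp [f1]
    · simp at hj
lemma e0_dvd : ∀ F : A, e0 F = 0 → X 0 ∣ F := by
  apply Xdvd_sub_ev
  · simp [e0]
  · intro j hj
    fin_cases j
    · simp at hj
    · simp [e0]

lemma σa_X0 : σa (X 0) = -(X 0) := by simp [σa]
lemma σa_X1 : σa (X 1) = X 1 := by simp [σa]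
lemma σb_X0 : σb (X 0) = X 0 := by simp [σb]
lemma σb_X1 : σb (X 1) = -(X 1) := by simp [σb]

/-- polynomial impossibility, shape A : `σa F * G = -(F * σa G)`, `F σb F = s² G σb G` -/
lemma polyA1 (s : ℂ) (hs : s ≠ 0) (F G : A)
    (h1 : σa F * G = -(F * σa G)) (h2 : F * σb F = C (s ^ 2) * (G * σb G)) : G = 0 :=
  polyA σa σb 1 σa_σa σb_σb σa_X1 σb_X1 f1 f1_σa f1_σb f1_dvd s hs (degreeOf 1 F) F G le_rfl h1 h2

lemma polyA2 (s : ℂ) (hs : s ≠ 0) (F G : A)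
    (h1 : σb F * G = -(F * σb G)) (h2 : F * σa F = C (s ^ 2) * (G * σa G)) : G = 0 :=
  polyA σb σa 0 σb_σb σa_σa σb_X0 σa_X0 e0 e0_σb e0_σa e0_dvd s hs (degreeOf 0 F) F G le_rfl h1 h2

lemma polyB1 (s₁ s₂ : ℂ) (hs1 : s₁ ≠ 0) (hne : s₁ ^ 2 ≠ s₂ ^ 2) (F G : A)
    (h1 : F * σa F = C (s₁ ^ 2) * (G * σa G)) (h2 : F * σb F = C (s₂ ^ 2) * (G * σb G)) : G = 0 :=
  polyB σa σb 0 σa_σa σb_σb σa_X0 σb_X0 e0 e0_σa e0_σb e0_dvd s₁ s₂ hs1 hne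
    (degreeOf 0 F) F G le_rfl h1 h2

end CremonaAux

namespace CremonaAux
open MvPolynomial

lemma div_rel1 {p q r t : K2} (hq : q ≠ 0) (ht : t ≠ 0) (h : p / q = -(r / t)) :
    p * t = -(r * q) := by
  have h2 : p / q * q * t = -(r / t * t * q) := by rw [mul_assoc, h]; ring
  rw [div_mul_cancel₀ p hq, div_mul_cancel₀ r ht] at h2
  exact h2

lemma div_rel2 {p q r t u : K2} (hq : q ≠ 0) (ht : t ≠ 0) (h : (p / q) * (r / t) = u) :
    p * r = u * (q * t) := by
  have h2 : (p / q * q) * (r / t * t) = u * (q * t) := by rw [← h]; ring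
  rw [div_mul_cancel₀ p hq, div_mul_cancel₀ r ht] at h2
  exact h2

lemma ccAlg (x : ℂ) : algebraMap ℂ K2 x = alg (C x) := by
  rw [← MvPolynomial.algebraMap_eq, ← IsScalarTower.algebraMap_apply ℂ A K2]

lemma aAlg (a : Cr) (ha1 : a XX = -XX) (ha2 : a YY = YY) : ∀ F, a (alg F) = alg (σa F) := by
  have h : (a : K2 →ₐ[ℂ] K2).comp (IsScalarTower.toAlgHom ℂ A K2)
      = (IsScalarTower.toAlgHom ℂ A K2).comp σa := by
    apply MvPolynomial.algHom_ext; intro i; fin_cases i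
    · show a (alg (X 0)) = alg (σa (X 0))
      rw [σa_X0, map_neg]
      exact ha1
    · show a (alg (X 1)) = alg (σa (X 1))
      rw [σa_X1]
      exact ha2
  intro F
  exact DFunLike.congr_fun h F

lemma bAlg (b : Cr) (hb1 : b XX = XX) (hb2 : b YY = -YY) : ∀ F, b (alg F) = alg (σb F) := by
  have h : (b : K2 →ₐ[ℂ] K2).comp (IsScalarTower.toAlgHom ℂ A K2)
      = (IsScalarTower.toAlgHom ℂ A K2).comp σb := by
    apply MvPolynomial.algHom_ext; intro i; fin_cases i
    · show b (alg (X 0)) = alg (σb (X 0))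
      rw [σb_X0]
      exact hb1
    · show b (alg (X 1)) = alg (σb (X 1))
      rw [σb_X1, map_neg]
      exact hb2
  intro F
  exact DFunLike.congr_fun h F

section False
variable (a b : Cr) (ha1 : a XX = -XX) (ha2 : a YY = YY) (hb1 : b XX = XX) (hb2 : b YY = -YY)

include ha1 ha2 hb1 hb2 in
lemma falseA (s : ℂ) (hs : s ≠ 0) (R : K2)
    (h1 : a R = -R) (h2 : R * b R = algebraMap ℂ K2 (s ^ 2)) : False := by
  obtain ⟨F, G, hG, rfl⟩ := IsFractionRing.div_surjective (A := A) R
  have hGne : G ≠ 0 := nonZeroDivisors.ne_zero hG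
  have hGK : alg G ≠ 0 := fun h => hGne (algInj (by simpa using h))
  have hσaG : alg (σa G) ≠ 0 := fun h => hGne (σa_inj (by simpa using algInj (by simpa using h) : σa G = σa 0))
  have hσbG : alg (σb G) ≠ 0 := fun h => hGne (σb_inj (by simpa using algInj (by simpa using h) : σb G = σb 0))
  rw [map_div₀, aAlg a ha1 ha2, aAlg a ha1 ha2] at h1
  have e1 : alg (σa F) * alg G = -(alg F * alg (σa G)) := div_rel1 hσaG hGK h1
  have h1' : σa F * G = -(F * σa G) := by
    apply algInj
    rw [map_mul, map_neg, map_mul]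
    linear_combination e1
  rw [map_div₀, bAlg b hb1 hb2, bAlg b hb1 hb2, ccAlg] at h2
  have e2 : alg F * alg (σb F) = alg (C (s ^ 2)) * (alg G * alg (σb G)) :=
    div_rel2 hGK hσbG h2
  have h2' : F * σb F = C (s ^ 2) * (G * σb G) := by
    apply algInj
    rw [map_mul, map_mul, map_mul]
    exact e2
  exact hGne (polyA1 s hs F G h1' h2')

include ha1 ha2 hb1 hb2 in
lemma falseB (s : ℂ) (hs : s ≠ 0) (R : K2)
    (h1 : b R = -R) (h2 : R * a R = algebraMap ℂ K2 (s ^ 2)) : False := by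
  obtain ⟨F, G, hG, rfl⟩ := IsFractionRing.div_surjective (A := A) R
  have hGne : G ≠ 0 := nonZeroDivisors.ne_zero hG
  have hGK : alg G ≠ 0 := fun h => hGne (algInj (by simpa using h))
  have hσaG : alg (σa G) ≠ 0 := fun h => hGne (σa_inj (by simpa using algInj (by simpa using h) : σa G = σa 0))
  have hσbG : alg (σb G) ≠ 0 := fun h => hGne (σb_inj (by simpa using algInj (by simpa using h) : σb G = σb 0))
  rw [map_div₀, bAlg b hb1 hb2, bAlg b hb1 hb2] at h1
  have e1 : alg (σb F) * alg G = -(alg F * alg (σb G)) := div_rel1 hσbG hGK h1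
  have h1' : σb F * G = -(F * σb G) := by
    apply algInj
    rw [map_mul, map_neg, map_mul]
    linear_combination e1
  rw [map_div₀, aAlg a ha1 ha2, aAlg a ha1 ha2, ccAlg] at h2
  have e2 : alg F * alg (σa F) = alg (C (s ^ 2)) * (alg G * alg (σa G)) :=
    div_rel2 hGK hσaG h2
  have h2' : F * σa F = C (s ^ 2) * (G * σa G) := by
    apply algInj
    rw [map_mul, map_mul, map_mul]
    exact e2
  exact hGne (polyA2 s hs F G h1' h2')

include ha1 ha2 hb1 hb2 in
lemma falseC (s₁ s₂ : ℂ) (hs1 : s₁ ≠ 0) (hne : s₁ ^ 2 ≠ s₂ ^ 2) (R : K2)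
    (h1 : R * a R = algebraMap ℂ K2 (s₁ ^ 2)) (h2 : R * b R = algebraMap ℂ K2 (s₂ ^ 2)) : False := by
  obtain ⟨F, G, hG, rfl⟩ := IsFractionRing.div_surjective (A := A) R
  have hGne : G ≠ 0 := nonZeroDivisors.ne_zero hG
  have hGK : alg G ≠ 0 := fun h => hGne (algInj (by simpa using h))
  have hσaG : alg (σa G) ≠ 0 := fun h => hGne (σa_inj (by simpa using algInj (by simpa using h) : σa G = σa 0))
  have hσbG : alg (σb G) ≠ 0 := fun h => hGne (σb_inj (by simpa using algInj (by simpa using h) : σb G = σb 0))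
  rw [map_div₀, aAlg a ha1 ha2, aAlg a ha1 ha2, ccAlg] at h1
  have e1 : alg F * alg (σa F) = alg (C (s₁ ^ 2)) * (alg G * alg (σa G)) :=
    div_rel2 hGK hσaG h1
  have h1' : F * σa F = C (s₁ ^ 2) * (G * σa G) := by
    apply algInj
    rw [map_mul, map_mul, map_mul]
    exact e1
  rw [map_div₀, bAlg b hb1 hb2, bAlg b hb1 hb2, ccAlg] at h2
  have e2 : alg F * alg (σb F) = alg (C (s₂ ^ 2)) * (alg G * alg (σb G)) :=
    div_rel2 hGK hσbG h2
  have h2' : F * σb F = C (s₂ ^ 2) * (G * σb G) := by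
    apply algInj
    rw [map_mul, map_mul, map_mul]
    exact e2
  exact hGne (polyB1 s₁ s₂ hs1 hne F G h1' h2')

end False
end CremonaAux

namespace CremonaAux
open MvPolynomial

lemma crExt {f g : Cr} (h1 : f XX = g XX) (h2 : f YY = g YY) : f = g := by
  have := algHom_ext2' (f := (f : K2 →ₐ[ℂ] K2)) (g := (g : K2 →ₐ[ℂ] K2)) h1 h2
  exact AlgEquiv.ext fun x => DFunLike.congr_fun this x

lemma poly_ne0 (F : A) (h : MvPolynomial.eval (fun _ => (0:ℂ)) F ≠ 0) : F ≠ 0 := by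
  rintro rfl; simp at h

lemma algK_ne (F : A) (h : F ≠ 0) : alg F ≠ 0 :=
  fun hh => h (algInj (by simpa using hh))

lemma YY_ne : YY ≠ 0 := by
  simp [YY, map_eq_zero_iff _ algInj, X_ne_zero]

instance : CharZero K2 :=
  charZero_of_injective_algebraMap ((algebraMap ℂ K2).injective)

lemma XXsq_add_one : XX ^ 2 + 1 ≠ 0 := by
  have h : XX ^ 2 + 1 = alg (X 0 ^ 2 + 1) := by
    rw [map_add, map_pow, map_one, XX]
  rw [h]
  exact algK_ne _ (poly_ne0 _ (by simp))

lemma XXsq_sub_one : XX ^ 2 - 1 ≠ 0 := by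
  have h : XX ^ 2 - 1 = alg (X 0 ^ 2 - 1) := by
    rw [map_sub, map_pow, map_one, XX]
  rw [h]
  exact algK_ne _ (poly_ne0 _ (by simp))

section Main
variable (a b c : Cr)
variable (ha1 : a XX = -XX) (ha2 : a YY = YY)
variable (hb1 : b XX = XX) (hb2 : b YY = -YY)
variable (hc1 : c XX = XX⁻¹) (hc2 : c YY = YY)

include ha1 ha2 in
lemma haa : a * a = 1 := by
  apply crExt <;> rw [AlgEquiv.mul_apply, AlgEquiv.one_apply]
  · rw [ha1, map_neg, ha1, neg_neg]
  · rw [ha2, ha2]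

include hb1 hb2 in
lemma hbb : b * b = 1 := by
  apply crExt <;> rw [AlgEquiv.mul_apply, AlgEquiv.one_apply]
  · rw [hb1, hb1]
  · rw [hb2, map_neg, hb2, neg_neg]

include hc1 hc2 in
lemma hcc : c * c = 1 := by
  apply crExt <;> rw [AlgEquiv.mul_apply, AlgEquiv.one_apply]
  · rw [hc1, map_inv₀, hc1, inv_inv]
  · rw [hc2, hc2]

include ha1 ha2 hb1 hb2 in
lemma hab_comm : a * b = b * a := by
  apply crExt <;> rw [AlgEquiv.mul_apply, AlgEquiv.mul_apply]
  · rw [hb1, ha1, map_neg, hb1]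
  · rw [hb2, map_neg, ha2, hb2]

include ha1 ha2 hc1 hc2 in
lemma hac_comm : a * c = c * a := by
  apply crExt <;> rw [AlgEquiv.mul_apply, AlgEquiv.mul_apply]
  · rw [hc1, map_inv₀, ha1, map_neg, hc1]; exact inv_neg (a := XX)
  · rw [hc2, ha2, hc2]

include ha1 in
lemma ha_ne_one : a ≠ 1 := by
  intro h
  rw [h, AlgEquiv.one_apply] at ha1
  have h2 : (2 : K2) * XX = 0 := by linear_combination ha1
  rcases mul_eq_zero.mp h2 with h' | h'
  · exact two_ne_zero h'
  · exact XX_ne h'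

include hb2 in
lemma hb_ne_one : b ≠ 1 := by
  intro h
  rw [h, AlgEquiv.one_apply] at hb2
  have h2 : (2 : K2) * YY = 0 := by linear_combination hb2
  rcases mul_eq_zero.mp h2 with h' | h'
  · exact two_ne_zero h'
  · exact YY_ne h'

include hc1 in
lemma hc_ne_one : c ≠ 1 := by
  intro h
  rw [h, AlgEquiv.one_apply] at hc1
  apply XXsq_sub_one
  have h2 : XX * XX = XX * XX⁻¹ := by rw [← hc1]
  rw [mul_inv_cancel₀ XX_ne] at h2
  linear_combination h2

include ha1 hb1 in
lemma ha_ne_b : a ≠ b := by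
  intro h
  rw [h, hb1] at ha1
  have h2 : (2 : K2) * XX = 0 := by linear_combination ha1
  rcases mul_eq_zero.mp h2 with h' | h'
  · exact two_ne_zero h'
  · exact XX_ne h'

include ha1 hc1 in
lemma ha_ne_c : a ≠ c := by
  intro h
  rw [h, hc1] at ha1
  apply XXsq_add_one
  have h2 : XX * XX⁻¹ = XX * (-XX) := by rw [ha1]
  rw [mul_inv_cancel₀ XX_ne] at h2
  linear_combination h2

end Main
end CremonaAux

namespace CremonaAux
open MvPolynomial

section NotConj
variable (a b c : Cr)
variable (ha1 : a XX = -XX) (ha2 : a YY = YY)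
variable (hb1 : b XX = XX) (hb2 : b YY = -YY)
variable (hc1 : c XX = XX⁻¹) (hc2 : c YY = YY)

include ha1 ha2 hb1 hb2 hc1 hc2 in
lemma not_conj : ¬ ∃ ψ : Cr, Subgroup.map (MulAut.conj ψ).toMonoidHom
    (Subgroup.closure {a, c}) = Subgroup.closure {a, b} := by
  rintro ⟨ψ, hmap⟩
  have haa' := haa a ha1 ha2
  have hbb' := hbb b hb1 hb2
  have habc := hab_comm a b ha1 ha2 hb1 hb2
  -- conjugates are in the Klein group ⟨a,b⟩
  have hαmem : ψ * a * ψ⁻¹ ∈ Subgroup.closure ({a, b} : Set Cr) := by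
    rw [← hmap]
    exact ⟨a, Subgroup.subset_closure (by simp), by simp [MulAut.conj_apply]⟩
  have hγmem : ψ * c * ψ⁻¹ ∈ Subgroup.closure ({a, b} : Set Cr) := by
    rw [← hmap]
    exact ⟨c, Subgroup.subset_closure (by simp), by simp [MulAut.conj_apply]⟩
  -- nondegeneracy
  have hα1 : ψ * a * ψ⁻¹ ≠ 1 := by
    intro h
    apply ha_ne_one a ha1
    have h' : a = ψ⁻¹ * (ψ * a * ψ⁻¹) * ψ := by group
    rw [h, mul_one] at h'
    rw [h']; group
  have hγ1 : ψ * c * ψ⁻¹ ≠ 1 := by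
    intro h
    apply hc_ne_one c hc1
    have h' : c = ψ⁻¹ * (ψ * c * ψ⁻¹) * ψ := by group
    rw [h, mul_one] at h'
    rw [h']; group
  have hαγ : ψ * a * ψ⁻¹ ≠ ψ * c * ψ⁻¹ := by
    intro h
    exact ha_ne_c a c ha1 hc1 (mul_left_cancel (mul_right_cancel h))
  -- the key elements
  set P : K2 := ψ (XX + XX⁻¹) with hPdef
  set Q : K2 := ψ (XX - XX⁻¹) with hQdef
  have hinv : ∀ x : K2, (ψ⁻¹ : Cr) (ψ x) = x := fun x => ψ.symm_apply_apply x
  have hαP : (ψ * a * ψ⁻¹) P = -P := by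
    rw [AlgEquiv.mul_apply, AlgEquiv.mul_apply, hPdef, hinv]
    have h' : a (XX + XX⁻¹) = -(XX + XX⁻¹) := by
      rw [map_add, map_inv₀, ha1, inv_neg (a := XX)]; ring
    rw [h', map_neg]
  have hαQ : (ψ * a * ψ⁻¹) Q = -Q := by
    rw [AlgEquiv.mul_apply, AlgEquiv.mul_apply, hQdef, hinv]
    have h' : a (XX - XX⁻¹) = -(XX - XX⁻¹) := by
      rw [map_sub, map_inv₀, ha1, inv_neg (a := XX)]; ring
    rw [h', map_neg]
  have hγP : (ψ * c * ψ⁻¹) P = P := by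
    rw [AlgEquiv.mul_apply, AlgEquiv.mul_apply, hPdef, hinv]
    have h' : c (XX + XX⁻¹) = XX + XX⁻¹ := by
      rw [map_add, map_inv₀, hc1, inv_inv]; ring
    rw [h']
  have hγQ : (ψ * c * ψ⁻¹) Q = -Q := by
    rw [AlgEquiv.mul_apply, AlgEquiv.mul_apply, hQdef, hinv]
    have h' : c (XX - XX⁻¹) = -(XX - XX⁻¹) := by
      rw [map_sub, map_inv₀, hc1, inv_inv]; ring
    rw [h', map_neg]
  have hPQ : P ^ 2 - Q ^ 2 = (4 : K2) := by
    have hxx : XX * XX⁻¹ = 1 := mul_inv_cancel₀ XX_ne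
    have hin : (XX + XX⁻¹) ^ 2 - (XX - XX⁻¹) ^ 2 = (4 : K2) := by
      linear_combination (4 : K2) * hxx
    calc P ^ 2 - Q ^ 2 = ψ ((XX + XX⁻¹) ^ 2 - (XX - XX⁻¹) ^ 2) := by
          rw [map_sub, map_pow, map_pow]
      _ = (4 : K2) := by rw [hin, map_ofNat]
  -- numerics
  have h4 : ((2:ℂ)) ^ 2 = (4:ℂ) := by norm_num
  have hm4 : ((2 * Complex.I)) ^ 2 = (-4:ℂ) := by
    rw [mul_pow, Complex.I_sq]; norm_num
  have h2I : (2 * Complex.I : ℂ) ≠ 0 := mul_ne_zero two_ne_zero Complex.I_ne_zero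
  have hne44 : ((2:ℂ)) ^ 2 ≠ ((2 * Complex.I)) ^ 2 := by rw [h4, hm4]; norm_num
  have hne44' : ((2 * Complex.I)) ^ 2 ≠ ((2:ℂ)) ^ 2 := by rw [h4, hm4]; norm_num
  -- case analysis
  have hb_eq : b = a * (a * b) := by rw [← mul_assoc, haa', one_mul]
  have ha_eq : a = b * (a * b) := by rw [habc, ← mul_assoc, hbb', one_mul]
  rcases klein_mem_cases a b haa' hbb' habc hαmem with hA | hA | hA | hA
  · exact hα1 hA
  all_goals rcases klein_mem_cases a b haa' hbb' habc hγmem with hC | hC | hC | hC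
  · exact hγ1 hC
  · exact hαγ (hA.trans hC.symm)
  · -- α = a, γ = b : P is (-,+)-type? no: aP=-P, bP = P ; Q : aQ=-Q, bQ=-Q
    rw [hA] at hαP hαQ
    rw [hC] at hγP hγQ
    refine falseA a b ha1 ha2 hb1 hb2 2 two_ne_zero (P + Q) ?_ ?_
    · rw [map_add, hαP, hαQ]; ring
    · rw [map_add, hγP, hγQ, h4, map_ofNat]
      linear_combination hPQ
  · -- α = a, γ = a*b
    rw [hA] at hαP hαQ
    rw [hC] at hγP hγQ
    have hbP : b P = -P := by
      have : b P = a ((a * b) P) := by conv_lhs => rw [hb_eq, AlgEquiv.mul_apply]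
      rw [this, hγP, hαP]
    have hbQ : b Q = Q := by
      have : b Q = a ((a * b) Q) := by conv_lhs => rw [hb_eq, AlgEquiv.mul_apply]
      rw [this, hγQ, map_neg, hαQ, neg_neg]
    refine falseA a b ha1 ha2 hb1 hb2 (2 * Complex.I) h2I (P + Q) ?_ ?_
    · rw [map_add, hαP, hαQ]; ring
    · rw [map_add, hbP, hbQ, hm4, map_neg, map_ofNat]
      linear_combination -hPQ
  all_goals clear hα1
  · exact hγ1 hC
  · -- α = b, γ = a
    rw [hA] at hαP hαQ
    rw [hC] at hγP hγQ
    refine falseB a b ha1 ha2 hb1 hb2 2 two_ne_zero (P + Q) ?_ ?_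
    · rw [map_add, hαP, hαQ]; ring
    · rw [map_add, hγP, hγQ, h4, map_ofNat]
      linear_combination hPQ
  · exact hαγ (hA.trans hC.symm)
  · -- α = b, γ = a*b
    rw [hA] at hαP hαQ
    rw [hC] at hγP hγQ
    have haP : a P = -P := by
      have : a P = b ((a * b) P) := by conv_lhs => rw [ha_eq, AlgEquiv.mul_apply]
      rw [this, hγP, hαP]
    have haQ : a Q = Q := by
      have : a Q = b ((a * b) Q) := by conv_lhs => rw [ha_eq, AlgEquiv.mul_apply]
      rw [this, hγQ, map_neg, hαQ, neg_neg]
    refine falseB a b ha1 ha2 hb1 hb2 (2 * Complex.I) h2I (P + Q) ?_ ?_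
    · rw [map_add, hαP, hαQ]; ring
    · rw [map_add, haP, haQ, hm4, map_neg, map_ofNat]
      linear_combination -hPQ
  · exact hγ1 hC
  · -- α = a*b, γ = a
    rw [hA] at hαP hαQ
    rw [hC] at hγP hγQ
    have hbP : b P = -P := by
      have : b P = a ((a * b) P) := by conv_lhs => rw [hb_eq, AlgEquiv.mul_apply]
      rw [this, hαP, map_neg, hγP]
    have hbQ : b Q = Q := by
      have : b Q = a ((a * b) Q) := by conv_lhs => rw [hb_eq, AlgEquiv.mul_apply]
      rw [this, hαQ, map_neg, hγQ, neg_neg]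
    refine falseC a b ha1 ha2 hb1 hb2 2 (2 * Complex.I) two_ne_zero hne44 (P + Q) ?_ ?_
    · rw [map_add, hγP, hγQ, h4, map_ofNat]
      linear_combination hPQ
    · rw [map_add, hbP, hbQ, hm4, map_neg, map_ofNat]
      linear_combination -hPQ
  · -- α = a*b, γ = b
    rw [hA] at hαP hαQ
    rw [hC] at hγP hγQ
    have haP : a P = -P := by
      have : a P = b ((a * b) P) := by conv_lhs => rw [ha_eq, AlgEquiv.mul_apply]
      rw [this, hαP, map_neg, hγP]
    have haQ : a Q = Q := by
      have : a Q = b ((a * b) Q) := by conv_lhs => rw [ha_eq, AlgEquiv.mul_apply]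
      rw [this, hαQ, map_neg, hγQ, neg_neg]
    refine falseC a b ha1 ha2 hb1 hb2 (2 * Complex.I) 2 h2I hne44' (P + Q) ?_ ?_
    · rw [map_add, haP, haQ, hm4, map_neg, map_ofNat]
      linear_combination -hPQ
    · rw [map_add, hγP, hγQ, h4, map_ofNat]
      linear_combination hPQ
  · exact hαγ (hA.trans hC.symm)

end NotConj
end CremonaAux


open CremonaAux in
/-- The groups `M₁ = ⟨(x,y) ↦ (−x,y), (x,y) ↦ (x⁻¹,y)⟩` and
`M₂ = ⟨(x,y) ↦ (−x,y), (x,y) ↦ (x,−y)⟩` are both isomorphic to `ℤ/2 × ℤ/2` but are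
not conjugate in the Cremona group. -/
theorem Z2Z2_groups_not_conjugate :
    (∃ a b c : Cr,
      a XX = -XX ∧ a YY = YY ∧
      b XX = XX ∧ b YY = -YY ∧
      c XX = XX⁻¹ ∧ c YY = YY) ∧
    ∀ a b c : Cr,
      a XX = -XX → a YY = YY →
      b XX = XX → b YY = -YY →
      c XX = XX⁻¹ → c YY = YY →
      Nonempty (↥(Subgroup.closure {a, c}) ≃* Multiplicative (ZMod 2 × ZMod 2)) ∧
      Nonempty (↥(Subgroup.closure {a, b}) ≃* Multiplicative (ZMod 2 × ZMod 2)) ∧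
      ¬ ∃ ψ : Cr, Subgroup.map (MulAut.conj ψ).toMonoidHom
          (Subgroup.closure {a, c}) = Subgroup.closure {a, b} := by
  constructor
  · exact exists_abc
  · intro a b c ha1 ha2 hb1 hb2 hc1 hc2
    refine ⟨?_, ?_, ?_⟩
    · exact klein_iso (haa a ha1 ha2) (hcc c hc1 hc2) (hac_comm a c ha1 ha2 hc1 hc2)
        (ha_ne_one a ha1) (hc_ne_one c hc1) (ha_ne_c a c ha1 hc1)
    · exact klein_iso (haa a ha1 ha2) (hbb b hb1 hb2) (hab_comm a b ha1 ha2 hb1 hb2)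
        (ha_ne_one a ha1) (hb_ne_one b hb2) (ha_ne_b a b ha1 hb1)
    · exact not_conj a b c ha1 ha2 hb1 hb2 hc1 hc2
end
end

section
/- Let W = (PGL(2,ℂ) × PGL(2,ℂ)) ⋊ ℤ/2 be the semidirect product in which the non-trivial element s of ℤ/2 acts on the direct product by exchanging the two factors (this is the automorphism group of ℙ¹×ℙ¹). Then every element w ∈ W of finite order whose ℤ/2-component is non-trivial is conjugate in W to an element of the form (([diag(λ,1)], 1), s) for some λ ∈ ℂˣ of finite order (i.e., λ a root of unity); this corresponds to the automorphism (x,y) ↦ (λy, x) of ℙ¹×ℙ¹. -/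
noncomputable section

abbrev GL2 := GL (Fin 2) ℂ

/-- The projective general linear group `PGL(2,ℂ)`: the quotient of `GL(2,ℂ)` by its
center (the subgroup of invertible scalar matrices). -/
abbrev PGL2 := GL2 ⧸ Subgroup.center GL2

open Matrix

open Matrix

lemma smul_one_mem_center {r : ℂ} (A : GL2) (hA : (A : Matrix (Fin 2) (Fin 2) ℂ) = r • 1) :
    A ∈ Subgroup.center GL2 := by
  rw [Subgroup.mem_center_iff]
  intro g
  ext : 1
  simp only [Units.val_mul, hA, Matrix.mul_smul, Matrix.smul_mul, Matrix.mul_one, Matrix.one_mul]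

lemma exists_smul_of_mem_center {A : GL2} (h : A ∈ Subgroup.center GL2) :
    ∃ r : ℂ, r ≠ 0 ∧ (A : Matrix (Fin 2) (Fin 2) ℂ) = r • 1 := by
  have hcomm : ∀ t : TransvectionStruct (Fin 2) ℂ, Commute t.toMatrix (A : Matrix (Fin 2) (Fin 2) ℂ) := by
    intro t
    have hdet : Matrix.det t.toMatrix ≠ 0 := by simp
    have := (Subgroup.mem_center_iff.mp h) (Matrix.GeneralLinearGroup.mkOfDetNeZero t.toMatrix hdet)
    rw [Units.ext_iff] at this
    rw [Units.val_mul, Units.val_mul] at this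
    have h2 : t.toMatrix * (A : Matrix (Fin 2) (Fin 2) ℂ)
        = (A : Matrix (Fin 2) (Fin 2) ℂ) * t.toMatrix := by
      exact this
    exact h2
  obtain ⟨r, hr⟩ := Matrix.mem_range_scalar_of_commute_transvectionStruct hcomm
  refine ⟨r, ?_, ?_⟩
  · intro h0
    have hdet : Matrix.det (A : Matrix (Fin 2) (Fin 2) ℂ) ≠ 0 :=
      ((Matrix.isUnit_iff_isUnit_det _).mp A.isUnit).ne_zero
    apply hdet
    rw [← hr, h0]
    simp
  · rw [← hr, Matrix.scalar_apply, Matrix.smul_one_eq_diagonal]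

lemma quad_roots (t d : ℂ) : ∃ α δ : ℂ, α + δ = t ∧ α * δ = d := by
  obtain ⟨s, hs⟩ := IsAlgClosed.exists_pow_nat_eq (t ^ 2 - 4 * d) (n := 2) (by norm_num)
  exact ⟨(t + s) / 2, (t - s) / 2, by ring, by linear_combination (-1/4 : ℂ) * hs⟩

lemma ch_fac (M : Matrix (Fin 2) (Fin 2) ℂ) (α δ : ℂ)
    (hs : α + δ = Matrix.trace M) (hp : α * δ = Matrix.det M) :
    (M - α • 1) * (M - δ • 1) = 0 := by
  rw [Matrix.trace_fin_two] at hs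
  rw [Matrix.det_fin_two] at hp
  ext i j
  fin_cases i <;> fin_cases j <;>
    simp [Matrix.mul_apply, Fin.sum_univ_two, Matrix.sub_apply, Matrix.smul_apply,
      Matrix.one_apply, smul_eq_mul]
  · linear_combination (-(M 0 0)) * hs + hp
  · linear_combination (-(M 0 1)) * hs
  · linear_combination (-(M 1 0)) * hs
  · linear_combination (-(M 1 1)) * hs + hp

lemma binom_nilp (N : Matrix (Fin 2) (Fin 2) ℂ) (hN2 : N * N = 0) (α : ℂ) :
    ∀ k : ℕ, (α • 1 + N) ^ (k + 1) = α ^ (k + 1) • (1 : Matrix (Fin 2) (Fin 2) ℂ)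
      + ((k + 1 : ℂ) * α ^ k) • N := by
  have key : ∀ x y : ℂ, (x • (1 : Matrix (Fin 2) (Fin 2) ℂ) + y • N) * (α • 1 + N)
      = (x * α) • (1 : Matrix (Fin 2) (Fin 2) ℂ) + (x + y * α) • N := by
    intro x y
    simp only [add_mul, mul_add, smul_mul_assoc, mul_smul_comm, one_mul, mul_one, hN2,
      smul_zero, add_zero, smul_smul]
    module
  intro k
  induction k with
  | zero => simp
  | succ k ih =>
    rw [pow_succ, ih, key]
    match_scalars <;> (push_cast; ring)

lemma pgl2_key (c : PGL2) (hc : IsOfFinOrder c) :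
    ∃ lam : ℂˣ, IsOfFinOrder lam ∧ ∃ d : GL2,
      (↑d : Matrix (Fin 2) (Fin 2) ℂ) = Matrix.diagonal ![(lam : ℂ), 1] ∧
      IsConj ((QuotientGroup.mk d : PGL2)) c := by
  obtain ⟨A, rfl⟩ := QuotientGroup.mk_surjective c
  have hn : 0 < orderOf (QuotientGroup.mk A : PGL2) := hc.orderOf_pos
  obtain ⟨m, hm⟩ : ∃ m, orderOf (QuotientGroup.mk A : PGL2) = m + 1 :=
    ⟨_, (Nat.succ_pred_eq_of_pos hn).symm⟩
  have hAnc : A ^ (m + 1) ∈ Subgroup.center GL2 := by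
    rw [← QuotientGroup.eq_one_iff]
    have h2 : (QuotientGroup.mk (A ^ (m + 1)) : PGL2) = (QuotientGroup.mk A : PGL2) ^ (m + 1) :=
      map_pow (QuotientGroup.mk' (Subgroup.center GL2)) A (m + 1)
    rw [h2, ← hm]
    exact pow_orderOf_eq_one _
  obtain ⟨μ, hμ0, hμ⟩ := exists_smul_of_mem_center hAnc
  set M : Matrix (Fin 2) (Fin 2) ℂ := (A : Matrix (Fin 2) (Fin 2) ℂ) with hM_def
  have hMn : M ^ (m + 1) = μ • 1 := by
    rw [hM_def, ← Units.val_pow_eq_pow_val, hμ]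
  have hdetA : Matrix.det M ≠ 0 := ((Matrix.isUnit_iff_isUnit_det _).mp A.isUnit).ne_zero
  obtain ⟨α, δ, hs, hp⟩ := quad_roots (Matrix.trace M) (Matrix.det M)
  have hα0 : α ≠ 0 := fun h => hdetA (by rw [← hp, h, zero_mul])
  have hδ0 : δ ≠ 0 := fun h => hdetA (by rw [← hp, h, mul_zero])
  have hfacBC : (M - α • 1) * (M - δ • 1) = 0 := ch_fac M α δ hs hp
  have hfacCB : (M - δ • 1) * (M - α • 1) = 0 :=
    ch_fac M δ α (by rw [← hs]; ring) (by rw [← hp]; ring)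
  by_cases hαδ : α = δ
  · -- scalar case : M = α • 1
    set N : Matrix (Fin 2) (Fin 2) ℂ := M - α • 1 with hN_def
    have hN2 : N * N = 0 := by
      rw [hN_def]
      nth_rewrite 2 [hαδ]
      exact hfacBC
    have hMdec : M = α • 1 + N := by rw [hN_def]; module
    have hbin := binom_nilp N hN2 α m
    rw [← hMdec] at hbin
    have hE : ((m + 1 : ℂ) * α ^ m) • N = (μ - α ^ (m + 1)) • (1 : Matrix (Fin 2) (Fin 2) ℂ) := by
      have := hMn
      rw [hbin] at this
      rw [sub_smul]
      rw [← this]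
      module
    have hcoef : (m + 1 : ℂ) * α ^ m ≠ 0 :=
      mul_ne_zero (Nat.cast_add_one_ne_zero m) (pow_ne_zero _ hα0)
    have hN01 : N 0 1 = 0 := by
      have h := congrFun (congrFun hE 0) 1
      simp only [Matrix.smul_apply, Matrix.one_apply, smul_eq_mul] at h
      norm_num at h
      rcases h with (h | h) | h
      · exact absurd h (Nat.cast_add_one_ne_zero m)
      · exact absurd h.1 hα0
      · exact h
    have hN10 : N 1 0 = 0 := by
      have h := congrFun (congrFun hE 1) 0
      simp only [Matrix.smul_apply, Matrix.one_apply, smul_eq_mul] at h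
      norm_num at h
      rcases h with (h | h) | h
      · exact absurd h (Nat.cast_add_one_ne_zero m)
      · exact absurd h.1 hα0
      · exact h
    have htr : N 0 0 + N 1 1 = 0 := by
      have : Matrix.trace M = α + δ := hs.symm
      rw [Matrix.trace_fin_two] at this
      simp only [hN_def, Matrix.sub_apply, Matrix.smul_apply, Matrix.one_apply_eq, smul_eq_mul,
        mul_one]
      rw [hαδ] at this ⊢
      linear_combination this
    have h00 := congrFun (congrFun hE 0) 0
    have h11 := congrFun (congrFun hE 1) 1
    simp only [Matrix.smul_apply, Matrix.one_apply_eq, smul_eq_mul, mul_one] at h00 h11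
    have heq : N 0 0 - N 1 1 = 0 := by
      have h2 := mul_left_cancel₀ hcoef (h00.trans h11.symm)
      linear_combination h2
    have hN00 : N 0 0 = 0 := by linear_combination (1/2 : ℂ) * htr + (1/2 : ℂ) * heq
    have hN11 : N 1 1 = 0 := by linear_combination (1/2 : ℂ) * htr - (1/2 : ℂ) * heq
    have hN0 : N = 0 := by
      ext i j
      fin_cases i <;> fin_cases j <;>
        simp only [Matrix.zero_apply] <;> [exact hN00; exact hN01; exact hN10; exact hN11]
    have hMsc : M = α • 1 := by
      rw [hN_def] at hN0
      exact sub_eq_zero.mp hN0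
    have hc1 : (QuotientGroup.mk A : PGL2) = 1 :=
      (QuotientGroup.eq_one_iff A).mpr (smul_one_mem_center A hMsc)
    refine ⟨1, IsOfFinOrder.one, 1, ?_, ?_⟩
    · rw [Units.val_one]
      have : (![((1 : ℂˣ) : ℂ), 1] : Fin 2 → ℂ) = fun _ => 1 := by
        funext i; fin_cases i <;> rfl
      rw [this, Matrix.diagonal_one]
    · rw [hc1]
      have : (QuotientGroup.mk (1 : GL2) : PGL2) = 1 := QuotientGroup.mk_one _
      rw [this]
  · -- distinct eigenvalues
    set B : Matrix (Fin 2) (Fin 2) ℂ := M - δ • 1 with hB_def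
    set C : Matrix (Fin 2) (Fin 2) ℂ := M - α • 1 with hC_def
    have hMB : M * B = α • B := by
      have hexp : M * B - α • B = 0 := by
        rw [← hfacBC, hC_def, sub_mul, smul_mul_assoc, one_mul]
      exact sub_eq_zero.mp hexp
    have hMC : M * C = δ • C := by
      have hexp : M * C - δ • C = 0 := by
        rw [← hfacCB, hB_def, sub_mul, smul_mul_assoc, one_mul]
      exact sub_eq_zero.mp hexp
    have hBne : B ≠ 0 := by
      intro h0
      rw [hB_def] at h0
      have hMδ : M = δ • 1 := sub_eq_zero.mp h0
      apply hαδ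
      have htr2 : Matrix.trace M = δ + δ := by
        rw [hMδ, Matrix.trace_fin_two]
        simp [Matrix.smul_apply, Matrix.one_apply]
      linear_combination hs + htr2
    have hCne : C ≠ 0 := by
      intro h0
      rw [hC_def] at h0
      have hMα : M = α • 1 := sub_eq_zero.mp h0
      apply hαδ
      have htr2 : Matrix.trace M = α + α := by
        rw [hMα, Matrix.trace_fin_two]
        simp [Matrix.smul_apply, Matrix.one_apply]
      linear_combination -hs - htr2
    obtain ⟨i, k, hik⟩ : ∃ i k, B i k ≠ 0 := by
      by_contra h
      push_neg at h
      exact hBne (by ext i j; simpa using h i j)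
    obtain ⟨i', l, hil⟩ : ∃ i l, C i l ≠ 0 := by
      by_contra h
      push_neg at h
      exact hCne (by ext i j; simpa using h i j)
    have hBk : B 0 k ≠ 0 ∨ B 1 k ≠ 0 := by
      fin_cases i
      · exact Or.inl hik
      · exact Or.inr hik
    have hCl : C 0 l ≠ 0 ∨ C 1 l ≠ 0 := by
      fin_cases i'
      · exact Or.inl hil
      · exact Or.inr hil
    have e0 : M 0 0 * B 0 k + M 0 1 * B 1 k = α * B 0 k := by
      have h := congrFun (congrFun hMB 0) k
      simpa [Matrix.mul_apply, Fin.sum_univ_two, Matrix.smul_apply, smul_eq_mul] using h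
    have e1 : M 1 0 * B 0 k + M 1 1 * B 1 k = α * B 1 k := by
      have h := congrFun (congrFun hMB 1) k
      simpa [Matrix.mul_apply, Fin.sum_univ_two, Matrix.smul_apply, smul_eq_mul] using h
    have f0 : M 0 0 * C 0 l + M 0 1 * C 1 l = δ * C 0 l := by
      have h := congrFun (congrFun hMC 0) l
      simpa [Matrix.mul_apply, Fin.sum_univ_two, Matrix.smul_apply, smul_eq_mul] using h
    have f1 : M 1 0 * C 0 l + M 1 1 * C 1 l = δ * C 1 l := by
      have h := congrFun (congrFun hMC 1) l
      simpa [Matrix.mul_apply, Fin.sum_univ_two, Matrix.smul_apply, smul_eq_mul] using h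
    set P : Matrix (Fin 2) (Fin 2) ℂ :=
      Matrix.of ![![B 0 k, C 0 l], ![B 1 k, C 1 l]] with hP_def
    have hP00 : P 0 0 = B 0 k := rfl
    have hP01 : P 0 1 = C 0 l := rfl
    have hP10 : P 1 0 = B 1 k := rfl
    have hP11 : P 1 1 = C 1 l := rfl
    have hPdet : Matrix.det P ≠ 0 := by
      rw [Matrix.det_fin_two, hP00, hP01, hP10, hP11]
      intro hd
      rw [sub_eq_zero] at hd
      rcases hBk with hb | hb
      · have h2 : (δ - α) * B 0 k * C 0 l = 0 := by
          linear_combination (-(B 0 k)) * f0 + (C 0 l) * e0 + (M 0 1) * hd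
        have hc0 : C 0 l = 0 := by
          rcases mul_eq_zero.mp h2 with h3 | h3
          · rcases mul_eq_zero.mp h3 with h4 | h4
            · exact absurd (by linear_combination -h4) hαδ
            · exact absurd h4 hb
          · exact h3
        have hc1 : C 1 l = 0 := by
          have h5 : B 0 k * C 1 l = 0 := by rw [hd, hc0, zero_mul]
          rcases mul_eq_zero.mp h5 with h6 | h6
          · exact absurd h6 hb
          · exact h6
        rcases hCl with h | h
        · exact h hc0
        · exact h hc1
      · have h2 : (δ - α) * B 1 k * C 1 l = 0 := by
          linear_combination (-(B 1 k)) * f1 + (C 1 l) * e1 + (-(M 1 0)) * hd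
        have hc1 : C 1 l = 0 := by
          rcases mul_eq_zero.mp h2 with h3 | h3
          · rcases mul_eq_zero.mp h3 with h4 | h4
            · exact absurd (by linear_combination -h4) hαδ
            · exact absurd h4 hb
          · exact h3
        have hc0 : C 0 l = 0 := by
          have h5 : C 0 l * B 1 k = 0 := by rw [← hd, hc1, mul_zero]
          rcases mul_eq_zero.mp h5 with h6 | h6
          · exact h6
          · exact absurd h6 hb
        rcases hCl with h | h
        · exact h hc0
        · exact h hc1
    set D : Matrix (Fin 2) (Fin 2) ℂ := Matrix.diagonal ![α, δ] with hD_def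
    have hMP : M * P = P * D := by
      ext i j
      fin_cases i <;> fin_cases j <;>
        simp [Matrix.mul_apply, Fin.sum_univ_two, hP_def, hD_def, Matrix.diagonal]
      · linear_combination e0
      · linear_combination f0
      · linear_combination e1
      · linear_combination f1
    have hDdet : Matrix.det D ≠ 0 := by
      rw [hD_def, Matrix.det_diagonal, Fin.prod_univ_two]
      simpa using mul_ne_zero hα0 hδ0
    set P' : GL2 := Matrix.GeneralLinearGroup.mkOfDetNeZero P hPdet with hP'_def
    set D' : GL2 := Matrix.GeneralLinearGroup.mkOfDetNeZero D hDdet with hD'_def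
    have hAP : A * P' = P' * D' := by
      apply Units.ext
      exact hMP
    have hA : A = P' * D' * P'⁻¹ := eq_mul_inv_iff_mul_eq.mpr hAP
    have hconjpow : ∀ kk : ℕ, (P' * D' * P'⁻¹) ^ kk = P' * D' ^ kk * P'⁻¹ := by
      intro kk
      induction kk with
      | zero => simp
      | succ kk ih => rw [pow_succ, ih, pow_succ]; group
    have hDn : D' ^ (m + 1) = A ^ (m + 1) := by
      have hcomm := Subgroup.mem_center_iff.mp hAnc P'
      have h3 : A ^ (m + 1) = P' * D' ^ (m + 1) * P'⁻¹ := by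
        rw [hA, hconjpow]
      have h4 : P' * D' ^ (m + 1) = A ^ (m + 1) * P' := by
        rw [h3]; group
      rw [← hcomm] at h4
      exact mul_left_cancel h4
    have hDmat : D ^ (m + 1) = μ • 1 := by
      have h5 : ((D' ^ (m + 1) : GL2) : Matrix (Fin 2) (Fin 2) ℂ) = D ^ (m + 1) :=
        Units.val_pow_eq_pow_val _ _
      rw [← h5, hDn]
      exact hμ
    have hDiagPow : D ^ (m + 1) = Matrix.diagonal ![α ^ (m + 1), δ ^ (m + 1)] := by
      rw [hD_def, Matrix.diagonal_pow]
      have hv : (![α, δ] ^ (m + 1) : Fin 2 → ℂ) = ![α ^ (m + 1), δ ^ (m + 1)] := by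
        funext j
        fin_cases j <;> simp [Pi.pow_apply]
      rw [hv]
    have hαn : α ^ (m + 1) = μ := by
      have h6 := congrFun (congrFun (hDiagPow.symm.trans hDmat) 0) 0
      simpa [Matrix.diagonal, Matrix.smul_apply, Matrix.one_apply] using h6
    have hδn : δ ^ (m + 1) = μ := by
      have h6 := congrFun (congrFun (hDiagPow.symm.trans hDmat) 1) 1
      simpa [Matrix.diagonal, Matrix.smul_apply, Matrix.one_apply] using h6
    refine ⟨Units.mk0 (α / δ) (div_ne_zero hα0 hδ0), ?_, ?_⟩
    · rw [isOfFinOrder_iff_pow_eq_one]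
      refine ⟨m + 1, Nat.succ_pos m, ?_⟩
      ext
      rw [Units.val_pow_eq_pow_val]
      simp only [Units.val_mk0, Units.val_one, div_pow]
      rw [hαn, hδn, div_self hμ0]
    · have hddet : Matrix.det (Matrix.diagonal ![α / δ, (1 : ℂ)]) ≠ 0 := by
        rw [Matrix.det_diagonal, Fin.prod_univ_two]
        simpa using div_ne_zero hα0 hδ0
      refine ⟨Matrix.GeneralLinearGroup.mkOfDetNeZero _ hddet, rfl, ?_⟩
      have hSdet : Matrix.det (δ • (1 : Matrix (Fin 2) (Fin 2) ℂ)) ≠ 0 := by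
        rw [Matrix.det_smul, Matrix.det_one]
        simpa using pow_ne_zero 2 hδ0
      set S : GL2 := Matrix.GeneralLinearGroup.mkOfDetNeZero _ hSdet with hS_def
      have hScen : S ∈ Subgroup.center GL2 := smul_one_mem_center S rfl
      have hD'Sd : D' = S * Matrix.GeneralLinearGroup.mkOfDetNeZero _ hddet := by
        apply Units.ext
        show D = (δ • (1 : Matrix (Fin 2) (Fin 2) ℂ)) * Matrix.diagonal ![α / δ, 1]
        rw [Matrix.smul_mul, Matrix.one_mul, hD_def, ← Matrix.diagonal_smul]
        have hv2 : (δ • ![α / δ, (1 : ℂ)]) = ![α, δ] := by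
          funext j
          fin_cases j <;> simp [smul_eq_mul] <;> field_simp
        rw [hv2]
      have hmkD' : (QuotientGroup.mk D' : PGL2)
          = QuotientGroup.mk (Matrix.GeneralLinearGroup.mkOfDetNeZero _ hddet) := by
        rw [hD'Sd, QuotientGroup.mk_mul, (QuotientGroup.eq_one_iff S).mpr hScen, one_mul]
      rw [isConj_iff]
      refine ⟨QuotientGroup.mk P', ?_⟩
      rw [← hmkD', ← QuotientGroup.mk_inv, ← QuotientGroup.mk_mul, ← QuotientGroup.mk_mul, ← hA]

lemma conj_pow_eq {G : Type*} [Group G] (u w : G) (n : ℕ) :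
    (u * w * u⁻¹) ^ n = u * w ^ n * u⁻¹ := by
  induction n with
  | zero => simp
  | succ n ih => rw [pow_succ, ih, pow_succ]; group

def swapAut : MulAut (PGL2 × PGL2) := MulEquiv.prodComm

def phi0 : Multiplicative (ZMod 2) →* MulAut (PGL2 × PGL2) where
  toFun z := swapAut ^ (Multiplicative.toAdd z).val
  map_one' := by rfl
  map_mul' a b := by
    have hsq : swapAut * swapAut = 1 := by
      ext p <;> rfl
    have h2 : ∀ z : ZMod 2, z = 0 ∨ z = 1 := by decide
    show swapAut ^ (Multiplicative.toAdd (a * b)).val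
      = swapAut ^ (Multiplicative.toAdd a).val * swapAut ^ (Multiplicative.toAdd b).val
    have hab : Multiplicative.toAdd (a * b) = Multiplicative.toAdd a + Multiplicative.toAdd b :=
      rfl
    rw [hab]
    rcases h2 (Multiplicative.toAdd a) with ha | ha <;>
      rcases h2 (Multiplicative.toAdd b) with hb | hb <;>
      rw [ha, hb] <;>
      norm_num [show ((0 : ZMod 2) + 0).val = 0 from rfl, show ((0 : ZMod 2) + 1).val = 1 from rfl,
        show ((1 : ZMod 2) + 0).val = 1 from rfl, show ((1 : ZMod 2) + 1).val = 0 from rfl,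
        show ((0 : ZMod 2)).val = 0 from rfl, show ((2 : ZMod 2)).val = 0 from rfl, show ((1 : ZMod 2)).val = 1 from rfl, pow_succ, hsq]

lemma phi0_spec : ∀ p : PGL2 × PGL2,
    phi0 (Multiplicative.ofAdd (1 : ZMod 2)) p = (p.2, p.1) := by
  intro p
  show (swapAut ^ (Multiplicative.toAdd (Multiplicative.ofAdd (1 : ZMod 2))).val) p = (p.2, p.1)
  rw [show (Multiplicative.toAdd (Multiplicative.ofAdd (1 : ZMod 2))).val = 1 from rfl, pow_one]
  rfl

/-- **Finite order elements of `Aut(ℙ¹×ℙ¹)` exchanging the rulings.** In the semidirect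
product `W = (PGL(2,ℂ) × PGL(2,ℂ)) ⋊ ℤ/2`, where the non-trivial element of `ℤ/2` acts
by exchanging the factors, every finite order element with non-trivial `ℤ/2`-component is
conjugate to `(([diag(λ,1)], 1), s)` for some root of unity `λ ∈ ℂˣ`. -/
theorem finite_order_swapping_elements_of_aut_P1xP1 :
    (∃ φ : Multiplicative (ZMod 2) →* MulAut (PGL2 × PGL2),
      ∀ p : PGL2 × PGL2,
        φ (Multiplicative.ofAdd (1 : ZMod 2)) p = (p.2, p.1)) ∧
    ∀ φ : Multiplicative (ZMod 2) →* MulAut (PGL2 × PGL2),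
      (∀ p : PGL2 × PGL2,
        φ (Multiplicative.ofAdd (1 : ZMod 2)) p = (p.2, p.1)) →
      ∀ w : (PGL2 × PGL2) ⋊[φ] Multiplicative (ZMod 2),
        IsOfFinOrder w → w.right ≠ 1 →
        ∃ lam : ℂˣ, IsOfFinOrder lam ∧
          ∃ d : GL2, (↑d : Matrix (Fin 2) (Fin 2) ℂ) = Matrix.diagonal ![(lam : ℂ), 1] ∧
            IsConj
              (⟨((QuotientGroup.mk d : PGL2), 1), Multiplicative.ofAdd (1 : ZMod 2)⟩ :
                (PGL2 × PGL2) ⋊[φ] Multiplicative (ZMod 2))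
              w := by
  refine ⟨⟨phi0, phi0_spec⟩, ?_⟩
  intro φ hφ w hw hright
  obtain ⟨⟨a, b⟩, z⟩ := w
  have hws : z = Multiplicative.ofAdd (1 : ZMod 2) := by
    have hz : ∀ y : Multiplicative (ZMod 2), y ≠ 1 → y = Multiplicative.ofAdd 1 := by decide
    exact hz z hright
  subst hws
  set s := Multiplicative.ofAdd (1 : ZMod 2) with hs_def
  have hφ1 : ∀ p : PGL2 × PGL2, φ 1 p = p := fun p => by rw [_root_.map_one]; rfl
  have hss : s * s = 1 := by rw [hs_def]; decide
  have hsinv : s⁻¹ = s := by rw [hs_def]; decide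
  set u : (PGL2 × PGL2) ⋊[φ] Multiplicative (ZMod 2) := ⟨(1, b⁻¹), 1⟩ with hu_def
  have hw1 : u * ⟨(a, b), s⟩ * u⁻¹
      = (⟨(a * b, 1), s⟩ : (PGL2 × PGL2) ⋊[φ] Multiplicative (ZMod 2)) := by
    ext <;>
      simp [hu_def, SemidirectProduct.mul_left, SemidirectProduct.mul_right,
        SemidirectProduct.inv_left, SemidirectProduct.inv_right, hφ1, hφ, hsinv, hss]
  have hfin1 : IsOfFinOrder (⟨(a * b, 1), s⟩ : (PGL2 × PGL2) ⋊[φ] Multiplicative (ZMod 2)) := by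
    obtain ⟨n, hnpos, hn⟩ := isOfFinOrder_iff_pow_eq_one.mp hw
    exact isOfFinOrder_iff_pow_eq_one.mpr
      ⟨n, hnpos, by rw [← hw1, conj_pow_eq, hn]; group⟩
  have hsq2 : (⟨(a * b, 1), s⟩ : (PGL2 × PGL2) ⋊[φ] Multiplicative (ZMod 2)) * ⟨(a * b, 1), s⟩
      = ⟨(a * b, a * b), 1⟩ := by
    ext <;> simp [hφ, hss]
  have hfin2 : IsOfFinOrder ((a * b, a * b) : PGL2 × PGL2) := by
    have h7 := hfin1.pow (n := 2)
    rw [pow_two, hsq2] at h7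
    obtain ⟨n, hnpos, hn⟩ := isOfFinOrder_iff_pow_eq_one.mp h7
    refine isOfFinOrder_iff_pow_eq_one.mpr ⟨n, hnpos, ?_⟩
    apply SemidirectProduct.inl_injective (φ := φ)
    have h9 : SemidirectProduct.inl (φ := φ) ((a * b, a * b) : PGL2 × PGL2)
        = ⟨(a * b, a * b), 1⟩ := rfl
    rw [_root_.map_pow, h9, hn, _root_.map_one]
  have hfinc : IsOfFinOrder ((a : PGL2) * b) := by
    obtain ⟨n, hnpos, hn⟩ := isOfFinOrder_iff_pow_eq_one.mp hfin2
    refine isOfFinOrder_iff_pow_eq_one.mpr ⟨n, hnpos, ?_⟩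
    have h10 := congrArg Prod.fst hn
    simpa using h10
  obtain ⟨lam, hlam, d, hd, hconjd⟩ := pgl2_key ((a : PGL2) * b) hfinc
  obtain ⟨g, hg⟩ := isConj_iff.mp hconjd
  refine ⟨lam, hlam, d, hd, ?_⟩
  have hg' : g * ((QuotientGroup.mk d : PGL2) * g⁻¹) = a * b := by
    rw [← mul_assoc]; exact hg
  have hv : (⟨(g, g), 1⟩ : (PGL2 × PGL2) ⋊[φ] Multiplicative (ZMod 2))
        * ⟨((QuotientGroup.mk d : PGL2), 1), s⟩
        * (⟨(g, g), 1⟩ : (PGL2 × PGL2) ⋊[φ] Multiplicative (ZMod 2))⁻¹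
      = ⟨(a * b, 1), s⟩ := by
    ext <;>
      simp [SemidirectProduct.mul_left, SemidirectProduct.mul_right,
        SemidirectProduct.inv_left, SemidirectProduct.inv_right, hφ1, hφ, hsinv, hss,
        mul_assoc, hg']
  exact IsConj.trans (isConj_iff.mpr ⟨_, hv⟩) (isConj_iff.mpr ⟨u, hw1⟩).symm
end
end
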